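/- arXiv:1310.0654 — 5 statements merged into one kernel-verified Lean document; each statement's English description precedes it below -/
import Mathlib

section
/- Let X ⊆ S^Z be a one-dimensional subshift. If two words u, v ∈ S* satisfy E_X(u) = E_X(v), then E_{X^(1)}(u) = E_{X^(1)}(v), where X^(1) is the Cantor–Bendixson derivative of X (the set of non-isolated points of X). -/
/-- The set of non-isolated points of `A` (the derived set of `A` in the subspace topology). -/
def cbDerivedSet {X : Type*} [TopologicalSpace X] (A : Set X) : Set X :=
  {x | x ∈ A ∧ x ∈ closure (A \ {x})}

/-- The shift map on bi-infinite configurations. -/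
def shift1 {S : Type*} (x : ℤ → S) : ℤ → S := fun m => x (m + 1)

/-- The word `u` occurs in `x` at position `n`. -/
def occursAtW {S : Type*} (u : List S) (x : ℤ → S) (n : ℤ) : Prop :=
  ∀ i : Fin u.length, x (n + ((i : ℕ) : ℤ)) = u.get i

/-- The word `u` occurs in the configuration `x`. -/
def occursW {S : Type*} (u : List S) (x : ℤ → S) : Prop := ∃ n : ℤ, occursAtW u x n

/-- The word `u` occurs in some configuration of `X`. -/
def occursWIn {S : Type*} (X : Set (ℤ → S)) (u : List S) : Prop := ∃ x ∈ X, occursW u x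

/-- A one-dimensional subshift: a closed shift-invariant set of configurations. -/
def IsSubshift1 {S : Type*} [TopologicalSpace S] (X : Set (ℤ → S)) : Prop :=
  IsClosed X ∧ shift1 '' X = X

/-- The extender set of the word `v` in `X`. -/
def extSet {S : Type*} (X : Set (ℤ → S)) (v : List S) : Set (List S × List S) :=
  {p | occursWIn X (p.1 ++ v ++ p.2)}

namespace ExtAux
variable {S : Type*}

lemma occursAtW_iff {u : List S} {x : ℤ → S} {n : ℤ} :
    occursAtW u x n ↔ ∀ i : ℕ, ∀ hi : i < u.length, x (n + i) = u.get ⟨i, hi⟩ := by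
  constructor
  · intro h i hi; exact h ⟨i, hi⟩
  · intro h i; exact h i i.isLt

lemma occursAtW_append {A B : List S} {x : ℤ → S} {n : ℤ} :
    occursAtW (A ++ B) x n ↔ occursAtW A x n ∧ occursAtW B x (n + A.length) := by
  simp only [occursAtW_iff, List.get_eq_getElem]
  constructor
  · intro h
    refine ⟨fun i hi => ?_, fun i hi => ?_⟩
    · have := h i (by simp; omega)
      rwa [List.getElem_append_left hi] at this
    · have := h (A.length + i) (by simp; omega)
      rw [List.getElem_append_right (by omega)] at this
      simp only [Nat.add_sub_cancel_left] at this
      rw [← this]; congr 1; push_cast; ring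
  · intro ⟨h1, h2⟩ i hi
    rcases lt_or_ge i A.length with hlt | hge
    · rw [List.getElem_append_left hlt]; exact h1 i hlt
    · rw [List.getElem_append_right hge]
      have := h2 (i - A.length) (by simp at hi; omega)
      rw [← this]; congr 1; push_cast; omega

def word (x : ℤ → S) (s : ℤ) (len : ℕ) : List S := List.ofFn (fun i : Fin len => x (s + i))

@[simp] lemma word_length (x : ℤ → S) (s : ℤ) (len : ℕ) : (word x s len).length = len :=
  List.length_ofFn

lemma occursAtW_word (x : ℤ → S) (s : ℤ) (len : ℕ) : occursAtW (word x s len) x s := by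
  rw [occursAtW_iff]
  intro i hi
  simp [word, List.get_ofFn]

lemma shift_mem {X : Set (ℤ → S)} (hX : shift1 '' X = X) :
    ∀ k : ℤ, ∀ z ∈ X, (fun m => z (m + k)) ∈ X := by
  have hfwd : ∀ z ∈ X, (fun m => z (m + 1)) ∈ X := by
    intro z hz
    have : shift1 z ∈ shift1 '' X := ⟨z, hz, rfl⟩
    rwa [hX] at this
  have hbwd : ∀ z ∈ X, (fun m => z (m - 1)) ∈ X := by
    intro z hz
    conv at hz => rw [← hX]
    obtain ⟨w, hw, hwz⟩ := hz
    have : (fun m : ℤ => z (m - 1)) = w := by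
      funext m
      have := congrFun hwz (m - 1)
      simp only [shift1] at this
      rw [← this]; congr 1; ring
    rw [this]; exact hw
  intro k
  induction k using Int.induction_on with
  | zero => intro z hz; simpa using hz
  | succ k ih =>
    intro z hz
    have := hfwd _ (ih z hz)
    convert this using 2 with m
    · congr 1; push_cast; ring
  | pred k ih =>
    intro z hz
    have := hbwd _ (ih z hz)
    convert this using 2 with m
    · congr 1; push_cast; ring

lemma occursAtW_shiftTo {w : List S} {z : ℤ → S} {q : ℤ} (h : occursAtW w z q) (p : ℤ) :
    occursAtW w (fun t => z (t + (q - p))) p := by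
  rw [occursAtW_iff] at h ⊢
  intro i hi
  have : p + (i : ℤ) + (q - p) = q + i := by ring
  simp only [this]
  exact h i hi

def repl (v : List S) (lu : ℕ) (n : ℤ) (x : ℤ → S) : ℤ → S := fun m =>
  if m < n then x m
  else if h : (m - n).toNat < v.length then v.get ⟨(m - n).toNat, h⟩
  else x (m - v.length + lu)

end ExtAux

namespace ExtAux
variable {S : Type}

lemma repl_mem [Fintype S] [TopologicalSpace S] [DiscreteTopology S]
    {X : Set (ℤ → S)} (hX : IsSubshift1 X) {u v : List S}
    (hsub : extSet X u ⊆ extSet X v) {x : ℤ → S} (hx : x ∈ X) {n : ℤ}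
    (hu : occursAtW u x n) : repl v u.length n x ∈ X := by
  set y := repl v u.length n x with hy
  have key : ∀ m : ℕ, ∃ z ∈ X,
      ∀ t : ℤ, n - m ≤ t → t < n + v.length + m → z t = y t := by
    intro m
    set a := word x (n - m) m with ha
    set b := word x (n + u.length) m with hb
    have hab : (a, b) ∈ extSet X u := by
      refine ⟨x, hx, n - m, ?_⟩
      rw [occursAtW_append, occursAtW_append]
      refine ⟨⟨occursAtW_word _ _ _, ?_⟩, ?_⟩
      · have : n - m + ((a.length : ℕ) : ℤ) = n := by simp [ha]
        rw [this]; exact hu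
      · have : n - ↑m + ((a ++ u).length : ℤ) = n + u.length := by simp [ha]; omega
        rw [this]; exact occursAtW_word _ _ _
    obtain ⟨z0, hz0, q, hq⟩ := hsub hab
    refine ⟨fun t => z0 (t + (q - (n - m))), shift_mem hX.2 _ _ hz0, ?_⟩
    have hocc := occursAtW_shiftTo hq (n - m)
    rw [occursAtW_append, occursAtW_append] at hocc
    obtain ⟨⟨hoa, hov⟩, hob⟩ := hocc
    have hav : n - ↑m + ((a.length : ℕ) : ℤ) = n := by simp [ha]
    rw [hav] at hov
    have hbv : n - ↑m + ((a ++ v).length : ℤ) = n + v.length := by simp [ha]; omega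
    rw [hbv] at hob
    rw [occursAtW_iff] at hoa hov hob
    intro t ht1 ht2
    rcases lt_or_ge t n with h1 | h1
    · -- a-range
      have hi : (t - (n - m)).toNat < a.length := by simp [ha]; omega
      have := hoa (t - (n - m)).toNat hi
      have harg : n - ↑m + (((t - (n - m)).toNat : ℕ) : ℤ) = t := by omega
      rw [harg] at this
      show z0 (t + (q - (n - ↑m))) = y t
      rw [this, hy]
      simp only [repl, if_pos h1]
      simp [ha, word, List.get_ofFn]
      congr 1; omega
    · rcases lt_or_ge t (n + v.length) with h2 | h2
      · -- v-range
        have hi : (t - n).toNat < v.length := by omega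
        have := hov (t - n).toNat hi
        have harg : n + (((t - n).toNat : ℕ) : ℤ) = t := by omega
        rw [harg] at this
        show z0 (t + (q - (n - ↑m))) = y t
        rw [this, hy]
        simp only [repl, if_neg (by omega : ¬ t < n), dif_pos hi]
      · -- b-range
        have hi : (t - (n + v.length)).toNat < b.length := by simp [hb]; omega
        have := hob (t - (n + v.length)).toNat hi
        have harg : n + (v.length : ℤ) + (((t - (n + v.length)).toNat : ℕ) : ℤ) = t := by omega
        rw [harg] at this
        show z0 (t + (q - (n - ↑m))) = y t
        rw [this, hy]
        simp only [repl, if_neg (by omega : ¬ t < n),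
          dif_neg (by omega : ¬ (t - n).toNat < v.length)]
        simp [hb, word, List.get_ofFn]
        congr 1; omega
  choose z hzX hzag using key
  have htend : Filter.Tendsto z Filter.atTop (nhds y) := by
    rw [tendsto_pi_nhds]
    intro t
    have hev : ∀ᶠ m in Filter.atTop, z m t = y t := by
      filter_upwards [Filter.eventually_ge_atTop ((t - n).natAbs + (n - t).natAbs + v.length + 1)]
        with m hm
      exact hzag m t (by omega) (by omega)
    exact Filter.Tendsto.congr' (hev.mono fun _ hm => hm.symm) tendsto_const_nhds
  exact hX.1.mem_of_tendsto htend (Filter.Eventually.of_forall hzX)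

end ExtAux

namespace ExtAux
variable {S : Type}

lemma ext_subset_derived [Fintype S] [TopologicalSpace S] [DiscreteTopology S]
    {X : Set (ℤ → S)} (hX : IsSubshift1 X) {u v : List S}
    (hsub : extSet X u ⊆ extSet X v) :
    extSet (cbDerivedSet X) u ⊆ extSet (cbDerivedSet X) v := by
  rintro ⟨w, w'⟩ ⟨x, ⟨hxX, hxcl⟩, p, hocc⟩
  rw [occursAtW_append, occursAtW_append] at hocc
  obtain ⟨⟨hw, hu0⟩, hw'0⟩ := hocc
  set n : ℤ := p + w.length with hn
  have hu : occursAtW u x n := hu0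
  have hw' : occursAtW w' x (n + u.length) := by
    have : p + ((w ++ u).length : ℤ) = n + u.length := by simp; omega
    rwa [this] at hw'0
  set y := repl v u.length n x with hy
  have hyX : y ∈ X := repl_mem hX hsub hxX hu
  -- occurrence of w ++ v ++ w' in y
  have hoccy : occursAtW (w ++ v ++ w') y p := by
    rw [occursAtW_append, occursAtW_append]
    refine ⟨⟨?_, ?_⟩, ?_⟩
    · rw [occursAtW_iff] at hw ⊢
      intro i hi
      have hb : p + (i : ℤ) < n := by omega
      simp only [hy, repl, if_pos hb]
      exact hw i hi
    · rw [occursAtW_iff]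
      intro i hi
      have h1 : ¬ (p + ((w.length : ℕ) : ℤ) + i < n) := by omega
      have h2 : (p + ((w.length : ℕ) : ℤ) + i - n).toNat < v.length := by omega
      simp only [hy, repl, if_neg h1, dif_pos h2]
      exact congrArg v.get (Fin.ext (by simp only [Fin.val_mk]; omega))
    · rw [occursAtW_iff] at hw' ⊢
      intro i hi
      have h1 : ¬ (p + ((w ++ v).length : ℤ) + i < n) := by simp; omega
      have h2 : ¬ ((p + ((w ++ v).length : ℤ) + i - n).toNat < v.length) := by simp; omega
      simp only [hy, repl, if_neg h1, dif_neg h2]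
      have := hw' i hi
      rw [← this]
      congr 1
      simp
      omega
  -- y is non-isolated
  have hycl : y ∈ closure (X \ {y}) := by
    rw [mem_closure_iff_seq_limit] at hxcl
    obtain ⟨c, hc, hct⟩ := hxcl
    have hco : ∀ t : ℤ, ∀ᶠ k in Filter.atTop, c k t = x t := by
      intro t
      have := tendsto_pi_nhds.1 hct t
      have := this (IsOpen.mem_nhds (isOpen_discrete {x t}) rfl)
      filter_upwards [this] with k hk
      exact hk
    have hagree : ∀ᶠ k in Filter.atTop, ∀ i ∈ Finset.range u.length,
        c k (n + i) = x (n + i) :=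
      (Filter.eventually_all_finset _).2 (fun i _ => hco (n + i))
    set ck : ℕ → (ℤ → S) := fun k => repl v u.length n (c k) with hck
    have htend : Filter.Tendsto ck Filter.atTop (nhds y) := by
      rw [tendsto_pi_nhds]
      intro t
      have hev : ∀ᶠ k in Filter.atTop, ck k t = y t := by
        by_cases h1 : t < n
        · filter_upwards [hco t] with k hk
          simp only [hck, hy, repl, if_pos h1, hk]
        · by_cases h2 : (t - n).toNat < v.length
          · exact Filter.Eventually.of_forall fun k => by
              simp only [hck, hy, repl, if_neg h1, dif_pos h2]
          · filter_upwards [hco (t - v.length + u.length)] with k hk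
            simp only [hck, hy, repl, if_neg h1, dif_neg h2, hk]
      exact Filter.Tendsto.congr' (hev.mono fun _ hm => hm.symm) tendsto_const_nhds
    have hmem : ∀ᶠ k in Filter.atTop, ck k ∈ X \ {y} := by
      filter_upwards [hagree] with k hk
      have hcu : occursAtW u (c k) n := by
        rw [occursAtW_iff]
        intro i hi
        rw [hk i (Finset.mem_range.2 hi)]
        exact occursAtW_iff.1 hu i hi
      refine ⟨repl_mem hX hsub (hc k).1 hcu, ?_⟩
      have hne : c k ≠ x := (hc k).2
      rw [Function.ne_iff] at hne
      obtain ⟨t, ht⟩ := hne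
      intro hEq
      simp only [Set.mem_singleton_iff] at hEq
      have htout : t < n ∨ n + (u.length : ℤ) ≤ t := by
        by_contra hcon
        push_neg at hcon
        have hi : (t - n).toNat < u.length := by omega
        have := hk (t - n).toNat (Finset.mem_range.2 hi)
        have harg : n + (((t - n).toNat : ℕ) : ℤ) = t := by omega
        rw [harg] at this
        exact ht this
      rcases htout with h1 | h1
      · have := congrFun hEq t
        simp only [hck, hy, repl, if_pos h1] at this
        exact ht this
      · set t' : ℤ := t - u.length + v.length with ht'
        have hb1 : ¬ (t' < n) := by omega
        have hb2 : ¬ ((t' - n).toNat < v.length) := by omega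
        have := congrFun hEq t'
        simp only [hck, hy, repl, if_neg hb1, dif_neg hb2] at this
        have harg : t' - (v.length : ℤ) + u.length = t := by omega
        rw [harg] at this
        exact ht this
    exact mem_closure_of_tendsto htend hmem
  exact ⟨y, ⟨hyX, hycl⟩, p, hoccy⟩

end ExtAux


/-- If two words have equal extender sets in a one-dimensional subshift `X`,
then they have equal extender sets in the Cantor–Bendixson derivative of `X`. -/
theorem extSet_eq_in_derivative {S : Type} [Fintype S] [TopologicalSpace S]
    [DiscreteTopology S] (X : Set (ℤ → S)) (hX : IsSubshift1 X) (u v : List S)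
    (h : extSet X u = extSet X v) :
    extSet (cbDerivedSet X) u = extSet (cbDerivedSet X) v := by
  exact Set.Subset.antisymm (ExtAux.ext_subset_derived hX h.subset)
    (ExtAux.ext_subset_derived hX h.symm.subset)
end

section
/- The Cantor–Bendixson derivative X^(1) (the set of non-isolated points) of a one-dimensional sofic shift X is again a sofic shift. -/
/-- A one-dimensional subshift of finite type: the configurations avoiding a finite set of
forbidden words. -/
def IsSFT1 {S : Type*} (X : Set (ℤ → S)) : Prop :=
  ∃ F : Set (List S), F.Finite ∧ X = {x | ∀ u ∈ F, ¬ occursW u x}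

/-- A one-dimensional sofic shift: the image of an SFT (over some finite alphabet carrying the
discrete topology) under a block map, i.e. a continuous shift-commuting map. -/
def IsSofic1 {S : Type*} [TopologicalSpace S] (X : Set (ℤ → S)) : Prop :=
  ∃ (T : Type) (_ : Fintype T) (Y : Set (ℤ → T)) (f : (ℤ → T) → (ℤ → S)),
    IsSFT1 Y ∧
    (letI : TopologicalSpace T := ⊥
     Continuous f) ∧
    (∀ y, f (shift1 y) = shift1 (f y)) ∧ f '' Y = X


namespace SoficDeriv

variable {α : Type*}

lemma cyl_isOpen [TopologicalSpace α] [DiscreteTopology α] (I : Finset ℤ) (x : ℤ → α) :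
    IsOpen {y : ℤ → α | ∀ i ∈ I, y i = x i} := by
  have h : {y : ℤ → α | ∀ i ∈ I, y i = x i} = ⋂ i ∈ I, {y : ℤ → α | y i = x i} := by
    ext y; simp
  rw [h]
  refine isOpen_biInter_finset fun i _ => ?_
  have h2 : {y : ℤ → α | y i = x i} = (fun y : ℤ → α => y i) ⁻¹' {x i} := rfl
  rw [h2]
  exact IsOpen.preimage (continuous_apply i) (isOpen_discrete {x i})

lemma exists_cyl_subset [TopologicalSpace α] [DiscreteTopology α] {U : Set (ℤ → α)}
    (hU : IsOpen U) {x : ℤ → α} (hx : x ∈ U) :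
    ∃ I : Finset ℤ, {y : ℤ → α | ∀ i ∈ I, y i = x i} ⊆ U := by
  rcases isOpen_pi_iff.mp hU x hx with ⟨I, u, h1, h2⟩
  refine ⟨I, fun y hy => h2 fun i hi => ?_⟩
  rw [Set.mem_setOf_eq] at hy
  rw [hy i hi]
  exact (h1 i hi).2

lemma mem_closure_iff_cyl [TopologicalSpace α] [DiscreteTopology α] {A : Set (ℤ → α)}
    {x : ℤ → α} :
    x ∈ closure A ↔ ∀ I : Finset ℤ, ∃ y ∈ A, ∀ i ∈ I, y i = x i := by
  constructor
  · intro h I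
    rcases mem_closure_iff.mp h _ (cyl_isOpen I x) (fun i _ => rfl) with ⟨y, hy1, hy2⟩
    exact ⟨y, hy2, hy1⟩
  · intro h
    rw [mem_closure_iff]
    intro U hU hxU
    rcases exists_cyl_subset hU hxU with ⟨I, hI⟩
    rcases h I with ⟨y, hyA, hy⟩
    exact ⟨y, hI hy, hyA⟩

lemma isClosed_coord2 {A : Type*} [TopologicalSpace A] [DiscreteTopology A] (i j : ℤ)
    (R : A → A → Prop) : IsClosed {q : ℤ → A | R (q i) (q j)} := by
  have h : {q : ℤ → A | R (q i) (q j)}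
      = (fun q : ℤ → A => (q i, q j)) ⁻¹' {ab : A × A | R ab.1 ab.2} := rfl
  rw [h]
  exact IsClosed.preimage ((continuous_apply i).prodMk (continuous_apply j))
    (isClosed_discrete _)

lemma isClosed_coord1 {A : Type*} [TopologicalSpace A] [DiscreteTopology A] (i : ℤ)
    (R : A → Prop) : IsClosed {q : ℤ → A | R (q i)} := by
  have h : {q : ℤ → A | R (q i)} = (fun q : ℤ → A => q i) ⁻¹' {a : A | R a} := rfl
  rw [h]
  exact IsClosed.preimage (continuous_apply i) (isClosed_discrete _)

/-- shift by `n`. -/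
def shiftn {A : Type*} (n : ℤ) (x : ℤ → A) : ℤ → A := fun k => x (k + n)

lemma shift1_inj {A : Type*} {x y : ℤ → A} (h : shift1 x = shift1 y) : x = y := by
  funext k
  have := congrFun h (k - 1)
  simpa [shift1] using this

lemma shiftn_comm {T S : Type*} (f : (ℤ → T) → (ℤ → S))
    (hcomm : ∀ y, f (shift1 y) = shift1 (f y)) (n : ℤ) (y : ℤ → T) :
    f (shiftn n y) = shiftn n (f y) := by
  induction n using Int.induction_on with
  | zero =>
    have h0 : shiftn 0 y = y := by funext k; simp [shiftn]
    have h0' : shiftn 0 (f y) = f y := by funext k; simp [shiftn]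
    rw [h0, h0']
  | succ i ih =>
    have h1 : shiftn ((i : ℤ) + 1) y = shift1 (shiftn i y) := by
      funext k; simp [shiftn, shift1]; ring_nf
    have h2 : shiftn ((i : ℤ) + 1) (f y) = shift1 (shiftn i (f y)) := by
      funext k; simp [shiftn, shift1]; ring_nf
    rw [h1, hcomm, ih, h2]
  | pred i ih =>
    have h1 : shiftn (-(i : ℤ)) y = shift1 (shiftn (-(i : ℤ) - 1) y) := by
      funext k; simp only [shiftn, shift1]; ring_nf
    have h2 : shiftn (-(i : ℤ)) (f y) = shift1 (shiftn (-(i : ℤ) - 1) (f y)) := by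
      funext k; simp only [shiftn, shift1]; ring_nf
    apply shift1_inj
    rw [← hcomm, ← h1, ih]
    exact h2

end SoficDeriv

namespace SoficDeriv

lemma exists_radius {T S : Type*} [Finite T] [TopologicalSpace T] [DiscreteTopology T]
    [TopologicalSpace S] [DiscreteTopology S]
    {f : (ℤ → T) → (ℤ → S)} (hf : Continuous f) :
    ∃ r : ℕ, ∀ y y' : ℤ → T, (∀ i : ℤ, i.natAbs ≤ r → y i = y' i) → f y 0 = f y' 0 := by
  classical
  set g : (ℤ → T) → S := fun y => f y 0 with hg
  have hgc : Continuous g := (continuous_apply (0 : ℤ)).comp hf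
  have key : ∀ y : ℤ → T, ∃ I : Finset ℤ, ∀ y', (∀ i ∈ I, y' i = y i) → g y' = g y := by
    intro y
    have hop : IsOpen (g ⁻¹' {g y}) := (isOpen_discrete _).preimage hgc
    rcases exists_cyl_subset hop (by simp : y ∈ g ⁻¹' {g y}) with ⟨I, hI⟩
    exact ⟨I, fun y' h => hI h⟩
  choose I hI using key
  have hcover : (Set.univ : Set (ℤ → T)) ⊆ ⋃ y : ℤ → T, {y' | ∀ i ∈ I y, y' i = y i} := by
    intro y _
    exact Set.mem_iUnion.mpr ⟨y, fun i _ => rfl⟩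
  rcases IsCompact.elim_finite_subcover isCompact_univ _ (fun y => cyl_isOpen (I y) y)
    hcover with ⟨s, hs⟩
  refine ⟨s.sup fun y => (I y).sup Int.natAbs, ?_⟩
  intro y y' hagree
  rcases Set.mem_iUnion₂.mp (hs (Set.mem_univ y)) with ⟨y₀, hy₀s, hy₀⟩
  have h1 : g y = g y₀ := hI y₀ y hy₀
  have h2 : g y' = g y₀ := by
    refine hI y₀ y' fun i hi => ?_
    have hb : i.natAbs ≤ s.sup fun y => (I y).sup Int.natAbs := by
      calc i.natAbs ≤ (I y₀).sup Int.natAbs := Finset.le_sup hi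
        _ ≤ _ := Finset.le_sup (f := fun y => (I y).sup Int.natAbs) hy₀s
    rw [← hagree i hb]
    exact hy₀ i hi
  rw [show f y 0 = g y from rfl, show f y' 0 = g y' from rfl, h1, h2]

end SoficDeriv

namespace SoficDeriv

section Constr

variable {T S : Type}

/-- overlap relation on windows of length `m+1`. -/
def Ovl (m : ℕ) (u v : Fin (m+1) → T) : Prop :=
  ∀ (j : ℕ) (h : j + 1 < m + 1), u ⟨j + 1, h⟩ = v ⟨j, by omega⟩

/-- the window `u` contains no forbidden word of `F`. -/
def GoodW (F : Set (List T)) (m : ℕ) (u : Fin (m+1) → T) : Prop :=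
  ∀ w ∈ F, ∀ (j : ℕ) (h : j + w.length ≤ m + 1),
    ¬ (∀ i : Fin w.length, u ⟨j + i.1, by have := i.isLt; omega⟩ = w.get i)

/-- extend a window to a configuration by clamping. -/
def extW (r m : ℕ) (u : Fin (m+1) → T) : ℤ → T :=
  fun i => u ⟨min (i + (r : ℤ)).toNat m, Nat.lt_succ_of_le (min_le_right _ _)⟩

/-- the label of a window. -/
def labW (f : (ℤ → T) → (ℤ → S)) (r m : ℕ) (u : Fin (m+1) → T) : S := f (extW r m u) 0

/-- a bi-infinite sequence of windows is a path. -/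
def IsPathW (m : ℕ) (p : ℤ → Fin (m+1) → T) : Prop := ∀ i : ℤ, Ovl m (p i) (p (i+1))

def AllGoodW (F : Set (List T)) (m : ℕ) (p : ℤ → Fin (m+1) → T) : Prop :=
  ∀ i : ℤ, GoodW F m (p i)

lemma path_apply {m : ℕ} {p : ℤ → Fin (m+1) → T} (hp : IsPathW m p) :
    ∀ (j : ℕ) (h : j < m + 1) (i : ℤ),
      p i ⟨j, h⟩ = p (i + j) ⟨0, Nat.succ_pos m⟩ := by
  intro j
  induction j with
  | zero => intro h i; simp
  | succ j ih =>
    intro h i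
    have h1 : p i ⟨j + 1, h⟩ = p (i + 1) ⟨j, by omega⟩ := hp i j h
    rw [h1, ih (by omega) (i + 1)]
    congr 1
    push_cast
    ring

/-- left-asymptotic difference pairs -/
def LneqW (f : (ℤ → T) → (ℤ → S)) (F : Set (List T)) (r m : ℕ)
    (a b : Fin (m+1) → T) : Prop :=
  ∃ P Q : ℕ → Fin (m+1) → T, P 0 = a ∧ Q 0 = b ∧
    (∀ k, Ovl m (P (k+1)) (P k) ∧ Ovl m (Q (k+1)) (Q k) ∧
      GoodW F m (P (k+1)) ∧ GoodW F m (Q (k+1))) ∧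
    ∃ k, labW f r m (P k) ≠ labW f r m (Q k)

def RneqW (f : (ℤ → T) → (ℤ → S)) (F : Set (List T)) (r m : ℕ)
    (a b : Fin (m+1) → T) : Prop :=
  ∃ P Q : ℕ → Fin (m+1) → T, P 0 = a ∧ Q 0 = b ∧
    (∀ k, Ovl m (P k) (P (k+1)) ∧ Ovl m (Q k) (Q (k+1)) ∧
      GoodW F m (P (k+1)) ∧ GoodW F m (Q (k+1))) ∧
    ∃ k, labW f r m (P k) ≠ labW f r m (Q k)

lemma LneqW_step {f : (ℤ → T) → (ℤ → S)} {F : Set (List T)} {r m : ℕ}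
    {a b a' b' : Fin (m+1) → T} (h : LneqW f F r m a b)
    (hea : Ovl m a a') (heb : Ovl m b b') (hga : GoodW F m a) (hgb : GoodW F m b) :
    LneqW f F r m a' b' := by
  obtain ⟨P, Q, hP0, hQ0, hray, k0, hk0⟩ := h
  refine ⟨fun k => Nat.casesOn k a' P, fun k => Nat.casesOn k b' Q, rfl, rfl, ?_, k0 + 1, hk0⟩
  intro k
  cases k with
  | zero =>
    refine ⟨?_, ?_, ?_, ?_⟩
    · show Ovl m (P 0) a'; rw [hP0]; exact hea
    · show Ovl m (Q 0) b'; rw [hQ0]; exact heb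
    · show GoodW F m (P 0); rw [hP0]; exact hga
    · show GoodW F m (Q 0); rw [hQ0]; exact hgb
  | succ k => exact ⟨(hray k).1, (hray k).2.1, (hray k).2.2.1, (hray k).2.2.2⟩

lemma RneqW_step {f : (ℤ → T) → (ℤ → S)} {F : Set (List T)} {r m : ℕ}
    {a b a' b' : Fin (m+1) → T} (h : RneqW f F r m a b)
    (hea : Ovl m a' a) (heb : Ovl m b' b) (hga : GoodW F m a) (hgb : GoodW F m b) :
    RneqW f F r m a' b' := by
  obtain ⟨P, Q, hP0, hQ0, hray, k0, hk0⟩ := h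
  refine ⟨fun k => Nat.casesOn k a' P, fun k => Nat.casesOn k b' Q, rfl, rfl, ?_, k0 + 1, hk0⟩
  intro k
  cases k with
  | zero =>
    refine ⟨?_, ?_, ?_, ?_⟩
    · show Ovl m a' (P 0); rw [hP0]; exact hea
    · show Ovl m b' (Q 0); rw [hQ0]; exact heb
    · show GoodW F m (P 0); rw [hP0]; exact hga
    · show GoodW F m (Q 0); rw [hQ0]; exact hgb
  | succ k => exact ⟨(hray k).1, (hray k).2.1, (hray k).2.2.1, (hray k).2.2.2⟩

end Constr

end SoficDeriv

namespace SoficDeriv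

lemma occursW_one {A : Type*} (w : A) (z : ℤ → A) : occursW [w] z ↔ ∃ n, z n = w := by
  constructor
  · rintro ⟨n, h⟩
    have := h ⟨0, by simp⟩
    exact ⟨n, by simpa using this⟩
  · rintro ⟨n, h⟩
    refine ⟨n, fun i => ?_⟩
    fin_cases i
    simpa using h

lemma occursW_two {A : Type*} (w w' : A) (z : ℤ → A) :
    occursW [w, w'] z ↔ ∃ n, z n = w ∧ z (n + 1) = w' := by
  constructor
  · rintro ⟨n, h⟩
    have h0 := h ⟨0, by simp⟩
    have h1 := h ⟨1, by simp⟩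
    exact ⟨n, by simpa using h0, by simpa using h1⟩
  · rintro ⟨n, h0, h1⟩
    refine ⟨n, fun i => ?_⟩
    fin_cases i
    · simpa using h0
    · simpa using h1

/-- an SFT given by unary and binary constraints. -/
lemma isSFT1_of_local {A : Type} [Finite A] (C1 : A → Prop) (C2 : A → A → Prop) :
    IsSFT1 {z : ℤ → A | ∀ i : ℤ, C1 (z i) ∧ C2 (z i) (z (i+1))} := by
  classical
  refine ⟨((fun a => [a]) '' {a | ¬ C1 a}) ∪
      ((fun ab : A × A => [ab.1, ab.2]) '' {ab | ¬ C2 ab.1 ab.2}), ?_, ?_⟩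
  · exact ((Set.toFinite _).image _).union ((Set.toFinite _).image _)
  · ext z
    simp only [Set.mem_setOf_eq]
    constructor
    · intro hz u hu hocc
      rcases hu with ⟨a, ha, rfl⟩ | ⟨ab, hab, rfl⟩
      · rcases (occursW_one a z).mp hocc with ⟨n, hn⟩
        exact ha (hn ▸ (hz n).1)
      · rcases (occursW_two ab.1 ab.2 z).mp hocc with ⟨n, hn1, hn2⟩
        exact hab (hn1 ▸ hn2 ▸ (hz n).2)
    · intro hz i
      constructor
      · by_contra hc
        exact hz [z i] (Or.inl ⟨z i, hc, rfl⟩) ((occursW_one _ _).mpr ⟨i, rfl⟩)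
      · by_contra hc
        exact hz [z i, z (i+1)] (Or.inr ⟨(z i, z (i+1)), hc, rfl⟩)
          ((occursW_two _ _ _).mpr ⟨i, rfl, rfl⟩)

end SoficDeriv

namespace SoficDeriv

section LemA

variable {T S : Type} {f : (ℤ → T) → (ℤ → S)} {F : Set (List T)} {Y : Set (ℤ → T)} {r m : ℕ}

lemma f_apply_shift (hcomm : ∀ y, f (shift1 y) = shift1 (f y)) (n : ℤ) (y : ℤ → T) :
    f (shiftn n y) 0 = f y n := by
  rw [shiftn_comm f hcomm]
  simp [shiftn]

lemma path_corr (hp : IsPathW m p) (i : ℤ) (j : ℕ) (h : j < m + 1) :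
    p i ⟨j, h⟩ = (fun k : ℤ => p (k + (r : ℤ)) ⟨0, Nat.succ_pos m⟩) (i - r + j) := by
  rw [path_apply hp j h i]
  show _ = p (i - r + j + r) _
  congr 1
  ring

lemma ext_eq_shift (h2r : 2 * r ≤ m) (p : ℤ → Fin (m+1) → T) (hp : IsPathW m p) (n i : ℤ)
    (hi : i.natAbs ≤ r) :
    extW r m (p n) i = shiftn n (fun k : ℤ => p (k + (r : ℤ)) ⟨0, Nat.succ_pos m⟩) i := by
  have hnn : (0 : ℤ) ≤ i + r := by omega
  have hi1 : ((i + (r : ℤ)).toNat : ℤ) = i + r := Int.toNat_of_nonneg hnn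
  have hi2 : (i + (r : ℤ)).toNat ≤ m := by omega
  show p n ⟨min (i + (r : ℤ)).toNat m, _⟩ = _
  have hfe : (⟨min (i + (r : ℤ)).toNat m, Nat.lt_succ_of_le (min_le_right _ _)⟩ : Fin (m+1))
      = ⟨(i + (r : ℤ)).toNat, by omega⟩ := Fin.ext (by simp [Nat.min_eq_left hi2])
  rw [hfe, path_corr (r := r) hp n _ _]
  show p (n - r + (i + (r:ℤ)).toNat + r) _ = p (i + n + r) _
  congr 2
  omega

lemma lab_path (h2r : 2 * r ≤ m) (hcomm : ∀ y, f (shift1 y) = shift1 (f y))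
    (hr : ∀ y y' : ℤ → T, (∀ i : ℤ, i.natAbs ≤ r → y i = y' i) → f y 0 = f y' 0)
    (p : ℤ → Fin (m+1) → T) (hp : IsPathW m p) (n : ℤ) :
    labW f r m (p n) = f (fun k : ℤ => p (k + (r : ℤ)) ⟨0, Nat.succ_pos m⟩) n := by
  show f (extW r m (p n)) 0 = _
  rw [hr (extW r m (p n)) (shiftn n fun k : ℤ => p (k + (r : ℤ)) ⟨0, Nat.succ_pos m⟩)
    (fun i hi => ext_eq_shift h2r p hp n i hi)]
  exact f_apply_shift hcomm n _

lemma path_to_X (h2r : 2 * r ≤ m) (hlen : ∀ w ∈ F, w.length ≤ m)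
    (hYchar : ∀ y, y ∈ Y ↔ ∀ w ∈ F, ¬ occursW w y)
    (hr : ∀ y y' : ℤ → T, (∀ i : ℤ, i.natAbs ≤ r → y i = y' i) → f y 0 = f y' 0)
    (hcomm : ∀ y, f (shift1 y) = shift1 (f y))
    (p : ℤ → Fin (m+1) → T) (hp : IsPathW m p) (hg : AllGoodW F m p) :
    ∃ y ∈ Y, f y = fun n => labW f r m (p n) := by
  set y : ℤ → T := fun k : ℤ => p (k + (r : ℤ)) ⟨0, Nat.succ_pos m⟩ with hy
  refine ⟨y, ?_, ?_⟩
  · rw [hYchar]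
    rintro w hw ⟨t, hocc⟩
    refine hg (t + r) w hw 0 (by have := hlen w hw; omega) fun i => ?_
    have hfe : (⟨0 + i.1, by have := i.isLt; have := hlen w hw; omega⟩ : Fin (m+1))
        = ⟨i.1, by have := i.isLt; have := hlen w hw; omega⟩ := Fin.ext (by simp)
    rw [hfe, path_corr (r := r) hp (t + r) i.1 _]
    have harith : t + r - r + (i.1 : ℤ) = t + i.1 := by ring
    rw [← hy, harith]
    exact hocc i
  · funext n
    exact (lab_path h2r hcomm hr p hp n).symm

lemma X_to_path (h2r : 2 * r ≤ m) (hlen : ∀ w ∈ F, w.length ≤ m)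
    (hYchar : ∀ y, y ∈ Y ↔ ∀ w ∈ F, ¬ occursW w y)
    (hr : ∀ y y' : ℤ → T, (∀ i : ℤ, i.natAbs ≤ r → y i = y' i) → f y 0 = f y' 0)
    (hcomm : ∀ y, f (shift1 y) = shift1 (f y))
    {y : ℤ → T} (hy : y ∈ Y) :
    ∃ p : ℤ → Fin (m+1) → T, IsPathW m p ∧ AllGoodW F m p ∧
      ∀ n, labW f r m (p n) = f y n := by
  refine ⟨fun n => fun j : Fin (m+1) => y (n - r + j.1), ?_, ?_, ?_⟩
  · intro i j h
    show y (i - r + (j + 1 : ℕ)) = y (i + 1 - r + j)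
    congr 1
    push_cast
    ring
  · intro i w hw j h hall
    refine (hYchar y).mp hy w hw ⟨i - r + j, fun i' => ?_⟩
    have := hall i'
    rw [show (i - (r:ℤ) + j) + (i'.1 : ℤ) = i - r + (j + i'.1 : ℕ) by push_cast; ring]
    exact this
  · intro n
    show f (extW r m _) 0 = f y n
    rw [← f_apply_shift hcomm n y]
    refine hr _ _ fun i hi => ?_
    have hnn : (0 : ℤ) ≤ i + r := by omega
    have hi1 : ((i + (r : ℤ)).toNat : ℤ) = i + r := Int.toNat_of_nonneg hnn
    have hi2 : (i + (r : ℤ)).toNat ≤ m := by omega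
    show (fun j : Fin (m+1) => y (n - r + j.1)) ⟨min (i + (r : ℤ)).toNat m, _⟩ = shiftn n y i
    show y (n - r + (min (i + (r : ℤ)).toNat m : ℕ)) = y (i + n)
    congr 1
    rw [Nat.min_eq_left hi2]
    omega

end LemA

end SoficDeriv

namespace SoficDeriv

section Splice

variable {T S : Type} {f : (ℤ → T) → (ℤ → S)} {F : Set (List T)} {r m : ℕ}

lemma splice_left {p : ℤ → Fin (m+1) → T} (hp : IsPathW m p) (hpg : AllGoodW F m p)
    {P : ℕ → Fin (m+1) → T} {t : ℤ} (hP0 : P 0 = p t)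
    (hray : ∀ k, Ovl m (P (k+1)) (P k) ∧ GoodW F m (P (k+1))) :
    IsPathW m (fun j => if j < t then P (t - j).toNat else p j) ∧
      AllGoodW F m (fun j => if j < t then P (t - j).toNat else p j) := by
  constructor
  · intro j
    show Ovl m (if j < t then P (t - j).toNat else p j)
      (if j + 1 < t then P (t - (j+1)).toNat else p (j+1))
    by_cases h1 : j + 1 < t
    · have h2 : j < t := by omega
      rw [if_pos h2, if_pos h1]
      have h3 : (t - j).toNat = (t - (j+1)).toNat + 1 := by omega
      rw [h3]
      exact (hray _).1
    · by_cases h2 : j < t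
      · have hjt : j + 1 = t := by omega
        rw [if_pos h2, if_neg h1]
        have h3 : (t - j).toNat = 1 := by omega
        rw [h3, hjt, ← hP0]
        exact (hray 0).1
      · rw [if_neg h2, if_neg h1]
        exact hp j
  · intro j
    show GoodW F m (if j < t then P (t - j).toNat else p j)
    by_cases h : j < t
    · rw [if_pos h]
      have h3 : (t - j).toNat = (t - j - 1).toNat + 1 := by omega
      rw [h3]
      exact (hray _).2
    · rw [if_neg h]
      exact hpg j

lemma splice_right {p : ℤ → Fin (m+1) → T} (hp : IsPathW m p) (hpg : AllGoodW F m p)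
    {P : ℕ → Fin (m+1) → T} {t : ℤ} (hP0 : P 0 = p t)
    (hray : ∀ k, Ovl m (P k) (P (k+1)) ∧ GoodW F m (P (k+1))) :
    IsPathW m (fun j => if t < j then P (j - t).toNat else p j) ∧
      AllGoodW F m (fun j => if t < j then P (j - t).toNat else p j) := by
  constructor
  · intro j
    show Ovl m (if t < j then P (j - t).toNat else p j)
      (if t < j + 1 then P (j + 1 - t).toNat else p (j+1))
    by_cases h1 : t < j
    · have h2 : t < j + 1 := by omega
      rw [if_pos h1, if_pos h2]
      have h3 : (j + 1 - t).toNat = (j - t).toNat + 1 := by omega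
      rw [h3]
      exact (hray _).1
    · by_cases h2 : t < j + 1
      · have hjt : j = t := by omega
        rw [if_neg h1, if_pos h2]
        have h3 : (j + 1 - t).toNat = 1 := by omega
        rw [h3, hjt, ← hP0]
        exact (hray 0).1
      · rw [if_neg h1, if_neg h2]
        exact hp j
  · intro j
    show GoodW F m (if t < j then P (j - t).toNat else p j)
    by_cases h : t < j
    · rw [if_pos h]
      have h3 : (j - t).toNat = (j - t - 1).toNat + 1 := by omega
      rw [h3]
      exact (hray _).2
    · rw [if_neg h]
      exact hpg j

lemma LneqW_of_paths {p q : ℤ → Fin (m+1) → T} (hp : IsPathW m p) (hpg : AllGoodW F m p)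
    (hq : IsPathW m q) (hqg : AllGoodW F m q) {t j0 : ℤ} (hle : j0 ≤ t)
    (hne : labW f r m (p j0) ≠ labW f r m (q j0)) :
    LneqW f F r m (p t) (q t) := by
  refine ⟨fun k => p (t - k), fun k => q (t - k), by norm_num, by norm_num, ?_,
    (t - j0).toNat, ?_⟩
  · intro k
    have e1 : t - ((k : ℕ) + 1 : ℕ) + 1 = t - k := by push_cast; ring
    have h1 := hp (t - ((k : ℕ) + 1 : ℕ))
    rw [e1] at h1
    have h2 := hq (t - ((k : ℕ) + 1 : ℕ))
    rw [e1] at h2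
    exact ⟨h1, h2, hpg _, hqg _⟩
  · show labW f r m (p (t - ((t - j0).toNat : ℕ))) ≠ labW f r m (q (t - ((t - j0).toNat : ℕ)))
    have e2 : t - (((t - j0).toNat : ℕ) : ℤ) = j0 := by omega
    rw [e2]
    exact hne

lemma RneqW_of_paths {p q : ℤ → Fin (m+1) → T} (hp : IsPathW m p) (hpg : AllGoodW F m p)
    (hq : IsPathW m q) (hqg : AllGoodW F m q) {t j0 : ℤ} (hle : t ≤ j0)
    (hne : labW f r m (p j0) ≠ labW f r m (q j0)) :
    RneqW f F r m (p t) (q t) := by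
  refine ⟨fun k => p (t + k), fun k => q (t + k), by norm_num, by norm_num, ?_,
    (j0 - t).toNat, ?_⟩
  · intro k
    have e1 : t + ((k : ℕ) + 1 : ℕ) = (t + k) + 1 := by push_cast; ring
    have h1 := hp (t + k)
    have h2 := hq (t + k)
    rw [← e1] at h1 h2
    exact ⟨h1, h2, hpg _, hqg _⟩
  · show labW f r m (p (t + ((j0 - t).toNat : ℕ))) ≠ labW f r m (q (t + ((j0 - t).toNat : ℕ)))
    have e2 : t + (((j0 - t).toNat : ℕ) : ℤ) = j0 := by omega
    rw [e2]
    exact hne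

end Splice

end SoficDeriv

open SoficDeriv

/-- The Cantor–Bendixson derivative of a one-dimensional sofic shift is
again sofic. -/
theorem sofic_derivative_sofic {S : Type} [Fintype S] [TopologicalSpace S] [DiscreteTopology S]
    (X : Set (ℤ → S)) (hX : IsSofic1 X) :
    IsSofic1 (cbDerivedSet X) := by
  classical
  obtain ⟨T, hTfin, Y, f, hSFT, hcont, hcomm, himg⟩ := hX
  obtain ⟨F, hFfin, hYF⟩ := hSFT
  haveI := hTfin
  letI : TopologicalSpace T := ⊥
  haveI : DiscreteTopology T := ⟨rfl⟩
  obtain ⟨r, hr⟩ := exists_radius (f := f) hcont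
  set m : ℕ := 2 * r + hFfin.toFinset.sup List.length with hmdef
  have h2r : 2 * r ≤ m := by omega
  have hlen : ∀ w ∈ F, w.length ≤ m := by
    intro w hw
    have h1 : w.length ≤ hFfin.toFinset.sup List.length :=
      Finset.le_sup (hFfin.mem_toFinset.mpr hw)
    omega
  have hYchar : ∀ y, y ∈ Y ↔ ∀ w ∈ F, ¬ occursW w y := fun y => by rw [hYF]; exact Iff.rfl
  set C1 : (Fin (m+1) → T) × (Fin (m+1) → T) × Bool → Prop := fun w =>
    GoodW F m w.1 ∧ GoodW F m w.2.1 ∧ labW f r m w.1 = labW f r m w.2.1 ∧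
      (w.2.2 = true → LneqW f F r m w.1 w.2.1) ∧
      (w.2.2 = false → RneqW f F r m w.1 w.2.1) with hC1def
  set C2 : ((Fin (m+1) → T) × (Fin (m+1) → T) × Bool) →
      ((Fin (m+1) → T) × (Fin (m+1) → T) × Bool) → Prop := fun w w' =>
    Ovl m w.1 w'.1 ∧ Ovl m w.2.1 w'.2.1 ∧ w.2.2 = w'.2.2 with hC2def
  refine ⟨(Fin (m+1) → T) × (Fin (m+1) → T) × Bool, inferInstance,
    {z | ∀ i : ℤ, C1 (z i) ∧ C2 (z i) (z (i+1))},
    fun z k => labW f r m (z k).1, isSFT1_of_local C1 C2, ?_, fun z => rfl, ?_⟩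
  · letI : TopologicalSpace ((Fin (m+1) → T) × (Fin (m+1) → T) × Bool) := ⊥
    haveI : DiscreteTopology ((Fin (m+1) → T) × (Fin (m+1) → T) × Bool) := ⟨rfl⟩
    exact continuous_pi fun k =>
      Continuous.comp (continuous_of_discreteTopology
        (f := fun w : (Fin (m+1) → T) × (Fin (m+1) → T) × Bool => labW f r m w.1))
        (continuous_apply k)
  apply Set.eq_of_subset_of_subset
  · -- forward inclusion
    rintro x ⟨z, hz, rfl⟩
    have hzC1 : ∀ i : ℤ, C1 (z i) := fun i => (hz i).1
    have hzC2 : ∀ i : ℤ, C2 (z i) (z (i+1)) := fun i => (hz i).2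
    set p : ℤ → Fin (m+1) → T := fun i => (z i).1 with hpdef
    set q : ℤ → Fin (m+1) → T := fun i => (z i).2.1 with hqdef
    have hpPath : IsPathW m p := fun i => (hzC2 i).1
    have hqPath : IsPathW m q := fun i => (hzC2 i).2.1
    have hpGood : AllGoodW F m p := fun i => (hzC1 i).1
    have hqGood : AllGoodW F m q := fun i => (hzC1 i).2.1
    have hlabeq : ∀ i, labW f r m (p i) = labW f r m (q i) := fun i => (hzC1 i).2.2.1
    have hflag : ∀ i, (z i).2.2 = (z 0).2.2 := by
      intro i
      induction i using Int.induction_on with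
      | zero => rfl
      | succ i ih => rw [← (hzC2 i).2.2]; exact ih
      | pred i ih =>
        have h1 := (hzC2 (-(i:ℤ) - 1)).2.2
        rw [show (-(i:ℤ) - 1 + 1) = -(i:ℤ) by ring] at h1
        rw [h1]; exact ih
    obtain ⟨y, hyY, hfy⟩ := path_to_X h2r hlen hYchar hr hcomm p hpPath hpGood
    have hxX : (fun k => labW f r m ((z k).1)) ∈ X := by
      rw [← himg]; exact ⟨y, hyY, hfy⟩
    refine ⟨hxX, mem_closure_iff_cyl.mpr ?_⟩
    intro I
    set N : ℕ := I.sup Int.natAbs with hNdef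
    have hNI : ∀ i ∈ I, i.natAbs ≤ N := fun i hi => Finset.le_sup hi
    cases hb : (z 0).2.2 with
    | true =>
      have hL : ∀ i, LneqW f F r m (p i) (q i) := fun i =>
        (hzC1 i).2.2.2.1 (by rw [hflag i, hb])
      obtain ⟨P, Q, hP0, hQ0, hray, k0, hk0⟩ := hL (-(N:ℤ))
      obtain ⟨hp1path, hp1good⟩ :=
        splice_left (F := F) hpPath hpGood hP0 (fun k => ⟨(hray k).1, (hray k).2.2.1⟩)
      obtain ⟨hp2path, hp2good⟩ :=
        splice_left (F := F) hqPath hqGood hQ0 (fun k => ⟨(hray k).2.1, (hray k).2.2.2⟩)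
      obtain ⟨y1, hy1Y, hfy1⟩ := path_to_X h2r hlen hYchar hr hcomm _ hp1path hp1good
      obtain ⟨y2, hy2Y, hfy2⟩ := path_to_X h2r hlen hYchar hr hcomm _ hp2path hp2good
      have hy1X : f y1 ∈ X := by rw [← himg]; exact ⟨y1, hy1Y, rfl⟩
      have hy2X : f y2 ∈ X := by rw [← himg]; exact ⟨y2, hy2Y, rfl⟩
      have hagree1 : ∀ i ∈ I, f y1 i = labW f r m ((z i).1) := by
        intro i hi
        have h1 : f y1 i
            = labW f r m (if i < -(N:ℤ) then P (-(N:ℤ) - i).toNat else p i) :=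
          congrFun hfy1 i
        rw [h1, if_neg (by have := hNI i hi; omega)]
      have hagree2 : ∀ i ∈ I, f y2 i = labW f r m ((z i).1) := by
        intro i hi
        have h1 : f y2 i
            = labW f r m (if i < -(N:ℤ) then Q (-(N:ℤ) - i).toNat else q i) :=
          congrFun hfy2 i
        rw [h1, if_neg (by have := hNI i hi; omega)]
        exact (hlabeq i).symm
      have hk0pos : k0 ≠ 0 := by
        intro h0
        rw [h0, hP0, hQ0] at hk0
        exact hk0 (hlabeq _)
      have hdiff : f y1 (-(N:ℤ) - k0) ≠ f y2 (-(N:ℤ) - k0) := by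
        have e1 : f y1 (-(N:ℤ) - k0) = labW f r m (if -(N:ℤ) - (k0:ℤ) < -(N:ℤ)
            then P (-(N:ℤ) - (-(N:ℤ) - (k0:ℤ))).toNat else p (-(N:ℤ) - k0)) :=
          congrFun hfy1 _
        have e2 : f y2 (-(N:ℤ) - k0) = labW f r m (if -(N:ℤ) - (k0:ℤ) < -(N:ℤ)
            then Q (-(N:ℤ) - (-(N:ℤ) - (k0:ℤ))).toNat else q (-(N:ℤ) - k0)) :=
          congrFun hfy2 _
        have hlt : -(N:ℤ) - (k0:ℤ) < -(N:ℤ) := by omega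
        have htn : (-(N:ℤ) - (-(N:ℤ) - (k0:ℤ))).toNat = k0 := by omega
        rw [e1, e2, if_pos hlt, if_pos hlt, htn]
        exact hk0
      by_cases hone : f y1 = (fun k => labW f r m ((z k).1))
      · refine ⟨f y2, ⟨hy2X, ?_⟩, fun i hi => hagree2 i hi⟩
        intro hcon
        rw [Set.mem_singleton_iff] at hcon
        exact hdiff (by rw [hone, hcon])
      · exact ⟨f y1, ⟨hy1X, fun hcon => hone hcon⟩, fun i hi => hagree1 i hi⟩
    | false =>
      have hR : ∀ i, RneqW f F r m (p i) (q i) := fun i =>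
        (hzC1 i).2.2.2.2 (by rw [hflag i, hb])
      obtain ⟨P, Q, hP0, hQ0, hray, k0, hk0⟩ := hR ((N:ℤ))
      obtain ⟨hp1path, hp1good⟩ :=
        splice_right (F := F) hpPath hpGood hP0 (fun k => ⟨(hray k).1, (hray k).2.2.1⟩)
      obtain ⟨hp2path, hp2good⟩ :=
        splice_right (F := F) hqPath hqGood hQ0 (fun k => ⟨(hray k).2.1, (hray k).2.2.2⟩)
      obtain ⟨y1, hy1Y, hfy1⟩ := path_to_X h2r hlen hYchar hr hcomm _ hp1path hp1good
      obtain ⟨y2, hy2Y, hfy2⟩ := path_to_X h2r hlen hYchar hr hcomm _ hp2path hp2good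
      have hy1X : f y1 ∈ X := by rw [← himg]; exact ⟨y1, hy1Y, rfl⟩
      have hy2X : f y2 ∈ X := by rw [← himg]; exact ⟨y2, hy2Y, rfl⟩
      have hagree1 : ∀ i ∈ I, f y1 i = labW f r m ((z i).1) := by
        intro i hi
        have h1 : f y1 i
            = labW f r m (if (N:ℤ) < i then P (i - (N:ℤ)).toNat else p i) :=
          congrFun hfy1 i
        rw [h1, if_neg (by have := hNI i hi; omega)]
      have hagree2 : ∀ i ∈ I, f y2 i = labW f r m ((z i).1) := by
        intro i hi
        have h1 : f y2 i
            = labW f r m (if (N:ℤ) < i then Q (i - (N:ℤ)).toNat else q i) :=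
          congrFun hfy2 i
        rw [h1, if_neg (by have := hNI i hi; omega)]
        exact (hlabeq i).symm
      have hk0pos : k0 ≠ 0 := by
        intro h0
        rw [h0, hP0, hQ0] at hk0
        exact hk0 (hlabeq _)
      have hdiff : f y1 ((N:ℤ) + k0) ≠ f y2 ((N:ℤ) + k0) := by
        have e1 : f y1 ((N:ℤ) + k0) = labW f r m (if (N:ℤ) < (N:ℤ) + (k0:ℤ)
            then P ((N:ℤ) + (k0:ℤ) - (N:ℤ)).toNat else p ((N:ℤ) + k0)) :=
          congrFun hfy1 _
        have e2 : f y2 ((N:ℤ) + k0) = labW f r m (if (N:ℤ) < (N:ℤ) + (k0:ℤ)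
            then Q ((N:ℤ) + (k0:ℤ) - (N:ℤ)).toNat else q ((N:ℤ) + k0)) :=
          congrFun hfy2 _
        have hlt : (N:ℤ) < (N:ℤ) + (k0:ℤ) := by omega
        have htn : ((N:ℤ) + (k0:ℤ) - (N:ℤ)).toNat = k0 := by omega
        rw [e1, e2, if_pos hlt, if_pos hlt, htn]
        exact hk0
      by_cases hone : f y1 = (fun k => labW f r m ((z k).1))
      · refine ⟨f y2, ⟨hy2X, ?_⟩, fun i hi => hagree2 i hi⟩
        intro hcon
        rw [Set.mem_singleton_iff] at hcon
        exact hdiff (by rw [hone, hcon])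
      · exact ⟨f y1, ⟨hy1X, fun hcon => hone hcon⟩, fun i hi => hagree1 i hi⟩
  · -- backward inclusion
    rintro x ⟨hxX, hxcl⟩
    rw [← himg] at hxX
    obtain ⟨y, hyY, hfy⟩ := hxX
    obtain ⟨p, hpPath, hpGood, hplab0⟩ := X_to_path h2r hlen hYchar hr hcomm hyY
    have hplab : ∀ n, labW f r m (p n) = x n := fun n => by rw [hplab0 n, hfy]
    have hwit : ∀ n : ℕ, ∃ yn, (yn ∈ X ∧ yn ≠ x) ∧ ∀ i : ℤ, i.natAbs ≤ n → yn i = x i := by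
      intro n
      rcases mem_closure_iff_cyl.mp hxcl (Finset.Icc (-(n:ℤ)) (n:ℤ)) with ⟨yn, hynA, hyn⟩
      exact ⟨yn, ⟨hynA.1, fun h => hynA.2 (Set.mem_singleton_iff.mpr h)⟩,
        fun i hi => hyn i (Finset.mem_Icc.mpr (by omega))⟩
    haveI : DiscreteTopology (Fin (m+1) → T) := Pi.discreteTopology
    set D : ℕ → Set (ℤ → (Fin (m+1) → T)) := fun n =>
      {q : ℤ → (Fin (m+1) → T) |
        (∀ i : ℤ, Ovl m (q i) (q (i+1)) ∧ GoodW F m (q i)) ∧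
        (∀ j : ℤ, j.natAbs ≤ n → labW f r m (q j) = x j) ∧
        (LneqW f F r m (p (-(n:ℤ))) (q (-(n:ℤ))) ∨ RneqW f F r m (p (n:ℤ)) (q (n:ℤ)))}
      with hDdef
    have hDclosed : ∀ n, IsClosed (D n) := by
      intro n
      have he : D n = (⋂ i : ℤ, ({q : ℤ → (Fin (m+1) → T) | Ovl m (q i) (q (i+1))} ∩
            {q : ℤ → (Fin (m+1) → T) | GoodW F m (q i)})) ∩
          ((⋂ j : ℤ, {q : ℤ → (Fin (m+1) → T) | j.natAbs ≤ n → labW f r m (q j) = x j}) ∩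
            {q : ℤ → (Fin (m+1) → T) |
              LneqW f F r m (p (-(n:ℤ))) (q (-(n:ℤ))) ∨ RneqW f F r m (p (n:ℤ)) (q (n:ℤ))}) := by
        ext q
        simp only [hDdef, Set.mem_setOf_eq, Set.mem_inter_iff, Set.mem_iInter]
      rw [he]
      refine IsClosed.inter (isClosed_iInter fun i => IsClosed.inter ?_ ?_)
        (IsClosed.inter (isClosed_iInter fun j => ?_) ?_)
      · exact isClosed_coord2 i (i+1) (Ovl m)
      · exact isClosed_coord1 i (GoodW F m)
      · exact isClosed_coord1 j (fun a => j.natAbs ≤ n → labW f r m a = x j)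
      · exact isClosed_coord2 (-(n:ℤ)) (n:ℤ)
          (fun a b => LneqW f F r m (p (-(n:ℤ))) a ∨ RneqW f F r m (p (n:ℤ)) b)
    have hDne : ∀ n, (D n).Nonempty := by
      intro n
      obtain ⟨yn, ⟨hynX, hynne⟩, hynag⟩ := hwit n
      rw [← himg] at hynX
      obtain ⟨wn, hwnY, hfwn⟩ := hynX
      obtain ⟨qn, hqnPath, hqnGood, hqnlab0⟩ := X_to_path h2r hlen hYchar hr hcomm hwnY
      have hqnlab : ∀ k, labW f r m (qn k) = yn k := fun k => by rw [hqnlab0 k, hfwn]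
      obtain ⟨j0, hj0⟩ := Function.ne_iff.mp hynne
      have hj0big : ¬ j0.natAbs ≤ n := fun h => hj0 (hynag j0 h)
      refine ⟨qn, ⟨fun i => ⟨hqnPath i, hqnGood i⟩,
        fun j hj => by rw [hqnlab j]; exact hynag j hj, ?_⟩⟩
      rcases lt_or_ge j0 0 with hneg | hpos
      · left
        refine LneqW_of_paths hpPath hpGood hqnPath hqnGood
          (t := -(n:ℤ)) (j0 := j0) (by omega) ?_
        rw [hplab j0, hqnlab j0]
        exact fun h => hj0 h.symm
      · right
        refine RneqW_of_paths hpPath hpGood hqnPath hqnGood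
          (t := (n:ℤ)) (j0 := j0) (by omega) ?_
        rw [hplab j0, hqnlab j0]
        exact fun h => hj0 h.symm
    have hDnest : ∀ n, D (n+1) ⊆ D n := by
      intro n q hq
      obtain ⟨hq1, hq2, hq3⟩ := hq
      refine ⟨hq1, fun j hj => hq2 j (by omega), ?_⟩
      rcases hq3 with hLn | hRn
      · left
        have e1 : (-(↑(n+1):ℤ)) = -(n:ℤ) - 1 := by push_cast; ring
        rw [e1] at hLn
        have hea : Ovl m (p (-(n:ℤ) - 1)) (p (-(n:ℤ))) := by
          have h := hpPath (-(n:ℤ) - 1)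
          rw [show -(n:ℤ) - 1 + 1 = -(n:ℤ) by ring] at h
          exact h
        have heb : Ovl m (q (-(n:ℤ) - 1)) (q (-(n:ℤ))) := by
          have h := (hq1 (-(n:ℤ) - 1)).1
          rw [show -(n:ℤ) - 1 + 1 = -(n:ℤ) by ring] at h
          exact h
        exact LneqW_step hLn hea heb (hpGood _) (hq1 _).2
      · right
        have e1 : ((↑(n+1):ℤ)) = (n:ℤ) + 1 := by push_cast; ring
        rw [e1] at hRn
        exact RneqW_step hRn (hpPath (n:ℤ)) (hq1 (n:ℤ)).1 (hpGood _) (hq1 _).2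
    obtain ⟨q, hq⟩ := IsCompact.nonempty_iInter_of_sequence_nonempty_isCompact_isClosed
      D hDnest hDne ((hDclosed 0).isCompact) hDclosed
    have hqn : ∀ n, q ∈ D n := Set.mem_iInter.mp hq
    have hqPath : IsPathW m q := fun i => ((hqn 0).1 i).1
    have hqGood : AllGoodW F m q := fun i => ((hqn 0).1 i).2
    have hqlab : ∀ j, labW f r m (q j) = x j := fun j => (hqn j.natAbs).2.1 j le_rfl
    have hflag : ∀ n : ℕ, LneqW f F r m (p (-(n:ℤ))) (q (-(n:ℤ))) ∨
        RneqW f F r m (p (n:ℤ)) (q (n:ℤ)) := fun n => (hqn n).2.2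
    have monoL : ∀ i j : ℤ, i ≤ j → LneqW f F r m (p i) (q i) → LneqW f F r m (p j) (q j) := by
      intro i j hij hLi
      refine Int.le_induction (motive := fun j _ => LneqW f F r m (p j) (q j)) hLi ?_ j hij
      intro k _ hk
      exact LneqW_step hk (hpPath k) (hqPath k) (hpGood k) (hqGood k)
    have monoR : ∀ (i : ℤ) (k : ℕ),
        RneqW f F r m (p (i + k)) (q (i + k)) → RneqW f F r m (p i) (q i) := by
      intro i k
      induction k with
      | zero => intro h; simpa using h
      | succ k ih =>
        intro h
        apply ih
        have e1 : i + ((k+1 : ℕ) : ℤ) = (i + k) + 1 := by push_cast; ring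
        rw [e1] at h
        exact RneqW_step h (hpPath (i + k)) (hqPath (i + k)) (hpGood _) (hqGood _)
    by_cases hAllL : ∀ i : ℤ, LneqW f F r m (p i) (q i)
    · refine ⟨fun i => (p i, q i, true), fun i => ?_, ?_⟩
      · refine ⟨⟨hpGood i, hqGood i, (hplab i).trans (hqlab i).symm,
          fun _ => hAllL i, fun hcon => by simp at hcon⟩,
          hpPath i, hqPath i, rfl⟩
      · funext k
        exact hplab k
    · push_neg at hAllL
      obtain ⟨i0, hi0⟩ := hAllL
      have hAllR : ∀ i : ℤ, RneqW f F r m (p i) (q i) := by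
        intro i
        set n : ℕ := i0.natAbs + i.natAbs with hndef
        rcases hflag n with hL | hR
        · exact absurd (monoL _ _ (by omega) hL) hi0
        · have hk : (n:ℤ) = i + ((((n:ℤ) - i).toNat : ℕ) : ℤ) := by omega
          apply monoR i (((n:ℤ) - i).toNat)
          rw [← hk]
          exact hR
      refine ⟨fun i => (p i, q i, false), fun i => ?_, ?_⟩
      · refine ⟨⟨hpGood i, hqGood i, (hplab i).trans (hqlab i).symm,
          fun hcon => by simp at hcon, fun _ => hAllR i⟩,
          hpPath i, hqPath i, rfl⟩
      · funext k
        exact hplab k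
end

section
/- The subpattern poset of a countable d-dimensional subshift satisfies the ascending chain condition: for every sequence x_1 ≤ x_2 ≤ x_3 ≤ ⋯ of configurations of a countable subshift X (ordered by the subpattern preorder), there exists n such that x_i and x_j have exactly the same set of occurring finite patterns for all i, j ≥ n. -/
/-- Translation of a `d`-dimensional configuration. -/
def shiftD {S : Type*} {d : ℕ} (n : Fin d → ℤ) (x : (Fin d → ℤ) → S) : (Fin d → ℤ) → S :=
  fun m => x (n + m)

/-- A `d`-dimensional subshift: a closed translation-invariant set of configurations. -/
def IsSubshiftD {S : Type*} [TopologicalSpace S] {d : ℕ} (X : Set ((Fin d → ℤ) → S)) : Prop :=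
  IsClosed X ∧ ∀ n : Fin d → ℤ, shiftD n '' X = X

/-- `x ≤ y` in the `d`-dimensional subpattern preorder: every finite pattern occurring in `x`
occurs in `y`. -/
def patLEd {S : Type*} {d : ℕ} (x y : (Fin d → ℤ) → S) : Prop :=
  ∀ (D : Finset (Fin d → ℤ)) (n : Fin d → ℤ), ∃ n', ∀ m ∈ D, y (n' + m) = x (n + m)

section Aux

variable {S : Type*} {d : ℕ}

lemma patLEd_refl (x : (Fin d → ℤ) → S) : patLEd x x :=
  fun _ n => ⟨n, fun _ _ => rfl⟩

lemma patLEd_trans {x y z : (Fin d → ℤ) → S} (h1 : patLEd x y) (h2 : patLEd y z) :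
    patLEd x z := by
  intro D n
  obtain ⟨n', h1'⟩ := h1 D n
  obtain ⟨n'', h2'⟩ := h2 D n'
  exact ⟨n'', fun m hm => (h2' m hm).trans (h1' m hm)⟩

/-- Patterns of `shiftD k x` occur in `x`. -/
lemma patLEd_shift_left (k : Fin d → ℤ) (x : (Fin d → ℤ) → S) : patLEd (shiftD k x) x := by
  intro D n
  refine ⟨k + n, fun m _ => ?_⟩
  show x ((k + n) + m) = x (k + (n + m))
  rw [add_assoc]

lemma patLEd_of_le {x : ℕ → (Fin d → ℤ) → S} (hchain : ∀ n, patLEd (x n) (x (n + 1)))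
    {n m : ℕ} (h : n ≤ m) : patLEd (x n) (x m) := by
  induction m, h using Nat.le_induction with
  | base => exact patLEd_refl _
  | succ m _ ih => exact patLEd_trans ih (hchain m)

end Aux

/-- The subpattern poset of a countable `d`-dimensional subshift has the
ascending chain condition: every ascending chain is eventually constant (the configurations
eventually all have exactly the same patterns). -/
theorem countable_subshift_ACC {S : Type} [Fintype S] [TopologicalSpace S] [DiscreteTopology S]
    {d : ℕ} (hd : 1 ≤ d) (X : Set ((Fin d → ℤ) → S)) (hX : IsSubshiftD X) (hc : X.Countable)
    (x : ℕ → (Fin d → ℤ) → S) (hmem : ∀ n, x n ∈ X) (hchain : ∀ n, patLEd (x n) (x (n + 1))) :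
    ∃ N : ℕ, ∀ i j : ℕ, N ≤ i → N ≤ j → patLEd (x i) (x j) ∧ patLEd (x j) (x i) := by
  classical
  -- the union of the orbits of the `x n`, and its closure
  set O : Set ((Fin d → ℤ) → S) := {z | ∃ n k, z = shiftD k (x n)} with hO
  set Y : Set ((Fin d → ℤ) → S) := closure O with hYdef
  have hOX : O ⊆ X := by
    rintro z ⟨n, k, rfl⟩
    have : shiftD k (x n) ∈ shiftD k '' X := ⟨x n, hmem n, rfl⟩
    rwa [hX.2 k] at this
  have hYX : Y ⊆ X := closure_minimal hOX hX.1
  have hYclosed : IsClosed Y := isClosed_closure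
  -- key approximation lemma: any open set meeting `Y` contains a shift of `x n`
  -- with `n` arbitrarily large
  have approx : ∀ w ∈ Y, ∀ V : Set ((Fin d → ℤ) → S), IsOpen V → w ∈ V → ∀ n₀ : ℕ,
      ∃ n ≥ n₀, ∃ k, shiftD k (x n) ∈ V := by
    intro w hw V hV hwV n₀
    obtain ⟨I, u, hu, hsub⟩ := isOpen_pi_iff.mp hV w hwV
    -- the cylinder around `w` on `I`
    set Cyl : Set ((Fin d → ℤ) → S) := {z | ∀ i ∈ I, z i = w i} with hCyl
    have hCylOpen : IsOpen Cyl := by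
      have : Cyl = ⋂ i ∈ I, (fun z : (Fin d → ℤ) → S => z i) ⁻¹' {w i} := by
        ext z; simp [hCyl]
      rw [this]
      exact isOpen_biInter_finset fun i _ =>
        (continuous_apply i).isOpen_preimage _ (isOpen_discrete _)
    have hCylV : Cyl ⊆ V := by
      intro z hz
      apply hsub
      intro i hi
      rw [hz i hi]
      exact (hu i hi).2
    have hwCyl : w ∈ Cyl := fun i _ => rfl
    obtain ⟨z, hzCyl, hzO⟩ := mem_closure_iff.mp hw Cyl hCylOpen hwCyl
    obtain ⟨m, l, rfl⟩ := hzO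
    -- push up to `n := max m n₀`
    obtain ⟨l', hl'⟩ := patLEd_of_le hchain (le_max_left m n₀) I l
    refine ⟨max m n₀, le_max_right m n₀, l', hCylV ?_⟩
    intro i hi
    exact (hl' i hi).trans (hzCyl i hi)
  -- `Y` is a nonempty countable Baire space
  have hYcomp : CompactSpace ↥Y := isCompact_iff_compactSpace.mp hYclosed.isCompact
  have hYlc : LocallyCompactSpace ↥Y := inferInstance
  have hYbaire : BaireSpace ↥Y := inferInstance
  have hYcount : Countable ↥Y := (hc.mono hYX).to_subtype
  have hx0Y : (x 0) ∈ Y := by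
    apply subset_closure
    refine ⟨0, 0, ?_⟩
    funext m
    show x 0 m = x 0 (0 + m)
    rw [zero_add]
  have hYne : Nonempty ↥Y := ⟨⟨x 0, hx0Y⟩⟩
  -- transitive points
  set Transi : ((Fin d → ℤ) → S) → Prop := fun z => ∀ n, patLEd (x n) z with hTransi
  -- Main claim: some shift of some `x m` is transitive
  have main : ∃ m k, Transi (shiftD k (x m)) := by
    by_contra hcon
    push_neg at hcon
    -- the open dense sets "pattern of `x n` at `k` on `D` occurs"
    set U : Finset (Fin d → ℤ) × ℕ × (Fin d → ℤ) → Set ↥Y := fun p =>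
      {z : ↥Y | ∃ k', ∀ m ∈ p.1, (z : (Fin d → ℤ) → S) (k' + m) = x p.2.1 (p.2.2 + m)} with hU
    have hUopen : ∀ p, IsOpen (U p) := by
      rintro ⟨D, n, k⟩
      have : U (D, n, k) = Subtype.val ⁻¹'
          (⋃ k', ⋂ m ∈ D, (fun z : (Fin d → ℤ) → S => z (k' + m)) ⁻¹' {x n (k + m)}) := by
        ext z; simp [hU]
      rw [this]
      apply IsOpen.preimage continuous_subtype_val
      exact isOpen_iUnion fun k' => isOpen_biInter_finset fun m _ =>
        (continuous_apply _).isOpen_preimage _ (isOpen_discrete _)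
    have hUdense : ∀ p, Dense (U p) := by
      rintro ⟨D, n, k⟩
      rw [dense_iff_inter_open]
      rintro V' hV' ⟨w, hwV'⟩
      obtain ⟨V, hVopen, rfl⟩ := isOpen_induced_iff.mp hV'
      obtain ⟨m, hm, l, hzV⟩ := approx (w : (Fin d → ℤ) → S) w.2 V hVopen hwV' n
      have hzY : shiftD l (x m) ∈ Y := subset_closure ⟨m, l, rfl⟩
      refine ⟨⟨shiftD l (x m), hzY⟩, hzV, ?_⟩
      -- the pattern occurs in `shiftD l (x m)`
      obtain ⟨k'', hk''⟩ := patLEd_of_le hchain hm D k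
      refine ⟨k'' - l, fun mm hmm => ?_⟩
      show x m (l + ((k'' - l) + mm)) = x n (k + mm)
      rw [show l + ((k'' - l) + mm) = k'' + mm by abel]
      exact hk'' mm hmm
    -- the co-singleton sets at transitive points
    set W : ↥Y → Set ↥Y := fun z => {w : ↥Y | Transi (z : (Fin d → ℤ) → S) → w ≠ z} with hW
    have hWeq : ∀ z : ↥Y, Transi (z : (Fin d → ℤ) → S) → W z = {z}ᶜ := by
      intro z h
      ext w
      simp only [hW, Set.mem_setOf_eq, Set.mem_compl_iff, Set.mem_singleton_iff]
      exact ⟨fun hh => hh h, fun hh _ => hh⟩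
    have hWeq' : ∀ z : ↥Y, ¬ Transi (z : (Fin d → ℤ) → S) → W z = Set.univ := by
      intro z h
      ext w
      simp only [hW, Set.mem_setOf_eq, Set.mem_univ, iff_true]
      exact fun hh => absurd hh h
    have hWopen : ∀ z, IsOpen (W z) := by
      intro z
      by_cases h : Transi (z : (Fin d → ℤ) → S)
      · rw [hWeq z h]; exact isOpen_compl_singleton
      · rw [hWeq' z h]; exact isOpen_univ
    have hWdense : ∀ z, Dense (W z) := by
      intro z
      by_cases h : Transi (z : (Fin d → ℤ) → S)
      · rw [hWeq z h]
        -- `z` is not isolated in `Y`: otherwise `z` would be a shift of some `x m`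
        rw [dense_compl_singleton_iff_not_open]
        intro hzopen
        obtain ⟨V, hVopen, hVeq⟩ := isOpen_induced_iff.mp hzopen
        have hzV : (z : (Fin d → ℤ) → S) ∈ V := by
          have : z ∈ Subtype.val ⁻¹' V := by rw [hVeq]; rfl
          exact this
        obtain ⟨m, _, l, hmV⟩ := approx (z : (Fin d → ℤ) → S) z.2 V hVopen hzV 0
        have hmY : shiftD l (x m) ∈ Y := subset_closure ⟨m, l, rfl⟩
        have hmem' : (⟨shiftD l (x m), hmY⟩ : ↥Y) ∈ Subtype.val ⁻¹' V := hmV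
        rw [hVeq] at hmem'
        have heq : shiftD l (x m) = (z : (Fin d → ℤ) → S) :=
          congrArg Subtype.val hmem'
        exact hcon m l (heq ▸ h)
      · rw [hWeq' z h]; exact dense_univ
    -- apply the Baire category theorem
    set f : (Finset (Fin d → ℤ) × ℕ × (Fin d → ℤ)) ⊕ ↥Y → Set ↥Y :=
      fun i => Sum.elim U W i with hf
    have hfopen : ∀ i, IsOpen (f i) := by rintro (p | z); exacts [hUopen p, hWopen z]
    have hfdense : ∀ i, Dense (f i) := by rintro (p | z); exacts [hUdense p, hWdense z]
    obtain ⟨w, hw⟩ := (dense_iInter_of_isOpen hfopen hfdense).nonempty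
    have hwU : ∀ p, w ∈ U p := fun p => Set.mem_iInter.mp hw (Sum.inl p)
    have hwW : ∀ z, w ∈ W z := fun z => Set.mem_iInter.mp hw (Sum.inr z)
    have hwTrans : Transi (w : (Fin d → ℤ) → S) := fun n D k => hwU (D, n, k)
    exact (hwW w) hwTrans rfl
  -- conclude
  obtain ⟨m, k, hTy⟩ := main
  refine ⟨m, fun i j hi hj => ?_⟩
  have key : ∀ a b : ℕ, m ≤ b → patLEd (x a) (x b) := fun a b hb =>
    patLEd_trans (hTy a) (patLEd_trans (patLEd_shift_left k (x m)) (patLEd_of_le hchain hb))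
  exact ⟨key i j hj, key j i hi⟩
end

section
/- Let X ⊆ S^{Z^2} be a two-dimensional SFT defined by nearest-neighbor (Wang tile) constraints. If X is countable or southward deterministic, then X has the R property. -/
/-- Translation of a two-dimensional configuration. -/
def shift2 {S : Type*} (n : ℤ × ℤ) (x : ℤ × ℤ → S) : ℤ × ℤ → S := fun m => x (n + m)

/-- The pattern with domain `D` and content `p` occurs in `x`. -/
def occurs2 {S : Type*} (D : Finset (ℤ × ℤ)) (p : ℤ × ℤ → S) (x : ℤ × ℤ → S) : Prop :=
  ∃ n : ℤ × ℤ, ∀ m ∈ D, x (n + m) = p m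

/-- A two-dimensional subshift of finite type: the configurations in which no pattern from a
fixed finite set of forbidden finite patterns occurs. -/
def IsSFT2 {S : Type*} (X : Set (ℤ × ℤ → S)) : Prop :=
  ∃ F : Set (Finset (ℤ × ℤ) × (ℤ × ℤ → S)), F.Finite ∧
    X = {x | ∀ P ∈ F, ¬ occurs2 P.1 P.2 x}

/-- `x ≤ y` in the subpattern preorder: every finite pattern occurring in `x` occurs in `y`. -/
def patLE2 {S : Type*} (x y : ℤ × ℤ → S) : Prop :=
  ∀ (D : Finset (ℤ × ℤ)) (n : ℤ × ℤ), ∃ n' : ℤ × ℤ, ∀ m ∈ D, y (n' + m) = x (n + m)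

/-- `x < y` in the subpattern preorder. -/
def patLT2 {S : Type*} (x y : ℤ × ℤ → S) : Prop := patLE2 x y ∧ ¬ patLE2 y x

/-- The `i`-th row of a two-dimensional configuration. -/
def row {S : Type*} (x : ℤ × ℤ → S) (i : ℤ) : ℤ → S := fun j => x (j, i)

/-- The (horizontal) projective subdynamics of `X`: its set of rows at height `0`. -/
def PS2 {S : Type*} (X : Set (ℤ × ℤ → S)) : Set (ℤ → S) := (fun x => row x 0) '' X

/-- The shift orbit of a one-dimensional configuration. -/
def orbit1 {S : Type*} (y : ℤ → S) : Set (ℤ → S) := {z | ∃ n : ℤ, z = fun j => y (j + n)}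

/-- `X` is southward deterministic: two configurations of `X` agreeing on the upper half-plane
`{(a,b) : b ≥ 1}` are equal. -/
def SouthDet {S : Type*} (X : Set (ℤ × ℤ → S)) : Prop :=
  ∀ x ∈ X, ∀ y ∈ X, (∀ a b : ℤ, 1 ≤ b → x (a, b) = y (a, b)) → x = y

/-- The R property of a two-dimensional subshift: whenever a row content `y` repeats (up to a
shift) in a configuration with no occurrence of `y` strictly in between, the rows in between,
their number, and the shift are uniquely determined (rows are indexed from `1` to `k`). -/
def RProperty {S : Type*} (X : Set (ℤ × ℤ → S)) : Prop :=
  ∀ y ∈ PS2 X, ∃ (k : ℕ) (z : ℕ → ℤ → S), 1 ≤ k ∧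
    (∀ i, 1 ≤ i → i ≤ k → z i ∈ PS2 X) ∧
    z 1 = y ∧ z k ∈ orbit1 y ∧ (∀ i, 2 ≤ i → i ≤ k - 1 → z i ∉ orbit1 y) ∧
    ∀ x ∈ X, ∀ m n : ℤ, m < n → row x m ∈ orbit1 y → row x n ∈ orbit1 y →
      (∀ i : ℤ, m < i → i < n → row x i ∉ orbit1 y) →
      n - m + 1 = (k : ℤ) ∧
      ∃ t : ℤ, ∀ i : ℤ, m ≤ i → i ≤ n → row x i = fun l => z (1 + (i - m).toNat) (l + t)

/-- A two-dimensional SFT defined by nearest-neighbor (Wang tile) constraints: all forbidden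
patterns have domain `{(0,0),(1,0)}` or `{(0,0),(0,1)}`. -/
def IsNNSFT {S : Type*} (X : Set (ℤ × ℤ → S)) : Prop :=
  ∃ FH FV : Set (S × S),
    X = {x | ∀ m : ℤ × ℤ, (x m, x (m + (1, 0))) ∉ FH ∧ (x m, x (m + (0, 1))) ∉ FV}

namespace RPropAux
variable {S : Type}

def hshift {S : Type} (a : ℤ) (f : ℤ → S) : ℤ → S := fun j => f (j + a)

lemma hshift_mem_orbit1 (y : ℤ → S) (a : ℤ) : hshift a y ∈ orbit1 y := ⟨a, rfl⟩

lemma orbit1_hshift {y f : ℤ → S} (a : ℤ) (h : f ∈ orbit1 y) : hshift a f ∈ orbit1 y := by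
  obtain ⟨n, rfl⟩ := h
  exact ⟨a + n, by funext j; simp [hshift, add_assoc]⟩

lemma orbit1_hshift_iff {y f : ℤ → S} (a : ℤ) : hshift a f ∈ orbit1 y ↔ f ∈ orbit1 y := by
  constructor
  · intro h
    have hf : f = hshift (-a) (hshift a f) := by funext j; simp [hshift]
    rw [hf]; exact orbit1_hshift _ h
  · exact orbit1_hshift a

lemma hshift_injective (a : ℤ) : Function.Injective (hshift (S := S) a) := by
  intro f g h
  funext j
  have := congrFun h (j - a)
  simpa [hshift] using this

def Legal (FH FV : Set (S × S)) (x : ℤ × ℤ → S) : Prop :=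
  ∀ m : ℤ × ℤ, (x m, x (m + (1, 0))) ∉ FH ∧ (x m, x (m + (0, 1))) ∉ FV

lemma legal_shift {FH FV : Set (S × S)} {x : ℤ × ℤ → S} (h : Legal FH FV x) (n : ℤ × ℤ) :
    Legal FH FV (shift2 n x) := by
  intro m
  have := h (n + m)
  simpa [shift2, add_assoc] using this

lemma legal_of_rows {FH FV : Set (S × S)} (w : ℤ × ℤ → S)
    (h : ∀ b : ℤ, ∃ g s r, Legal FH FV g ∧ (∀ j, w (j, b) = g (j + s, r)) ∧
      (∀ j, w (j, b + 1) = g (j + s, r + 1))) :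
    Legal FH FV w := by
  rintro ⟨a, b⟩
  obtain ⟨g, s, r, hg, h0, h1⟩ := h b
  constructor
  · have h2 : w ((a, b) + (1, 0)) = g ((a + s, r) + (1, 0)) := by
      show w (a + 1, b + 0) = g (a + s + 1, r + 0)
      rw [add_zero, add_zero, h0 (a + 1)]
      have : a + 1 + s = a + s + 1 := by ring
      rw [this]
    have h3 : w (a, b) = g (a + s, r) := h0 a
    rw [h3, h2]
    exact (hg (a + s, r)).1
  · have h2 : w ((a, b) + (0, 1)) = g ((a + s, r) + (0, 1)) := by
      show w (a + 0, b + 1) = g (a + s + 0, r + 1)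
      rw [add_zero, add_zero, h1 a]
    have h3 : w (a, b) = g (a + s, r) := h0 a
    rw [h3, h2]
    exact (hg (a + s, r)).2

lemma row_mem_PS2 {FH FV : Set (S × S)} {X : Set (ℤ × ℤ → S)}
    (hXeq : X = {x | Legal FH FV x}) {x : ℤ × ℤ → S} (hx : x ∈ X) (i : ℤ) :
    row x i ∈ PS2 X := by
  refine ⟨shift2 (0, i) x, ?_, ?_⟩
  · rw [hXeq] at hx ⊢
    exact legal_shift hx _
  · funext j
    simp [row, shift2]

lemma gap_normalize {FH FV : Set (S × S)} {X : Set (ℤ × ℤ → S)}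
    (hXeq : X = {x | Legal FH FV x}) {y : ℤ → S} {x : ℤ × ℤ → S} {m n : ℤ}
    (hx : x ∈ X) (hmn : m < n) (hm : row x m ∈ orbit1 y) (hn : row x n ∈ orbit1 y)
    (hint : ∀ i, m < i → i < n → row x i ∉ orbit1 y) :
    ∃ (x' : ℤ × ℤ → S) (u : ℤ), x' ∈ X ∧ row x' 0 = y ∧ row x' (n - m) ∈ orbit1 y ∧
      (∀ i, 0 < i → i < n - m → row x' i ∉ orbit1 y) ∧
      (∀ i, row x (m + i) = hshift u (row x' i)) := by
  obtain ⟨u, hu⟩ := hm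
  have hrel : ∀ i, row x (m + i) = hshift u (row (shift2 (-u, m) x) i) := by
    intro i
    funext j
    show x (j, m + i) = x ((-u, m) + (j + u, i))
    have : (-u, m) + (j + u, i) = ((j : ℤ), m + i) := by
      simp [Prod.ext_iff]; try ring
    rw [this]
  refine ⟨shift2 (-u, m) x, u, ?_, ?_, ?_, ?_, hrel⟩
  · rw [hXeq] at hx ⊢
    exact legal_shift hx _
  · funext j
    show x ((-u, m) + (j, 0)) = y j
    have : (-u, m) + (j, 0) = ((j - u : ℤ), m) := by simp [Prod.ext_iff]; try ring
    rw [this]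
    have := congrFun hu (j - u)
    simp only [row] at this
    rw [this]
    congr 1; ring
  · obtain ⟨v, hv⟩ := hn
    refine ⟨v - u, ?_⟩
    funext j
    show x ((-u, m) + (j, n - m)) = y (j + (v - u))
    have : (-u, m) + (j, n - m) = ((j - u : ℤ), n) := by simp [Prod.ext_iff]; try ring
    rw [this]
    have := congrFun hv (j - u)
    simp only [row] at this
    rw [this]
    congr 1; ring
  · intro i hi1 hi2 hor
    have : row x (m + i) ∈ orbit1 y := by
      rw [hrel i]
      exact orbit1_hshift u hor
    exact hint (m + i) (by omega) (by omega) this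

/-- One-row downward determinism from south-determinism. -/
lemma det_below {FH FV : Set (S × S)} {X : Set (ℤ × ℤ → S)}
    (hXeq : X = {x | Legal FH FV x}) (hdet : SouthDet X)
    {x x' : ℤ × ℤ → S} (hx : x ∈ X) (hx' : x' ∈ X) (hrow : row x 0 = row x' 0) :
    ∀ b : ℤ, b ≤ 0 → row x b = row x' b := by
  set w : ℤ × ℤ → S := fun p => if 0 ≤ p.2 then x p else x' p with hw
  have hwX : w ∈ X := by
    rw [hXeq]
    refine legal_of_rows w ?_
    intro b
    rcases le_or_gt 0 b with hb | hb
    · refine ⟨x, 0, b, ?_, ?_, ?_⟩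
      · rw [hXeq] at hx; exact hx
      · intro j; simp [hw, hb]
      · intro j
        have : (0:ℤ) ≤ b + 1 := by omega
        simp [hw, hb, this]
    · rcases eq_or_lt_of_le (show b + 1 ≤ 0 by omega) with hb1 | hb1
      · -- b = -1
        refine ⟨x', 0, b, ?_, ?_, ?_⟩
        · rw [hXeq] at hx'; exact hx'
        · intro j; simp [hw, not_le.mpr hb]
        · intro j
          have h0 : (0:ℤ) ≤ b + 1 := by omega
          have hb0 : b + 1 = 0 := hb1
          simp only [hw, h0, if_pos, add_zero]
          rw [hb0]
          have := congrFun hrow (j + 0)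
          simpa [row] using this
      · refine ⟨x', 0, b, ?_, ?_, ?_⟩
        · rw [hXeq] at hx'; exact hx'
        · intro j; simp [hw, not_le.mpr hb]
        · intro j; simp [hw, not_le.mpr hb1]
  have hxw : x = w := by
    refine hdet x hx w hwX ?_
    intro a b hb
    simp [hw, show (0:ℤ) ≤ b by omega]
  intro b hb
  rcases eq_or_lt_of_le hb with hb0 | hb0
  · rw [show b = 0 from hb0]; exact hrow
  · funext j
    have := congrFun hxw (j, b)
    rw [row, row, this]
    simp [hw, not_le.mpr hb0]

lemma row_shift2v {x : ℤ × ℤ → S} (h i : ℤ) : row (shift2 (0, h) x) i = row x (h + i) := by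
  funext j
  show x ((0, h) + (j, i)) = x (j, h + i)
  congr 1
  simp

lemma det_below_at {FH FV : Set (S × S)} {X : Set (ℤ × ℤ → S)}
    (hXeq : X = {x | Legal FH FV x}) (hdet : SouthDet X)
    {x x' : ℤ × ℤ → S} {h : ℤ} (hx : x ∈ X) (hx' : x' ∈ X) (hrow : row x h = row x' h) :
    ∀ b : ℤ, b ≤ 0 → row x (h + b) = row x' (h + b) := by
  intro b hb
  have hX1 : shift2 (0, h) x ∈ X := by rw [hXeq] at hx ⊢; exact legal_shift hx _
  have hX2 : shift2 (0, h) x' ∈ X := by rw [hXeq] at hx' ⊢; exact legal_shift hx' _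
  have h0 : row (shift2 (0, h) x) 0 = row (shift2 (0, h) x') 0 := by
    rw [row_shift2v, row_shift2v, add_zero]
    exact hrow
  have := det_below hXeq hdet hX1 hX2 h0 b hb
  rwa [row_shift2v, row_shift2v] at this

lemma normgap_unique_of_det {FH FV : Set (S × S)} {X : Set (ℤ × ℤ → S)}
    (hXeq : X = {x | Legal FH FV x}) (hdet : SouthDet X)
    {y : ℤ → S} {x0 xt : ℤ × ℤ → S} {n0 nt : ℤ}
    (hx0 : x0 ∈ X) (hn0 : 0 < n0) (hb0 : row x0 0 = y) (ht0 : row x0 n0 ∈ orbit1 y)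
    (hi0 : ∀ i, 0 < i → i < n0 → row x0 i ∉ orbit1 y)
    (hxt : xt ∈ X) (hnt : 0 < nt) (hbt : row xt 0 = y) (htt : row xt nt ∈ orbit1 y)
    (hit : ∀ i, 0 < i → i < nt → row xt i ∉ orbit1 y) :
    nt = n0 ∧ ∃ t, ∀ i, 0 ≤ i → i ≤ n0 → row xt i = hshift t (row x0 i) := by
  obtain ⟨a, ha⟩ := ht0
  obtain ⟨b, hb⟩ := htt
  set c : ℤ × ℤ → S := shift2 (b - a, n0 - nt) x0 with hc
  have hcX : c ∈ X := by
    rw [hXeq] at hx0 ⊢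
    exact legal_shift hx0 _
  have hcrow : ∀ i : ℤ, row c i = hshift (b - a) (row x0 (n0 - nt + i)) := by
    intro i
    funext j
    show x0 ((b - a, n0 - nt) + (j, i)) = x0 (j + (b - a), n0 - nt + i)
    congr 1
    simp [Prod.ext_iff]; try ring
  have hctop : row c nt = row xt nt := by
    rw [hcrow nt, hb]
    funext j
    show x0 (j + (b - a), n0 - nt + nt) = y (j + b)
    have h1 : n0 - nt + nt = n0 := by ring
    rw [h1]
    have := congrFun ha (j + (b - a))
    simp only [row] at this
    rw [this]
    congr 1; ring
  have hbelow : ∀ i : ℤ, i ≤ nt → row c i = row xt i := by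
    intro i hi
    have := det_below_at hXeq hdet hcX hxt hctop (i - nt) (by omega)
    simpa [show nt + (i - nt) = i by ring] using this
  have hnteq : nt = n0 := by
    rcases lt_trichotomy nt n0 with hlt | heq | hgt
    · exfalso
      have h0 : row c 0 = row xt 0 := hbelow 0 (by omega)
      rw [hbt, hcrow 0, add_zero] at h0
      have : row x0 (n0 - nt) ∈ orbit1 y := by
        rw [← orbit1_hshift_iff (b - a), h0]
        exact ⟨0, by funext j; simp⟩
      exact hi0 (n0 - nt) (by omega) (by omega) this
    · exact heq
    · exfalso
      have h0 : row c (nt - n0) = row xt (nt - n0) := hbelow _ (by omega)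
      rw [hcrow] at h0
      have harg : n0 - nt + (nt - n0) = 0 := by ring
      rw [harg, hb0] at h0
      have : row xt (nt - n0) ∈ orbit1 y := by
        rw [← h0]
        exact orbit1_hshift _ ⟨0, by funext j; simp⟩
      exact hit (nt - n0) (by omega) (by omega) this
  refine ⟨hnteq, b - a, ?_⟩
  intro i hi1 hi2
  have h0 := hbelow i (by omega)
  rw [hcrow, hnteq] at h0
  have harg : n0 - n0 + i = i := by ring
  rw [harg] at h0
  exact h0.symm

/-! ### Countable case: the stacking construction -/

open Classical in
lemma not_countable_funNatBool : ¬ Countable (ℕ → Bool) := by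
  intro h
  have hinj : Function.Injective (fun (s : Set ℕ) => fun n => decide (n ∈ s)) := by
    intro s t h
    ext n
    have := congrFun h n
    simp only [decide_eq_decide] at this
    exact this
  have : Countable (Set ℕ) := hinj.countable
  obtain ⟨f, hf⟩ := (countable_iff_exists_injective (Set ℕ)).mp this
  exact Function.cantor_injective f hf

def CC (x0 xt : ℤ × ℤ → S) (b : Bool) : ℤ × ℤ → S := if b then xt else x0
def LL (n0 nt : ℤ) (b : Bool) : ℤ := if b then nt else n0
def AA (α β : ℤ) (b : Bool) : ℤ := if b then β else α

def Hp (n0 nt : ℤ) (ε : ℕ → Bool) : ℕ → ℤ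
  | 0 => 0
  | i + 1 => Hp n0 nt ε i + LL n0 nt (ε i)

def Tp (α β : ℤ) (ε : ℕ → Bool) : ℕ → ℤ
  | 0 => 0
  | i + 1 => Tp α β ε i + AA α β (ε i)

def idx (n0 nt : ℤ) (ε : ℕ → Bool) (h : ℤ) : ℕ :=
  Nat.findGreatest (fun i => Hp n0 nt ε i ≤ h) h.toNat

def Wcfg (x0 xt : ℤ × ℤ → S) (n0 nt α β : ℤ) (ε : ℕ → Bool) : ℤ × ℤ → S :=
  fun p =>
    if p.2 < 0 then x0 (p.1 + α * (p.2 / n0), p.2 % n0)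
    else CC x0 xt (ε (idx n0 nt ε p.2))
      (p.1 + Tp α β ε (idx n0 nt ε p.2), p.2 - Hp n0 nt ε (idx n0 nt ε p.2))

section Wlemmas

variable {n0 nt α β : ℤ} {ε ε' : ℕ → Bool}

lemma LL_pos (hn0 : 0 < n0) (hnt : 0 < nt) (b : Bool) : 0 < LL n0 nt b := by
  cases b <;> simpa [LL]

lemma Hp_succ (i : ℕ) : Hp n0 nt ε (i + 1) = Hp n0 nt ε i + LL n0 nt (ε i) := rfl

lemma Hp_le_mono (hn0 : 0 < n0) (hnt : 0 < nt) {i j : ℕ} (hij : i ≤ j) :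
    Hp n0 nt ε i ≤ Hp n0 nt ε j := by
  induction j with
  | zero => simp_all
  | succ j ih =>
    rcases Nat.lt_succ_iff_lt_or_eq.mp (Nat.lt_succ_of_le hij) with h | h
    · have := ih (by omega)
      have := LL_pos hn0 hnt (ε j)
      rw [Hp_succ]; omega
    · subst h; rfl

lemma le_Hp (hn0 : 0 < n0) (hnt : 0 < nt) (i : ℕ) : (i : ℤ) ≤ Hp n0 nt ε i := by
  induction i with
  | zero => simp [Hp]
  | succ i ih =>
    have := LL_pos hn0 hnt (ε i)
    rw [Hp_succ]
    push_cast
    omega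

lemma Hp_nonneg (hn0 : 0 < n0) (hnt : 0 < nt) (i : ℕ) : 0 ≤ Hp n0 nt ε i :=
  le_trans (by positivity) (le_Hp hn0 hnt i)

lemma idx_spec (hn0 : 0 < n0) (hnt : 0 < nt) {h : ℤ} (hh : 0 ≤ h) :
    Hp n0 nt ε (idx n0 nt ε h) ≤ h ∧ h < Hp n0 nt ε (idx n0 nt ε h + 1) := by
  constructor
  · exact Nat.findGreatest_spec (P := fun i => Hp n0 nt ε i ≤ h) (Nat.zero_le _)
      (show Hp n0 nt ε 0 ≤ h by simpa [Hp] using hh)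
  · by_contra hcon
    push_neg at hcon
    have h1 : ((idx n0 nt ε h + 1 : ℕ) : ℤ) ≤ h :=
      le_trans (le_Hp hn0 hnt _) hcon
    have h2 : idx n0 nt ε h + 1 ≤ h.toNat := by
      omega
    exact Nat.findGreatest_is_greatest (P := fun i => Hp n0 nt ε i ≤ h) (Nat.lt_succ_self _) h2 hcon

lemma idx_eq (hn0 : 0 < n0) (hnt : 0 < nt) {h : ℤ} (hh : 0 ≤ h) {i : ℕ}
    (h1 : Hp n0 nt ε i ≤ h) (h2 : h < Hp n0 nt ε (i + 1)) : idx n0 nt ε h = i := by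
  obtain ⟨g1, g2⟩ := idx_spec hn0 hnt (ε := ε) hh
  by_contra hne
  rcases Nat.lt_or_ge (idx n0 nt ε h) i with hlt | hge
  · have : Hp n0 nt ε (idx n0 nt ε h + 1) ≤ Hp n0 nt ε i := Hp_le_mono hn0 hnt (by omega)
    omega
  · have hgt : i < idx n0 nt ε h := by omega
    have : Hp n0 nt ε (i + 1) ≤ Hp n0 nt ε (idx n0 nt ε h) := Hp_le_mono hn0 hnt (by omega)
    omega

lemma Hp_congr {i : ℕ} (h : ∀ j < i, ε j = ε' j) : Hp n0 nt ε i = Hp n0 nt ε' i := by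
  induction i with
  | zero => rfl
  | succ i ih =>
    rw [Hp_succ, Hp_succ, ih (fun j hj => h j (by omega)), h i (by omega)]

lemma Tp_congr {i : ℕ} (h : ∀ j < i, ε j = ε' j) : Tp α β ε i = Tp α β ε' i := by
  induction i with
  | zero => rfl
  | succ i ih =>
    show Tp α β ε i + AA α β (ε i) = Tp α β ε' i + AA α β (ε' i)
    rw [ih (fun j hj => h j (by omega)), h i (by omega)]

end Wlemmas

lemma euclid_unique {a n0 q r : ℤ} (h0 : 0 < n0) (hq : a = n0 * q + r) (h1 : 0 ≤ r)
    (h2 : r < n0) : a / n0 = q ∧ a % n0 = r := by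
  subst hq
  constructor
  · rw [add_comm, Int.add_mul_ediv_left _ _ (by omega : n0 ≠ 0), Int.ediv_eq_zero_of_lt h1 h2]
    ring
  · rw [add_comm, Int.add_mul_emod_self_left, Int.emod_eq_of_lt h1 h2]

section Wmain

variable {FH FV : Set (S × S)} {x0 xt : ℤ × ℤ → S} {n0 nt α β : ℤ} {y : ℤ → S} {ε : ℕ → Bool}

lemma CC_legal (hx0 : Legal FH FV x0) (hxt : Legal FH FV xt) (b : Bool) :
    Legal FH FV (CC x0 xt b) := by cases b <;> simpa [CC]

lemma Wcfg_block_lt (hn0 : 0 < n0) (hnt : 0 < nt) (i : ℕ) (r : ℤ) (hr0 : 0 ≤ r)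
    (hrL : r < LL n0 nt (ε i)) :
    row (Wcfg x0 xt n0 nt α β ε) (Hp n0 nt ε i + r) =
      fun j => CC x0 xt (ε i) (j + Tp α β ε i, r) := by
  have hnn : 0 ≤ Hp n0 nt ε i + r := by
    have := Hp_nonneg (ε := ε) hn0 hnt i
    omega
  have hidx : idx n0 nt ε (Hp n0 nt ε i + r) = i := by
    refine idx_eq hn0 hnt hnn (by omega) ?_
    rw [Hp_succ]
    omega
  funext j
  simp only [row, Wcfg, hidx, add_sub_cancel_left]
  rw [if_neg (by omega : ¬ Hp n0 nt ε i + r < 0)]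

lemma Wcfg_block (hn0 : 0 < n0) (hnt : 0 < nt)
    (hcb : ∀ b, row (CC x0 xt b) 0 = y)
    (hct : ∀ b, row (CC x0 xt b) (LL n0 nt b) = hshift (AA α β b) y)
    (i : ℕ) (r : ℤ) (hr0 : 0 ≤ r) (hrL : r ≤ LL n0 nt (ε i)) :
    row (Wcfg x0 xt n0 nt α β ε) (Hp n0 nt ε i + r) =
      fun j => CC x0 xt (ε i) (j + Tp α β ε i, r) := by
  rcases lt_or_eq_of_le hrL with hlt | heq
  · exact Wcfg_block_lt hn0 hnt i r hr0 hlt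
  · have h1 : Hp n0 nt ε i + r = Hp n0 nt ε (i + 1) + 0 := by
      rw [Hp_succ, heq]; ring
    rw [h1, Wcfg_block_lt hn0 hnt (i + 1) 0 le_rfl (LL_pos hn0 hnt _)]
    funext j
    have e1 : CC x0 xt (ε (i + 1)) (j + Tp α β ε (i + 1), 0) = y (j + Tp α β ε (i + 1)) :=
      congrFun (hcb (ε (i + 1))) _
    have e2 : CC x0 xt (ε i) (j + Tp α β ε i, r) = y (j + Tp α β ε i + AA α β (ε i)) := by
      rw [heq]
      exact congrFun (hct (ε i)) _
    rw [e1, e2]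
    have : Tp α β ε (i + 1) = Tp α β ε i + AA α β (ε i) := rfl
    rw [this]
    ring_nf

lemma Wcfg_legal (hx0 : Legal FH FV x0) (hxt : Legal FH FV xt) (hn0 : 0 < n0) (hnt : 0 < nt)
    (hcb : ∀ b, row (CC x0 xt b) 0 = y)
    (hct : ∀ b, row (CC x0 xt b) (LL n0 nt b) = hshift (AA α β b) y) :
    Legal FH FV (Wcfg x0 xt n0 nt α β ε) := by
  have hx00 : ∀ j : ℤ, x0 (j, 0) = y j := fun j => by
    have := congrFun (hcb false) j
    simpa [CC, row] using this
  have hx0n : ∀ j : ℤ, x0 (j, n0) = y (j + α) := fun j => by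
    have := congrFun (hct false) j
    simpa [CC, LL, AA, row, hshift] using this
  have hCb : ∀ (b : Bool) (j : ℤ), CC x0 xt b (j, 0) = y j := fun b j => by
    have := congrFun (hcb b) j
    simpa [row] using this
  have hCt : ∀ (b : Bool) (j : ℤ), CC x0 xt b (j, LL n0 nt b) = y (j + AA α β b) := fun b j => by
    have := congrFun (hct b) j
    simpa [row, hshift] using this
  refine legal_of_rows _ ?_
  intro b
  rcases lt_trichotomy b (-1) with hb | hb | hb
  · -- b < -1
    have hq := Int.mul_ediv_add_emod b n0
    have hr0 : 0 ≤ b % n0 := Int.emod_nonneg b (by omega)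
    have hrn : b % n0 < n0 := Int.emod_lt_of_pos b hn0
    refine ⟨x0, α * (b / n0), b % n0, hx0, ?_, ?_⟩
    · intro j
      simp [Wcfg, show b < 0 by omega]
    · intro j
      rcases lt_or_eq_of_le (show b % n0 + 1 ≤ n0 by omega) with hlt | heq
      · have hdm : (b + 1) / n0 = b / n0 ∧ (b + 1) % n0 = b % n0 + 1 :=
          euclid_unique hn0 (by omega) (by omega) hlt
        simp [Wcfg, show b + 1 < 0 by omega, hdm.1, hdm.2]
      · have hdm : (b + 1) / n0 = b / n0 + 1 ∧ (b + 1) % n0 = 0 :=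
          euclid_unique hn0 (by rw [mul_add]; omega) le_rfl hn0
        have hlhs : Wcfg x0 xt n0 nt α β ε (j, b + 1) = y (j + α * (b / n0 + 1)) := by
          simp only [Wcfg, if_pos (show b + 1 < 0 by omega), hdm.1, hdm.2]
          exact hx00 _
        rw [hlhs, heq, hx0n]
        congr 1
        ring
  · -- b = -1
    subst hb
    have hdm : (-1 : ℤ) / n0 = -1 ∧ (-1 : ℤ) % n0 = n0 - 1 :=
      euclid_unique hn0 (by ring) (by omega) (by omega)
    refine ⟨x0, α * (-1), n0 - 1, hx0, ?_, ?_⟩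
    · intro j
      simp [Wcfg, show (-1 : ℤ) < 0 by omega, hdm.1, hdm.2]
    · intro j
      have h10 : (-1 : ℤ) + 1 = 0 := by ring
      rw [h10]
      have hidx0 : idx n0 nt ε 0 = 0 := by
        refine idx_eq hn0 hnt le_rfl (by simp [Hp]) ?_
        rw [Hp_succ]
        have := LL_pos hn0 hnt (ε 0)
        simp [Hp]
        omega
      have hlhs : Wcfg x0 xt n0 nt α β ε (j, 0) = y j := by
        simp only [Wcfg, show ¬ (0 : ℤ) < 0 by omega, if_neg]
        rw [hidx0]
        have : Tp α β ε 0 = 0 := rfl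
        rw [this]
        have : Hp n0 nt ε 0 = 0 := rfl
        rw [this]
        simpa using hCb (ε 0) (j + 0)
      rw [hlhs]
      have h2 : n0 - 1 + 1 = n0 := by ring
      rw [h2, hx0n]
      congr 1
      ring
  · -- b ≥ 0
    have hb0 : (0 : ℤ) ≤ b := by omega
    obtain ⟨g1, g2⟩ := idx_spec (ε := ε) hn0 hnt hb0
    refine ⟨CC x0 xt (ε (idx n0 nt ε b)), Tp α β ε (idx n0 nt ε b),
      b - Hp n0 nt ε (idx n0 nt ε b), CC_legal hx0 hxt _, ?_, ?_⟩
    · intro j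
      simp [Wcfg, not_lt.mpr hb0]
    · intro j
      rcases lt_or_eq_of_le (show b + 1 ≤ Hp n0 nt ε (idx n0 nt ε b + 1) by omega) with hlt | heq
      · have hidx : idx n0 nt ε (b + 1) = idx n0 nt ε b :=
          idx_eq hn0 hnt (by omega) (by omega) hlt
        have : b + 1 - Hp n0 nt ε (idx n0 nt ε b) = b - Hp n0 nt ε (idx n0 nt ε b) + 1 := by
          ring
        simp only [Wcfg, if_neg (show ¬ b + 1 < 0 by omega), hidx, this]
      · have hidx : idx n0 nt ε (b + 1) = idx n0 nt ε b + 1 := by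
          refine idx_eq hn0 hnt (by omega) (le_of_eq heq.symm) ?_
          rw [Hp_succ (i := idx n0 nt ε b + 1)]
          have := LL_pos hn0 hnt (ε (idx n0 nt ε b + 1))
          omega
        have hlhs : Wcfg x0 xt n0 nt α β ε (j, b + 1) =
            y (j + Tp α β ε (idx n0 nt ε b + 1)) := by
          simp only [Wcfg, if_neg (show ¬ b + 1 < 0 by omega), hidx]
          rw [show b + 1 - Hp n0 nt ε (idx n0 nt ε b + 1) = 0 by omega]
          exact hCb _ _
        rw [hlhs]
        have hrr : b - Hp n0 nt ε (idx n0 nt ε b) + 1 = LL n0 nt (ε (idx n0 nt ε b)) := by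
          have := Hp_succ (ε := ε) (n0 := n0) (nt := nt) (idx n0 nt ε b)
          omega
        rw [hrr, hCt]
        have h3 : Tp α β ε (idx n0 nt ε b + 1) =
            Tp α β ε (idx n0 nt ε b) + AA α β (ε (idx n0 nt ε b)) := rfl
        rw [h3]
        congr 1
        ring

end Wmain

lemma normgap_unique_of_countable {FH FV : Set (S × S)} {X : Set (ℤ × ℤ → S)}
    (hXeq : X = {x | Legal FH FV x}) (hcnt : X.Countable)
    {y : ℤ → S} {x0 xt : ℤ × ℤ → S} {n0 nt : ℤ}
    (hx0 : x0 ∈ X) (hn0 : 0 < n0) (hb0 : row x0 0 = y) (ht0 : row x0 n0 ∈ orbit1 y)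
    (hi0 : ∀ i, 0 < i → i < n0 → row x0 i ∉ orbit1 y)
    (hxt : xt ∈ X) (hnt : 0 < nt) (hbt : row xt 0 = y) (htt : row xt nt ∈ orbit1 y)
    (hit : ∀ i, 0 < i → i < nt → row xt i ∉ orbit1 y) :
    nt = n0 ∧ ∃ t, ∀ i, 0 ≤ i → i ≤ n0 → row xt i = hshift t (row x0 i) := by
  classical
  obtain ⟨α, hα⟩ := ht0
  obtain ⟨β, hβ⟩ := htt
  by_contra hne
  have hx0' : Legal FH FV x0 := by rw [hXeq] at hx0; exact hx0
  have hxt' : Legal FH FV xt := by rw [hXeq] at hxt; exact hxt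
  have hcb : ∀ b : Bool, row (CC x0 xt b) 0 = y := by
    intro b; cases b
    · simpa [CC] using hb0
    · simpa [CC] using hbt
  have hct : ∀ b : Bool, row (CC x0 xt b) (LL n0 nt b) = hshift (AA α β b) y := by
    intro b; cases b
    · exact hα
    · exact hβ
  have hcint : ∀ (b : Bool) (r : ℤ), 0 < r → r < LL n0 nt b →
      row (CC x0 xt b) r ∉ orbit1 y := by
    intro b r h1 h2
    cases b
    · simp only [CC, Bool.false_eq_true, if_false] at h2 ⊢
      exact hi0 r h1 (by simpa [LL] using h2)
    · simp only [CC, if_true] at h2 ⊢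
      exact hit r h1 (by simpa [LL] using h2)
  have hLpos : ∀ b, 0 < LL n0 nt b := LL_pos hn0 hnt
  set F : (ℕ → Bool) → (ℤ × ℤ → S) := fun ε => Wcfg x0 xt n0 nt α β ε with hF
  have hFX : ∀ ε, F ε ∈ X := by
    intro ε
    rw [hXeq]
    exact Wcfg_legal hx0' hxt' hn0 hnt hcb hct
  have key : ∀ ε ε' : ℕ → Bool, ∀ i : ℕ, Hp n0 nt ε i = Hp n0 nt ε' i →
      LL n0 nt (ε i) < LL n0 nt (ε' i) → F ε ≠ F ε' := by
    intro ε ε' i hH hL hEq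
    have h1 : row (F ε) (Hp n0 nt ε i + LL n0 nt (ε i)) ∈ orbit1 y := by
      rw [show F ε = Wcfg x0 xt n0 nt α β ε from rfl,
        Wcfg_block hn0 hnt hcb hct i _ (le_of_lt (hLpos _)) le_rfl]
      have e : (fun j => CC x0 xt (ε i) (j + Tp α β ε i, LL n0 nt (ε i))) =
          hshift (Tp α β ε i) (row (CC x0 xt (ε i)) (LL n0 nt (ε i))) := rfl
      rw [e, hct]
      exact orbit1_hshift _ (hshift_mem_orbit1 y _)
    have h2 : row (F ε') (Hp n0 nt ε i + LL n0 nt (ε i)) ∉ orbit1 y := by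
      rw [hH, show F ε' = Wcfg x0 xt n0 nt α β ε' from rfl,
        Wcfg_block hn0 hnt hcb hct i _ (le_of_lt (hLpos _)) (le_of_lt hL)]
      have e : (fun j => CC x0 xt (ε' i) (j + Tp α β ε' i, LL n0 nt (ε i))) =
          hshift (Tp α β ε' i) (row (CC x0 xt (ε' i)) (LL n0 nt (ε i))) := rfl
      rw [e, orbit1_hshift_iff]
      exact hcint (ε' i) _ (hLpos _) hL
    rw [hEq] at h1
    exact h2 h1
  have hFinj : Function.Injective F := by
    intro ε ε' hEq
    by_contra hdiff
    have hex : ∃ i, ε i ≠ ε' i := by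
      by_contra hc; push_neg at hc; exact hdiff (funext hc)
    have hless : ∀ j < Nat.find hex, ε j = ε' j :=
      fun j hj => not_not.mp (Nat.find_min hex hj)
    set i := Nat.find hex with hi
    have hH : Hp n0 nt ε i = Hp n0 nt ε' i := Hp_congr hless
    have hT : Tp α β ε i = Tp α β ε' i := Tp_congr hless
    have hbb : ε i ≠ ε' i := Nat.find_spec hex
    rcases lt_trichotomy (LL n0 nt (ε i)) (LL n0 nt (ε' i)) with hL | hL | hL
    · exact key ε ε' i hH hL hEq
    · have hEqRows : ∀ r : ℤ, 0 ≤ r → r ≤ LL n0 nt (ε i) →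
          row (CC x0 xt (ε i)) r = row (CC x0 xt (ε' i)) r := by
        intro r h0 h1
        have e1 := Wcfg_block (ε := ε) (x0 := x0) (xt := xt) (α := α) (β := β)
          hn0 hnt hcb hct i r h0 h1
        have e2 := Wcfg_block (ε := ε') (x0 := x0) (xt := xt) (α := α) (β := β)
          hn0 hnt hcb hct i r h0 (by omega)
        have e3 : (fun j => CC x0 xt (ε i) (j + Tp α β ε i, r)) =
            fun j => CC x0 xt (ε' i) (j + Tp α β ε' i, r) := by
          rw [← e1, ← e2, ← hH]
          show row (F ε) _ = row (F ε') _
          rw [hEq]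
        funext j
        have := congrFun e3 (j - Tp α β ε i)
        rw [← hT] at this
        simpa [row, sub_add_cancel] using this
      have hfin : nt = n0 ∧ ∀ r : ℤ, 0 ≤ r → r ≤ n0 → row xt r = row x0 r := by
        cases hbε : ε i
        · have hbε' : ε' i = true := by
            cases hbε'' : ε' i
            · exfalso; apply hbb; rw [hbε, hbε'']
            · rfl
          rw [hbε, hbε'] at hL hEqRows
          refine ⟨by simpa [LL] using hL.symm, ?_⟩
          intro r h0 h1
          have := hEqRows r h0 (by simpa [LL] using h1)
          simpa [CC] using this.symm
        · have hbε' : ε' i = false := by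
            cases hbε'' : ε' i
            · rfl
            · exfalso; apply hbb; rw [hbε, hbε'']
          rw [hbε, hbε'] at hL hEqRows
          refine ⟨by simpa [LL] using hL, ?_⟩
          intro r h0 h1
          have h1' : r ≤ nt := by
            have : nt = n0 := by simpa [LL] using hL
            omega
          have := hEqRows r h0 (by simpa [LL] using h1')
          simpa [CC] using this
      refine hne ⟨hfin.1, 0, ?_⟩
      intro r h0 h1
      rw [hfin.2 r h0 h1]
      funext j
      simp [hshift]
    · exact key ε' ε i hH.symm hL hEq.symm
  have hcat : Countable ↥X := hcnt.to_subtype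
  have hcnb : Countable (ℕ → Bool) := by
    have hinj2 : Function.Injective (fun ε => (⟨F ε, hFX ε⟩ : ↥X)) := by
      intro a b hab
      exact hFinj (congrArg Subtype.val hab)
    exact hinj2.countable
  exact not_countable_funNatBool hcnb

end RPropAux

/-- A two-dimensional SFT defined by nearest-neighbor (Wang tile)
constraints which is countable or southward deterministic has the R property. -/
theorem R_property_of_countable_or_deterministic {S : Type} [Fintype S]
    (X : Set (ℤ × ℤ → S)) (hX : IsNNSFT X) (h : X.Countable ∨ SouthDet X) :
    RProperty X := by
  classical
  obtain ⟨FH, FV, hXeq⟩ := hX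
  have hXeq' : X = {x | RPropAux.Legal FH FV x} := hXeq
  intro y hy
  by_cases hg : ∃ (x0 : ℤ × ℤ → S) (n0 : ℤ), x0 ∈ X ∧ 0 < n0 ∧ row x0 0 = y ∧
      row x0 n0 ∈ orbit1 y ∧ ∀ i, 0 < i → i < n0 → row x0 i ∉ orbit1 y
  case neg =>
    refine ⟨1, fun _ => y, le_rfl, ?_, rfl, ⟨0, by funext j; simp⟩, ?_, ?_⟩
    · intro i _ _; exact hy
    · intro i h1 h2; omega
    · intro x hx m n hmn hm hn hint
      exfalso
      obtain ⟨x', u, hx'X, hb', ht', hint', hrel⟩ :=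
        RPropAux.gap_normalize hXeq' hx hmn hm hn hint
      exact hg ⟨x', n - m, hx'X, by omega, hb', ht', hint'⟩
  case pos =>
    obtain ⟨x0, n0, hx0, hn0, hb0, ht0, hi0⟩ := hg
    have huniq : ∀ (xt : ℤ × ℤ → S) (nt : ℤ), xt ∈ X → 0 < nt → row xt 0 = y →
        row xt nt ∈ orbit1 y → (∀ i, 0 < i → i < nt → row xt i ∉ orbit1 y) →
        nt = n0 ∧ ∃ t, ∀ i, 0 ≤ i → i ≤ n0 → row xt i = RPropAux.hshift t (row x0 i) := by
      intro xt nt h1 h2 h3 h4 h5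
      rcases h with hcnt | hdet
      · exact RPropAux.normgap_unique_of_countable hXeq' hcnt hx0 hn0 hb0 ht0 hi0
          h1 h2 h3 h4 h5
      · exact RPropAux.normgap_unique_of_det hXeq' hdet hx0 hn0 hb0 ht0 hi0 h1 h2 h3 h4 h5
    refine ⟨n0.toNat + 1, fun i => row x0 ((i : ℤ) - 1), by omega, ?_, ?_, ?_, ?_, ?_⟩
    · intro i _ _
      exact RPropAux.row_mem_PS2 hXeq' hx0 _
    · show row x0 (((1 : ℕ) : ℤ) - 1) = y
      norm_num
      exact hb0
    · show row x0 (((n0.toNat + 1 : ℕ) : ℤ) - 1) ∈ orbit1 y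
      have harg : ((n0.toNat + 1 : ℕ) : ℤ) - 1 = n0 := by omega
      rw [harg]
      exact ht0
    · intro i h1 h2
      refine hi0 _ (by omega) (by omega : (i : ℤ) - 1 < n0)
    · intro x hx m n hmn hm hn hint
      obtain ⟨x', u, hx'X, hb', ht', hint', hrel⟩ :=
        RPropAux.gap_normalize hXeq' hx hmn hm hn hint
      obtain ⟨hlen, t', ht'eq⟩ := huniq x' (n - m) hx'X (by omega) hb' ht' hint'
      constructor
      · omega
      · refine ⟨u + t', ?_⟩
        intro i h1 h2
        have hi' : row x (m + (i - m)) = RPropAux.hshift u (row x' (i - m)) := hrel (i - m)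
        rw [show m + (i - m) = i by ring] at hi'
        rw [hi', ht'eq (i - m) (by omega) (by omega)]
        funext l
        show row x0 (i - m) ((l + u) + t') = row x0 ((1 + (i - m).toNat : ℕ) - 1 : ℤ) (l + (u + t'))
        have harg : (((1 + (i - m).toNat : ℕ) : ℤ)) - 1 = i - m := by omega
        rw [harg]
        congr 1
        ring
end

section
/- Let X ⊆ S^{Z^2} be a two-dimensional SFT with the R property whose projective subdynamics PS(X) is countable, and let x ∈ X have a period (σ^n(x) = x for some n ∈ Z^2, n ≠ (0,0)). Then there do not exist y, z ∈ X with x > y > z in the subpattern preorder. -/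
namespace NoTwoBelowAux

variable {S : Type}

/-- `n` is a period of `x`. -/
def per (x : ℤ × ℤ → S) (n : ℤ × ℤ) : Prop := ∀ m, x (n + m) = x m

theorem per_of_shift {x : ℤ × ℤ → S} {n : ℤ × ℤ} (h : shift2 n x = x) : per x n := by
  intro m
  have := congrFun h m
  simpa [shift2] using this

theorem shift_of_per {x : ℤ × ℤ → S} {n : ℤ × ℤ} (h : per x n) : shift2 n x = x := by
  funext m; simpa [shift2] using h m

theorem per.neg {x : ℤ × ℤ → S} {n : ℤ × ℤ} (h : per x n) : per x (-n) := by
  intro m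
  have := h (-n + m)
  rw [← this]; ring_nf

theorem per.add {x : ℤ × ℤ → S} {n₁ n₂ : ℤ × ℤ} (h₁ : per x n₁) (h₂ : per x n₂) :
    per x (n₁ + n₂) := by
  intro m
  have e1 := h₁ (n₂ + m)
  have e2 := h₂ m
  rw [← add_assoc] at e1
  rw [e1, e2]

theorem per.zsmul {x : ℤ × ℤ → S} {n : ℤ × ℤ} (h : per x n) (j : ℤ) : per x (j • n) := by
  induction j using Int.induction_on with
  | zero => intro m; simp
  | succ k ih =>
      have : ((k : ℤ) + 1) • n = (k : ℤ) • n + n := by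
        rw [add_smul, one_smul]
      rw [this]; exact ih.add h
  | pred k ih =>
      have : (-(k : ℤ) - 1) • n = (-(k : ℤ)) • n + (-n) := by
        rw [sub_smul, one_smul, neg_smul]; ring
      rw [this]; exact ih.add h.neg

theorem per.apply {x : ℤ × ℤ → S} {n : ℤ × ℤ} (h : per x n) (j : ℤ) (m : ℤ × ℤ) :
    x (j • n + m) = x m := h.zsmul j m

/-- an SFT is shift-invariant. -/
theorem sft_shift_mem {X : Set (ℤ × ℤ → S)} (hX : IsSFT2 X) {x : ℤ × ℤ → S} (hx : x ∈ X)
    (g : ℤ × ℤ) : shift2 g x ∈ X := by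
  obtain ⟨F, _, hFeq⟩ := hX
  rw [hFeq]
  intro P hP hocc
  obtain ⟨n, hn⟩ := hocc
  have hx' : x ∈ {x | ∀ P ∈ F, ¬ occurs2 P.1 P.2 x} := hFeq ▸ hx
  refine hx' P hP ⟨g + n, fun m hm => ?_⟩
  have := hn m hm
  simpa [shift2, add_assoc] using this

theorem row_mem_PS2 {X : Set (ℤ × ℤ → S)} (hX : IsSFT2 X) {x : ℤ × ℤ → S} (hx : x ∈ X)
    (i : ℤ) : row x i ∈ PS2 X := by
  refine ⟨shift2 (0, i) x, sft_shift_mem hX hx (0, i), ?_⟩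
  funext l
  simp [row, shift2]

/-- If `y` is an exact shift of `x` then `patLE2 x y`. -/
theorem patLE2_of_exact {x y : ℤ × ℤ → S} (g : ℤ × ℤ) (h : ∀ m, y m = x (g + m)) :
    patLE2 x y := by
  intro D n
  refine ⟨n - g, fun m hm => ?_⟩
  rw [h (n - g + m)]
  congr 1
  ring

/-- period transfer down the subpattern order. -/
theorem per_transfer {x y : ℤ × ℤ → S} (hle : patLE2 y x) {n : ℤ × ℤ} (hper : per x n) :
    per y n := by
  intro m
  obtain ⟨n', hn'⟩ := hle {m, n + m} 0
  have h1 : x (n' + m) = y m := by simpa using hn' m (by simp)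
  have h2 : x (n' + (n + m)) = y (n + m) := by
    simpa using hn' (n + m) (by simp)
  have h3 : x (n' + (n + m)) = x (n' + m) := by
    have := hper (n' + m)
    rw [← this]; ring_nf
  rw [← h1, ← h2, h3]

/-- Pigeonhole: a ℤ-valued function bounded on an infinite set of naturals has an
infinite fiber. -/
theorem pigeon_int {T : Set ℕ} (hT : T.Infinite) (f : ℕ → ℤ) (lo hi : ℤ)
    (hf : ∀ n ∈ T, lo ≤ f n ∧ f n ≤ hi) : ∃ c, {n ∈ T | f n = c}.Infinite := by
  by_contra h
  push_neg at h
  have : T ⊆ ⋃ c ∈ Finset.Icc lo hi, {n ∈ T | f n = c} := by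
    intro n hn
    simp only [Set.mem_iUnion]
    exact ⟨f n, by simpa [Finset.mem_Icc] using hf n hn, hn, rfl⟩
  exact hT ((Set.Finite.biUnion (Finset.finite_toSet _) (fun c _ => h c)).subset this)

theorem inf_nat_unbounded {T : Set ℕ} (hT : T.Infinite) (B : ℕ) : ∃ n ∈ T, B ≤ n := by
  obtain ⟨n, hn⟩ := (hT.diff (Set.finite_Iio B)).nonempty
  exact ⟨n, hn.1, not_lt.1 hn.2⟩


/-- box as a Finset -/
noncomputable def boxF (W : ℕ) : Finset (ℤ × ℤ) := Finset.Icc (-(W:ℤ), -(W:ℤ)) ((W:ℤ), (W:ℤ))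

theorem mem_boxF {W : ℕ} {m : ℤ × ℤ} (h1 : |m.1| ≤ (W:ℤ)) (h2 : |m.2| ≤ (W:ℤ)) :
    m ∈ boxF W := by
  rw [abs_le] at h1 h2
  simp only [boxF, Finset.mem_Icc, Prod.le_def]
  exact ⟨⟨h1.1, h2.1⟩, h1.2, h2.2⟩

theorem per_reduce {y : ℤ × ℤ → S} {E : ℤ} (hE : 1 ≤ E)
    (h1 : per y ((E : ℤ), (0:ℤ))) (h2 : per y ((0:ℤ), (E:ℤ))) (g m : ℤ × ℤ) :
    y (g + m) = y ((g.1 % E, g.2 % E) + m) := by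
  have q1 := h1.zsmul (g.1 / E) ((g.1 % E, g.2) + m)
  have q2 := h2.zsmul (g.2 / E) ((g.1 % E, g.2 % E) + m)
  have e1 : (g.1 / E) • ((E:ℤ), (0:ℤ)) + ((g.1 % E, g.2) + m) = g + m := by
    simp only [Prod.smul_mk, smul_eq_mul, Prod.mk_add_mk, Prod.ext_iff, Prod.fst_add,
      Prod.snd_add]
    constructor
    · linear_combination Int.mul_ediv_add_emod g.1 E
    · simp
  have e2 : (g.2 / E) • ((0:ℤ), (E:ℤ)) + ((g.1 % E, g.2 % E) + m) = (g.1 % E, g.2) + m := by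
    simp only [Prod.smul_mk, smul_eq_mul, Prod.mk_add_mk, Prod.ext_iff, Prod.fst_add,
      Prod.snd_add]
    constructor
    · simp
    · linear_combination Int.mul_ediv_add_emod g.2 E
  rw [e1] at q1
  rw [e2] at q2
  exact q1.trans q2

theorem two_periods_min {y z : ℤ × ℤ → S} {p₁ p₂ : ℤ × ℤ}
    (h₁ : per y p₁) (h₂ : per y p₂) (hdet : p₁.1 * p₂.2 - p₁.2 * p₂.1 ≠ 0)
    (hzy : patLE2 z y) : patLE2 y z := by
  classical
  set d : ℤ := p₁.1 * p₂.2 - p₁.2 * p₂.1 with hd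
  have hd0 : per y (d, 0) := by
    have h := (h₁.zsmul p₂.2).add (h₂.zsmul (-p₁.2))
    have e : p₂.2 • p₁ + (-p₁.2) • p₂ = (d, 0) := by
      simp only [Prod.ext_iff, Prod.fst_add, Prod.snd_add, Prod.smul_fst, Prod.smul_snd,
        smul_eq_mul, hd]
      constructor <;> ring
    rwa [e] at h
  have h0d : per y (0, d) := by
    have h := (h₁.zsmul (-p₂.1)).add (h₂.zsmul p₁.1)
    have e : (-p₂.1) • p₁ + p₁.1 • p₂ = ((0:ℤ), d) := by
      simp only [Prod.ext_iff, Prod.fst_add, Prod.snd_add, Prod.smul_fst, Prod.smul_snd,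
        smul_eq_mul, hd]
      constructor <;> ring
    rwa [e] at h
  set E : ℤ := |d| with hE
  have hE1 : 1 ≤ E := by
    have := abs_pos.mpr hdet
    omega
  have hEd0 : per y ((E:ℤ), 0) := by
    rcases abs_choice d with h | h
    · rwa [hE, h]
    · rw [hE, h]
      have := hd0.neg
      simpa using this
  have hE0d : per y ((0:ℤ), E) := by
    rcases abs_choice d with h | h
    · rwa [hE, h]
    · rw [hE, h]
      have := h0d.neg
      simpa using this
  have agW : ∀ W : ℕ, ∃ g : ℤ × ℤ, ∀ m : ℤ × ℤ, |m.1| ≤ (W:ℤ) → |m.2| ≤ (W:ℤ) →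
      y (g + m) = z m := by
    intro W
    obtain ⟨g, hg⟩ := hzy (boxF W) 0
    exact ⟨g, fun m h1 h2 => by simpa using hg m (mem_boxF h1 h2)⟩
  choose g hg using agW
  set r : ℕ → ℤ × ℤ := fun W => ((g W).1 % E, (g W).2 % E) with hr
  have hrag : ∀ (W : ℕ) (m : ℤ × ℤ), |m.1| ≤ (W:ℤ) → |m.2| ≤ (W:ℤ) →
      y (r W + m) = z m := by
    intro W m h1 h2
    rw [← per_reduce hE1 hEd0 hE0d (g W) m]
    exact hg W m h1 h2
  have hbd : ∀ W : ℕ, (0 ≤ (r W).1 ∧ (r W).1 ≤ E - 1) ∧ (0 ≤ (r W).2 ∧ (r W).2 ≤ E - 1) := by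
    intro W
    have h1 := Int.emod_nonneg (g W).1 (by omega : E ≠ 0)
    have h2 := Int.emod_lt_of_pos (g W).1 (by omega : 0 < E)
    have h3 := Int.emod_nonneg (g W).2 (by omega : E ≠ 0)
    have h4 := Int.emod_lt_of_pos (g W).2 (by omega : 0 < E)
    simp only [hr]
    omega
  obtain ⟨c₁, hc₁⟩ := pigeon_int Set.infinite_univ (fun W => (r W).1) 0 (E-1)
    (fun n _ => (hbd n).1)
  obtain ⟨c₂, hc₂⟩ := pigeon_int hc₁ (fun W => (r W).2) 0 (E-1)
    (fun n hn => (hbd n).2)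
  have hzval : ∀ m : ℤ × ℤ, z m = y ((c₁, c₂) + m) := by
    intro m
    obtain ⟨W, hW, hWb⟩ := inf_nat_unbounded hc₂ (max m.1.natAbs m.2.natAbs)
    obtain ⟨⟨_, hW1⟩, hW2⟩ := hW
    have h1 : |m.1| ≤ (W:ℤ) := by
      rw [abs_le]; omega
    have h2 : |m.2| ≤ (W:ℤ) := by
      rw [abs_le]; omega
    have := hrag W m h1 h2
    rw [← this]
    congr 1
    rw [show r W = (c₁, c₂) from Prod.ext hW1 hW2]
  intro D n
  refine ⟨n - (c₁, c₂), fun m _ => ?_⟩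
  rw [hzval (n - (c₁, c₂) + m)]
  congr 1
  ring



section Rmach
variable {X : Set (ℤ × ℤ → S)} {x : ℤ × ℤ → S}

/-- The uniqueness part of the R property, for a fixed base row `u`. -/
def RU (X : Set (ℤ × ℤ → S)) (u : ℤ → S) (k : ℕ) (Z : ℕ → ℤ → S) : Prop :=
  ∀ x' ∈ X, ∀ m n : ℤ, m < n → row x' m ∈ orbit1 u → row x' n ∈ orbit1 u →
      (∀ i : ℤ, m < i → i < n → row x' i ∉ orbit1 u) →
      n - m + 1 = (k : ℤ) ∧
      ∃ t : ℤ, ∀ i : ℤ, m ≤ i → i ≤ n → row x' i = fun l => Z (1 + (i - m).toNat) (l + t)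

theorem rstep (hx : x ∈ X) {u : ℤ → S} {k : ℕ} {Z : ℕ → ℤ → S}
    (hZ1 : Z 1 = u) (hU : RU X u k Z)
    {h h' : ℤ} (hh : row x h ∈ orbit1 u) (hh' : row x h' ∈ orbit1 u) (hlt : h < h') :
    1 ≤ (k:ℤ) - 1 ∧ (row x (h + ((k:ℤ)-1)) ∈ orbit1 u) ∧ h + ((k:ℤ)-1) ≤ h' ∧
    ∃ t : ℤ, ∀ r : ℤ, 0 ≤ r → r ≤ (k:ℤ)-1 →
      row x (h + r) = fun l => Z (1 + r.toNat) (l + t) := by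
  classical
  have hQex : ∃ j : ℕ, row x (h + 1 + (j:ℤ)) ∈ orbit1 u := by
    refine ⟨(h' - h - 1).toNat, ?_⟩
    rw [show h + 1 + ((h' - h - 1).toNat : ℤ) = h' by omega]
    exact hh'
  set j₀ := Nat.find hQex with hj₀
  set n₀ : ℤ := h + 1 + (j₀:ℤ) with hn₀def
  have hn₀ : row x n₀ ∈ orbit1 u := Nat.find_spec hQex
  have hmin : ∀ i : ℤ, h < i → i < n₀ → row x i ∉ orbit1 u := by
    intro i hi1 hi2 hOi
    have hj' : (i - h - 1).toNat < j₀ := by omega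
    exact Nat.find_min hQex hj'
      (by rw [show h + 1 + ((i - h - 1).toNat : ℤ) = i by omega]; exact hOi)
  obtain ⟨hk, t, ht⟩ := hU x hx h n₀ (by omega) hh hn₀ hmin
  have hγ : n₀ = h + ((k:ℤ) - 1) := by omega
  have hle : n₀ ≤ h' := by
    have hle' : j₀ ≤ (h' - h - 1).toNat := Nat.find_min' hQex
      (by rw [show h + 1 + ((h' - h - 1).toNat : ℤ) = h' by omega]; exact hh')
    omega
  refine ⟨by omega, by rw [← hγ]; exact hn₀, by omega, t, ?_⟩
  intro r hr0 hr1
  have hres := ht (h + r) (by omega) (by omega)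
  rw [show h + r - h = r by ring] at hres
  exact hres

theorem chaincover (hx : x ∈ X) {u : ℤ → S} {k : ℕ} {Z : ℕ → ℤ → S}
    (hZ1 : Z 1 = u) (hU : RU X u k Z)
    {e : ℤ} (he : Z k = fun l => u (l + e))
    {h h' : ℤ} (hh : row x h ∈ orbit1 u) (hh' : row x h' ∈ orbit1 u) (hle : h ≤ h')
    {τ : ℤ} (hτ : row x h = fun l => u (l + τ)) :
    ∃ m : ℕ, h' = h + (m:ℤ) * ((k:ℤ)-1) ∧
      row x h' = fun l => u (l + (τ + (m:ℤ) * e)) := by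
  by_cases heq : h = h'
  · refine ⟨0, by omega, ?_⟩
    rw [← heq]
    simpa using hτ
  · have hlt : h < h' := lt_of_le_of_ne hle heq
    obtain ⟨hk1, hOn, hle2, t, ht⟩ := rstep hx hZ1 hU hh hh' hlt
    -- row at h + (k-1) in terms of τ + e
    have h0 := ht 0 le_rfl (by omega)
    have hK := ht ((k:ℤ)-1) (by omega) le_rfl
    have hZk_idx : 1 + ((k:ℤ)-1).toNat = k := by omega
    rw [hZk_idx] at hK
    have hptwise : ∀ l, u (l + t) = u (l + τ) := by
      intro l
      have h1 := congrFun h0 l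
      have h2 := congrFun hτ l
      rw [show h + 0 = h by ring] at h1
      rw [h1] at h2
      simpa [hZ1] using h2
    have hnew : row x (h + ((k:ℤ)-1)) = fun l => u (l + (τ + e)) := by
      funext l
      have h1 := congrFun hK l
      have h2 := congrFun he (l + t)
      rw [h1, h2]
      have := hptwise (l + e)
      rw [show l + e + t = l + t + e by ring, show l + e + τ = l + (τ + e) by ring] at this
      exact this
    have hterm : (h' - (h + ((k:ℤ)-1))).toNat < (h' - h).toNat := by omega
    obtain ⟨m, hm, hrow⟩ := chaincover hx hZ1 hU he
      (hh := hOn) (hh' := hh') (hle := hle2) (hτ := hnew)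
    refine ⟨m + 1, by push_cast; linarith [hm], ?_⟩
    rw [hrow]
    funext l
    congr 1
    push_cast
    ring
termination_by (h' - h).toNat


theorem row_per_mul {A : ℤ} (hrowA : ∀ l i : ℤ, x (l + A, i) = x (l, i)) (c : ℤ) :
    ∀ l i : ℤ, x (l + A * c, i) = x (l, i) := by
  induction c using Int.induction_on with
  | zero => intro l i; simp
  | succ kk ih =>
      intro l i
      rw [show l + A*((kk:ℤ)+1) = (l + A*(kk:ℤ)) + A from by ring, hrowA, ih]
  | pred kk ih =>
      intro l i
      have h2 := hrowA (l + A*(-(kk:ℤ)-1)) i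
      rw [show l + A*(-(kk:ℤ)-1) + A = l + A*(-(kk:ℤ)) from by ring] at h2
      rw [← h2, ih]

theorem relcore (hx : x ∈ X) (hR : RProperty X)
    {A : ℤ} (hA : 1 ≤ A) (hrowA : ∀ l i : ℤ, x (l + A, i) = x (l, i))
    {k : ℕ} {Z : ℕ → ℤ → S}
    (hmem : ∀ i, 1 ≤ i → i ≤ k → Z i ∈ PS2 X)
    (hp1 : 1 ≤ (k:ℤ) - 1)
    {q : ℤ} {T : ℕ → ℤ}
    (hblk : ∀ M : ℕ, (M:ℤ) ≤ A + 1 → ∀ r : ℤ, 0 ≤ r → r ≤ (k:ℤ)-1 →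
      row x (q + (M:ℤ)*((k:ℤ)-1) + r) = fun l => Z (1 + r.toNat) (l + T M))
    {r : ℤ} (hr0 : 0 ≤ r) (hrp : r < (k:ℤ)-1) :
    ∀ l : ℤ, x (l, q + r + ((k:ℤ)-1) * A) = x (l, q + r) := by
  classical
  have hu' : Z (1 + r.toNat) ∈ PS2 X := hmem _ (by omega) (by omega)
  obtain ⟨k', Z', hk1', hmem', hZ1', hZk', hmid', hU'⟩ := hR (Z (1 + r.toNat)) hu'
  obtain ⟨e', he'⟩ := hZk'
  have hoccrow : ∀ M : ℕ, (M:ℤ) ≤ A + 1 →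
      row x (q + (M:ℤ)*((k:ℤ)-1) + r) = fun l => Z (1 + r.toNat) (l + T M) :=
    fun M hM => hblk M hM r hr0 (le_of_lt hrp)
  have hocc : ∀ M : ℕ, (M:ℤ) ≤ A + 1 →
      row x (q + (M:ℤ)*((k:ℤ)-1) + r) ∈ orbit1 (Z (1 + r.toNat)) :=
    fun M hM => ⟨T M, hoccrow M hM⟩
  have hγ'1 : 1 ≤ (k':ℤ) - 1 := by
    have h0 := hocc 0 (by push_cast; omega)
    have h1 := hocc 1 (by push_cast; omega)
    have hlt01 : q + ((0:ℕ):ℤ)*((k:ℤ)-1) + r < q + ((1:ℕ):ℤ)*((k:ℤ)-1) + r := by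
      push_cast; ring_nf; omega
    exact (rstep hx hZ1' hU' h0 h1 hlt01).1
  have hcc : ∀ M : ℕ, (M:ℤ) + 1 ≤ A + 1 → ∃ m : ℕ, ((k:ℤ)-1) = (m:ℤ) * ((k':ℤ)-1) ∧
      row x (q + ((M:ℤ)+1)*((k:ℤ)-1) + r) =
        fun l => Z (1 + r.toNat) (l + (T M + (m:ℤ)*e')) := by
    intro M hM
    have h1 := hocc M (by omega)
    have h2row := hoccrow (M+1) (by push_cast; omega)
    have h2 : row x (q + ((M:ℤ)+1)*((k:ℤ)-1) + r) ∈ orbit1 (Z (1 + r.toNat)) := by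
      refine ⟨T (M+1), ?_⟩
      rw [show q + ((M:ℤ)+1)*((k:ℤ)-1) + r = q + ((M+1:ℕ):ℤ)*((k:ℤ)-1) + r from by
        push_cast; ring]
      exact h2row
    have hle : q + (M:ℤ)*((k:ℤ)-1) + r ≤ q + ((M:ℤ)+1)*((k:ℤ)-1) + r := by nlinarith
    obtain ⟨m, hm, hrow⟩ := chaincover hx hZ1' hU' he' h1 h2 hle (hoccrow M (by omega))
    have hx1 : ((M:ℤ)+1)*((k:ℤ)-1) = (M:ℤ)*((k:ℤ)-1) + ((k:ℤ)-1) := by ring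
    have hpm : ((k:ℤ)-1) = (m:ℤ) * ((k':ℤ)-1) := by linear_combination hm - hx1
    exact ⟨m, hpm, hrow⟩
  obtain ⟨m₀, hm₀, -⟩ := hcc 0 (by push_cast; omega)
  have hstep : ∀ M : ℕ, (M:ℤ) + 1 ≤ A + 1 → ∀ l : ℤ,
      x (l, (q + (M:ℤ)*((k:ℤ)-1) + r) + ((k:ℤ)-1))
        = x (l + (m₀:ℤ)*e', q + (M:ℤ)*((k:ℤ)-1) + r) := by
    intro M hM l
    obtain ⟨m, hpm, hrowM⟩ := hcc M hM
    have hmm₀ : (m:ℤ) = (m₀:ℤ) := by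
      have hne : ((k':ℤ)-1) ≠ 0 := by omega
      refine mul_right_cancel₀ hne ?_
      rw [← hpm]; exact hm₀
    have hL : x (l, (q + (M:ℤ)*((k:ℤ)-1) + r) + ((k:ℤ)-1))
        = Z (1 + r.toNat) (l + (T M + (m:ℤ)*e')) := by
      have h1 := congrFun hrowM l
      rw [show q + ((M:ℤ)+1)*((k:ℤ)-1) + r
          = (q + (M:ℤ)*((k:ℤ)-1) + r) + ((k:ℤ)-1) from by ring] at h1
      exact h1
    have hRr : x (l + (m₀:ℤ)*e', q + (M:ℤ)*((k:ℤ)-1) + r)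
        = Z (1 + r.toNat) ((l + (m₀:ℤ)*e') + T M) :=
      congrFun (hoccrow M (by omega)) (l + (m₀:ℤ)*e')
    rw [hL, hRr, hmm₀]
    congr 1
    ring
  have hiter : ∀ M : ℕ, (M:ℤ) ≤ A → ∀ l : ℤ,
      x (l, q + r + (M:ℤ)*((k:ℤ)-1)) = x (l + (M:ℤ)*((m₀:ℤ)*e'), q + r) := by
    intro M
    induction M with
    | zero => intro _ l; norm_num
    | succ M ih =>
        intro hM l
        have hMle : (M:ℤ) ≤ A := by push_cast at hM ⊢; omega
        have h1 : x (l, q + r + ((M+1:ℕ):ℤ)*((k:ℤ)-1))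
            = x (l + (m₀:ℤ)*e', q + (M:ℤ)*((k:ℤ)-1) + r) := by
          rw [show q + r + ((M+1:ℕ):ℤ)*((k:ℤ)-1)
              = (q + (M:ℤ)*((k:ℤ)-1) + r) + ((k:ℤ)-1) from by push_cast; ring]
          exact hstep M (by omega) l
        rw [h1]
        rw [show q + (M:ℤ)*((k:ℤ)-1) + r = q + r + (M:ℤ)*((k:ℤ)-1) from by ring]
        rw [ih hMle (l + (m₀:ℤ)*e')]
        congr 1
        push_cast
        ring
  intro l
  have hfin := hiter A.toNat (by omega) l
  rw [Int.toNat_of_nonneg (by omega : (0:ℤ) ≤ A)] at hfin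
  rw [show q + r + ((k:ℤ)-1)*A = q + r + A*((k:ℤ)-1) from by ring, hfin]
  rw [show A*((m₀:ℤ)*e') = A*((m₀:ℤ)*e') from rfl]
  exact row_per_mul hrowA ((m₀:ℤ)*e') l (q + r)

theorem upmain (hx : x ∈ X) (hR : RProperty X)
    {A : ℤ} (hA : 1 ≤ A) (hrowA : ∀ l i : ℤ, x (l + A, i) = x (l, i))
    {u : ℤ → S} (hu : u ∈ PS2 X)
    (hub : ∀ M : ℤ, ∃ i : ℤ, M ≤ i ∧ row x i ∈ orbit1 u)
    {h₀ : ℤ} (hh₀ : row x h₀ ∈ orbit1 u) :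
    ∃ P : ℤ, 1 ≤ P ∧ ∀ i l : ℤ, h₀ ≤ i → x (l, i + P) = x (l, i) := by
  classical
  obtain ⟨k, Z, hk1, hmem, hZ1, hZk, hmid, hU⟩ := hR u hu
  have hp1 : 1 ≤ (k:ℤ) - 1 := by
    obtain ⟨i, hi1, hi2⟩ := hub (h₀ + 1)
    exact (rstep hx hZ1 hU hh₀ hi2 (by omega)).1
  have hocc : ∀ j : ℕ, row x (h₀ + (j:ℤ)*((k:ℤ)-1)) ∈ orbit1 u := by
    intro j
    induction j with
    | zero => simpa using hh₀
    | succ j ih =>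
        obtain ⟨i, hi1, hi2⟩ := hub (h₀ + (j:ℤ)*((k:ℤ)-1) + 1)
        have hst := (rstep hx hZ1 hU ih hi2 (by linarith)).2.1
        rw [show h₀ + (j:ℤ)*((k:ℤ)-1) + ((k:ℤ)-1)
            = h₀ + ((j+1:ℕ):ℤ)*((k:ℤ)-1) from by push_cast; ring] at hst
        exact hst
  have hblocks : ∀ j : ℕ, ∃ t : ℤ, ∀ r : ℤ, 0 ≤ r → r ≤ (k:ℤ)-1 →
      row x (h₀ + (j:ℤ)*((k:ℤ)-1) + r) = fun l => Z (1 + r.toNat) (l + t) := by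
    intro j
    obtain ⟨i, hi1, hi2⟩ := hub (h₀ + (j:ℤ)*((k:ℤ)-1) + 1)
    exact (rstep hx hZ1 hU (hocc j) hi2 (by linarith)).2.2.2
  choose T hT using hblocks
  refine ⟨((k:ℤ)-1) * A, ?_, ?_⟩
  · have := mul_le_mul hp1 hA (by omega : (0:ℤ) ≤ 1) (by omega : (0:ℤ) ≤ (k:ℤ)-1)
    linarith
  intro i l hi
  obtain ⟨j, rr, hj0, hr0, hrp, heq⟩ : ∃ jq rr : ℤ, 0 ≤ jq ∧ 0 ≤ rr ∧ rr < (k:ℤ)-1 ∧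
      i = h₀ + jq*((k:ℤ)-1) + rr := by
    refine ⟨(i - h₀)/((k:ℤ)-1), (i - h₀)%((k:ℤ)-1), Int.ediv_nonneg (by omega) (by omega),
      Int.emod_nonneg _ (by omega), Int.emod_lt_of_pos _ (by omega), ?_⟩
    linear_combination -Int.mul_ediv_add_emod (i - h₀) ((k:ℤ)-1)
  have hblk : ∀ M : ℕ, (M:ℤ) ≤ A + 1 → ∀ r : ℤ, 0 ≤ r → r ≤ (k:ℤ)-1 →
      row x ((h₀ + j*((k:ℤ)-1)) + (M:ℤ)*((k:ℤ)-1) + r)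
        = fun l => Z (1 + r.toNat) (l + T (j.toNat + M)) := by
    intro M _ r h1 h2
    have hres := hT (j.toNat + M) r h1 h2
    rw [show h₀ + ((j.toNat + M : ℕ):ℤ)*((k:ℤ)-1) + r
        = (h₀ + j*((k:ℤ)-1)) + (M:ℤ)*((k:ℤ)-1) + r from by
      push_cast [Int.toNat_of_nonneg hj0]; ring] at hres
    exact hres
  have hcore := relcore hx hR hA hrowA hmem hp1 hblk hr0 hrp l
  rw [show h₀ + j*((k:ℤ)-1) + rr = i from heq.symm] at hcore
  exact hcore

theorem downmain (hx : x ∈ X) (hR : RProperty X)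
    {A : ℤ} (hA : 1 ≤ A) (hrowA : ∀ l i : ℤ, x (l + A, i) = x (l, i))
    {u : ℤ → S} (hu : u ∈ PS2 X)
    (hdb : ∀ M : ℤ, ∃ i : ℤ, i ≤ M ∧ row x i ∈ orbit1 u)
    {h₀ : ℤ} (hh₀ : row x h₀ ∈ orbit1 u) :
    ∃ P : ℤ, 1 ≤ P ∧ ∃ c₀ : ℤ, ∀ i l : ℤ, i ≤ c₀ → x (l, i + P) = x (l, i) := by
  classical
  obtain ⟨k, Z, hk1, hmem, hZ1, hZk, hmid, hU⟩ := hR u hu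
  have hp1 : 1 ≤ (k:ℤ) - 1 := by
    obtain ⟨i, hi1, hi2⟩ := hdb (h₀ - 1)
    exact (rstep hx hZ1 hU hi2 hh₀ (by omega)).1
  refine ⟨((k:ℤ)-1)*A, ?_, h₀ - (A+3)*((k:ℤ)-1), ?_⟩
  · have := mul_le_mul hp1 hA (by omega : (0:ℤ) ≤ 1) (by omega : (0:ℤ) ≤ (k:ℤ)-1)
    linarith
  intro i l hi
  have hbound : ∀ M : ℤ, M ≤ A + 2 → i + M*((k:ℤ)-1) < h₀ := by
    intro M hM
    have h1 : (1:ℤ)*((k:ℤ)-1) ≤ (A+3-M)*((k:ℤ)-1) :=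
      mul_le_mul_of_nonneg_right (by omega) (by omega)
    have h2 : (A+3-M)*((k:ℤ)-1) = (A+3)*((k:ℤ)-1) - M*((k:ℤ)-1) := by ring
    linarith
  obtain ⟨ineg, hile, hiO⟩ := hdb i
  have hclimb : ∀ d : ℕ, ∀ qq : ℤ, row x qq ∈ orbit1 u → qq ≤ i → i - qq ≤ (d:ℤ) →
      ∃ q : ℤ, row x q ∈ orbit1 u ∧ q ≤ i ∧ i < q + ((k:ℤ)-1) := by
    intro d
    induction d with
    | zero => intro qq hO hle hd; exact ⟨qq, hO, hle, by omega⟩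
    | succ d ih =>
        intro qq hO hle hd
        by_cases hcase : i < qq + ((k:ℤ)-1)
        · exact ⟨qq, hO, hle, hcase⟩
        · push_neg at hcase
          have hih : i + 0*((k:ℤ)-1) < h₀ := hbound 0 (by omega)
          have hlt : qq < h₀ := by
            simp only [zero_mul, add_zero] at hih
            omega
          have hst := (rstep hx hZ1 hU hO hh₀ hlt).2.1
          exact ih (qq + ((k:ℤ)-1)) hst (by omega) (by push_cast at hd ⊢; omega)
  obtain ⟨q, hqO, hqle, hqlt⟩ := hclimb (i - ineg).toNat ineg hiO hile (by omega)
  have hoccM : ∀ M : ℕ, (M:ℤ) ≤ A + 2 → row x (q + (M:ℤ)*((k:ℤ)-1)) ∈ orbit1 u := by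
    intro M
    induction M with
    | zero => intro _; simpa using hqO
    | succ M ih =>
        intro hM
        have hMle : (M:ℤ) ≤ A + 2 := by push_cast at hM; omega
        have hO := ih hMle
        have hlt : q + (M:ℤ)*((k:ℤ)-1) < h₀ := by
          have := hbound (M:ℤ) (by omega)
          linarith
        have hst := (rstep hx hZ1 hU hO hh₀ hlt).2.1
        rw [show q + (M:ℤ)*((k:ℤ)-1) + ((k:ℤ)-1)
            = q + ((M+1:ℕ):ℤ)*((k:ℤ)-1) from by push_cast; ring] at hst
        exact hst
  have hblocks : ∀ M : ℕ, ∃ t : ℤ, (M:ℤ) ≤ A + 1 → ∀ rr : ℤ, 0 ≤ rr → rr ≤ (k:ℤ)-1 →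
      row x (q + (M:ℤ)*((k:ℤ)-1) + rr) = fun l => Z (1 + rr.toNat) (l + t) := by
    intro M
    by_cases hM : (M:ℤ) ≤ A + 1
    · have hO := hoccM M (by omega)
      have hlt : q + (M:ℤ)*((k:ℤ)-1) < h₀ := by
        have := hbound (M:ℤ) (by omega)
        linarith
      obtain ⟨t, ht⟩ := (rstep hx hZ1 hU hO hh₀ hlt).2.2.2
      exact ⟨t, fun _ => ht⟩
    · exact ⟨0, fun h => absurd h hM⟩
  choose T hT using hblocks
  have hcore := relcore hx hR hA hrowA hmem hp1 hT
    (show 0 ≤ i - q by omega) (show i - q < (k:ℤ)-1 by omega) l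
  rw [show q + (i - q) = i from by ring] at hcore
  exact hcore

theorem boxF_mono {W W' : ℕ} (h : W ≤ W') : boxF W ⊆ boxF W' := by
  intro m hm
  simp only [boxF, Finset.mem_Icc, Prod.le_def] at hm ⊢
  omega

theorem extract_unbounded {T : Set ℕ} (hT : T.Infinite) (f : ℕ → ℤ)
    (hfin : ∀ M : ℤ, 0 ≤ M → {W | W ∈ T ∧ -M ≤ f W ∧ f W ≤ M}.Finite) :
    (∀ (M : ℤ) (W₀ : ℕ), ∃ W, W ∈ T ∧ W₀ ≤ W ∧ M ≤ f W) ∨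
    (∀ (M : ℤ) (W₀ : ℕ), ∃ W, W ∈ T ∧ W₀ ≤ W ∧ f W ≤ M) := by
  by_cases hSp : {W | W ∈ T ∧ 0 ≤ f W}.Infinite
  · left
    intro M W₀
    have hinf : ({W | W ∈ T ∧ 0 ≤ f W} \
        ({W | W ∈ T ∧ -(max M 0) ≤ f W ∧ f W ≤ max M 0} ∪ Set.Iio W₀)).Infinite :=
      hSp.diff ((hfin _ (by omega)).union (Set.finite_Iio _))
    obtain ⟨W, hW⟩ := hinf.nonempty
    obtain ⟨⟨hWT, hWf⟩, hW2⟩ := hW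
    simp only [Set.mem_union, Set.mem_setOf_eq, Set.mem_Iio, not_or, not_and, not_lt] at hW2
    obtain ⟨h2, hW₀⟩ := hW2
    have h3 := h2 hWT
    refine ⟨W, hWT, hW₀, ?_⟩
    by_cases hc : -(max M 0) ≤ f W
    · have := h3 hc
      omega
    · omega
  · right
    have hSn : {W | W ∈ T ∧ f W ≤ 0}.Infinite := by
      by_contra hfin2
      rw [Set.not_infinite] at hfin2
      rw [Set.not_infinite] at hSp
      refine hT ((hSp.union hfin2).subset ?_)
      intro W hW
      by_cases h : 0 ≤ f W
      · exact Or.inl ⟨hW, h⟩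
      · exact Or.inr ⟨hW, by omega⟩
    intro M W₀
    have hinf : ({W | W ∈ T ∧ f W ≤ 0} \
        ({W | W ∈ T ∧ -(max (-M) 0) ≤ f W ∧ f W ≤ max (-M) 0} ∪ Set.Iio W₀)).Infinite :=
      hSn.diff ((hfin _ (by omega)).union (Set.finite_Iio _))
    obtain ⟨W, hW⟩ := hinf.nonempty
    obtain ⟨⟨hWT, hWf⟩, hW2⟩ := hW
    simp only [Set.mem_union, Set.mem_setOf_eq, Set.mem_Iio, not_or, not_and, not_lt] at hW2
    obtain ⟨h2, hW₀⟩ := hW2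
    have h3 := h2 hWT
    refine ⟨W, hWT, hW₀, ?_⟩
    by_cases hc : -(max (-M) 0) ≤ f W
    · have := h3 hc
      omega
    · omega

theorem rows_recur (hx : x ∈ X) [Fintype S] {A : ℤ} (hA : 1 ≤ A)
    (hrowA : ∀ l i : ℤ, x (l + A, i) = x (l, i)) (sgn : ℤ) (hsgn : sgn = 1 ∨ sgn = -1) :
    ∃ u : ℤ → S, (∃ h₀ : ℤ, row x h₀ = u) ∧
      (∀ M : ℤ, ∃ i : ℤ, M ≤ sgn * i ∧ row x i = u) := by
  classical
  set gfib : ℕ → (Fin A.toNat → S) := fun n => fun rr => x ((rr : ℤ), sgn * (n:ℤ)) with hgfib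
  obtain ⟨v, hv⟩ := Finite.exists_infinite_fiber gfib
  have hvT : (gfib ⁻¹' {v}).Infinite := Set.infinite_coe_iff.mp hv
  have hbnd : ∀ l : ℤ, (l % A).toNat < A.toNat := by
    intro l
    have h1 := Int.emod_nonneg l (show A ≠ 0 by omega)
    have h2 := Int.emod_lt_of_pos l (show (0:ℤ) < A by omega)
    omega
  have hroweq : ∀ n : ℕ, gfib n = v →
      row x (sgn * (n:ℤ)) = fun l => v ⟨(l % A).toNat, hbnd l⟩ := by
    intro n hn
    funext l
    have hl : x (l, sgn * (n:ℤ)) = x (l % A, sgn * (n:ℤ)) := by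
      have := row_per_mul hrowA (l / A) (l % A) (sgn * (n:ℤ))
      rw [show l % A + A * (l / A) = l from by linear_combination Int.mul_ediv_add_emod l A] at this
      exact this
    have hval : x ((((l % A).toNat : ℤ)), sgn * (n:ℤ)) = v ⟨(l % A).toNat, hbnd l⟩ := by
      rw [← hn]
    rw [show (((l % A).toNat : ℤ)) = ((l % A : ℤ)) from by
      have h1 := Int.emod_nonneg l (show A ≠ 0 by omega)
      omega] at hval
    rw [show row x (sgn * (n:ℤ)) l = x (l, sgn * (n:ℤ)) from rfl, hl]
    exact hval
  obtain ⟨n₀, hn₀⟩ := hvT.nonempty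
  refine ⟨row x (sgn * (n₀:ℤ)), ⟨sgn * (n₀:ℤ), rfl⟩, ?_⟩
  intro M
  obtain ⟨n, hnT, hnB⟩ := inf_nat_unbounded hvT M.toNat
  refine ⟨sgn * (n:ℤ), ?_, ?_⟩
  · have h1 : sgn * (sgn * (n:ℤ)) = (n:ℤ) := by
      rcases hsgn with h | h <;> rw [h] <;> ring
    rw [h1]
    omega
  · rw [hroweq n hnT, hroweq n₀ hn₀]

theorem normH {y : ℤ × ℤ → S} {A : ℤ} (hA : 1 ≤ A) (hperA : per x ((A:ℤ), (0:ℤ)))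
    (hag : ∀ W : ℕ, ∃ g : ℤ × ℤ, ∀ m ∈ boxF W, x (g + m) = y m) :
    (∃ g : ℤ × ℤ, ∀ m, y m = x (g + m)) ∨
    (∀ (M : ℤ) (W : ℕ), ∃ u v : ℤ, M ≤ v ∧ ∀ m ∈ boxF W, x ((u, v) + m) = y m) ∨
    (∀ (M : ℤ) (W : ℕ), ∃ u v : ℤ, v ≤ M ∧ ∀ m ∈ boxF W, x ((u, v) + m) = y m) := by
  classical
  choose g hg using hag
  have key : ∀ (W : ℕ) (m : ℤ × ℤ), x (((g W).1 % A, (g W).2) + m) = x (g W + m) := by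
    intro W m
    have e : ((g W).1 / A) • ((A:ℤ), (0:ℤ)) + (((g W).1 % A, (g W).2) + m) = g W + m := by
      simp only [Prod.smul_mk, smul_eq_mul, Prod.mk_add_mk, Prod.ext_iff, Prod.fst_add,
        Prod.snd_add]
      constructor
      · linear_combination Int.mul_ediv_add_emod (g W).1 A
      · simp
    have happ := hperA.zsmul ((g W).1 / A) (((g W).1 % A, (g W).2) + m)
    rw [e] at happ
    exact happ.symm
  have hg2 : ∀ (W : ℕ), ∀ m ∈ boxF W, x (((g W).1 % A, (g W).2) + m) = y m :=
    fun W m hm => (key W m).trans (hg W m hm)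
  obtain ⟨u₀, hu₀⟩ := pigeon_int Set.infinite_univ (fun W => (g W).1 % A) 0 (A - 1)
    (fun W _ => ⟨Int.emod_nonneg _ (by omega), by
      show (g W).1 % A ≤ A - 1
      have := Int.emod_lt_of_pos (g W).1 (show (0:ℤ) < A by omega); omega⟩)
  have hT₁ : {W : ℕ | (g W).1 % A = u₀}.Infinite := by
    refine hu₀.mono ?_
    intro W hW
    exact hW.2
  by_cases hrep : ∃ v₀ : ℤ, {W | W ∈ {W : ℕ | (g W).1 % A = u₀} ∧ (g W).2 = v₀}.Infinite
  · left
    obtain ⟨v₀, hv₀⟩ := hrep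
    refine ⟨(u₀, v₀), fun m => ?_⟩
    obtain ⟨W, hWmem, hWge⟩ := inf_nat_unbounded hv₀ (max m.1.natAbs m.2.natAbs)
    obtain ⟨hW1, hW2⟩ := hWmem
    have hm : m ∈ boxF W := mem_boxF (by rw [abs_le]; omega) (by rw [abs_le]; omega)
    have := hg2 W m hm
    rw [hW1, hW2] at this
    exact this.symm
  · push_neg at hrep
    have hfin : ∀ M : ℤ, 0 ≤ M →
        {W | W ∈ {W : ℕ | (g W).1 % A = u₀} ∧ -M ≤ (g W).2 ∧ (g W).2 ≤ M}.Finite := by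
      intro M _
      have hsub : {W | W ∈ {W : ℕ | (g W).1 % A = u₀} ∧ -M ≤ (g W).2 ∧ (g W).2 ≤ M} ⊆
          ⋃ c ∈ Finset.Icc (-M) M, {W | W ∈ {W : ℕ | (g W).1 % A = u₀} ∧ (g W).2 = c} := by
        intro W hW
        simp only [Set.mem_iUnion]
        exact ⟨(g W).2, by simpa [Finset.mem_Icc] using hW.2, hW.1, rfl⟩
      exact (Set.Finite.biUnion (Finset.finite_toSet _)
        (fun c _ => hrep c)).subset hsub
    rcases extract_unbounded hT₁ (fun W => (g W).2) hfin with hup | hdn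
    · right; left
      intro M W
      obtain ⟨W', hW'T, hW'ge, hW'M⟩ := hup M W
      refine ⟨(g W').1 % A, (g W').2, hW'M, fun m hm => hg2 W' m (boxF_mono hW'ge hm)⟩
    · right; right
      intro M W
      obtain ⟨W', hW'T, hW'ge, hW'M⟩ := hdn M W
      refine ⟨(g W').1 % A, (g W').2, hW'M, fun m hm => hg2 W' m (boxF_mono hW'ge hm)⟩

theorem caseH [Fintype S] {y z : ℤ × ℤ → S}
    (hXs : IsSFT2 X) (hR : RProperty X) (hx : x ∈ X)
    {a : ℤ} (ha : a ≠ 0) (hpera : per x ((a : ℤ), (0:ℤ)))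
    (hyx : patLE2 y x) (hnxy : ¬ patLE2 x y)
    (hzy : patLE2 z y) (hnyz : ¬ patLE2 y z) : False := by
  classical
  obtain ⟨A, hA1, hperA⟩ : ∃ A : ℤ, 1 ≤ A ∧ per x ((A:ℤ), (0:ℤ)) := by
    rcases lt_or_gt_of_ne ha with h | h
    · refine ⟨-a, by omega, ?_⟩
      have hn := hpera.neg
      rwa [show -((a:ℤ), (0:ℤ)) = ((-a : ℤ), (0:ℤ)) from by simp] at hn
    · exact ⟨a, by omega, hpera⟩
  have hrowA : ∀ l i : ℤ, x (l + A, i) = x (l, i) := by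
    intro l i
    have h := hperA (l, i)
    rw [show ((A:ℤ),(0:ℤ)) + (l, i) = (l + A, i) from by
      simp only [Prod.mk_add_mk, Prod.ext_iff]
      constructor <;> ring] at h
    exact h
  have hpy : per y ((A:ℤ), (0:ℤ)) := per_transfer hyx hperA
  have hag : ∀ W : ℕ, ∃ g : ℤ × ℤ, ∀ m ∈ boxF W, x (g + m) = y m := by
    intro W
    obtain ⟨g, hg⟩ := hyx (boxF W) 0
    exact ⟨g, fun m hm => by simpa using hg m hm⟩
  have hdet : ∀ P : ℤ, 1 ≤ P →
      ((A:ℤ),(0:ℤ)).1 * (((0:ℤ),P)).2 - ((A:ℤ),(0:ℤ)).2 * (((0:ℤ),P)).1 ≠ 0 := by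
    intro P hP1
    have h1 : (1:ℤ)*1 ≤ A*P := mul_le_mul hA1 hP1 (by omega) (by omega)
    simp only []
    intro hcon
    nlinarith
  rcases normH hA1 hperA hag with hex | hup | hdn
  · obtain ⟨g, hgg⟩ := hex
    exact hnxy (patLE2_of_exact g hgg)
  · obtain ⟨u, ⟨h₀, hh₀⟩, hrec⟩ := rows_recur hx hA1 hrowA 1 (Or.inl rfl)
    have hu : u ∈ PS2 X := by rw [← hh₀]; exact row_mem_PS2 hXs hx h₀
    have hub : ∀ M : ℤ, ∃ i : ℤ, M ≤ i ∧ row x i ∈ orbit1 u := by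
      intro M
      obtain ⟨i, hi1, hi2⟩ := hrec M
      rw [one_mul] at hi1
      refine ⟨i, hi1, ⟨0, ?_⟩⟩
      rw [hi2]
      funext j
      simp
    have hh₀O : row x h₀ ∈ orbit1 u := by
      refine ⟨0, ?_⟩
      rw [hh₀]
      funext j
      simp
    obtain ⟨P, hP1, htail⟩ := upmain hx hR hA1 hrowA hu hub hh₀O
    have hpy2 : per y ((0:ℤ), P) := by
      intro m
      have habs2 : m.2 ≤ |m.2| ∧ -|m.2| ≤ m.2 := ⟨le_abs_self _, neg_abs_le _⟩
      obtain ⟨u', v, hvM, hagm⟩ := hup (h₀ + |m.2| + P + 1)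
        (m.1.natAbs + m.2.natAbs + P.toNat + 1)
      have hm1 : m ∈ boxF (m.1.natAbs + m.2.natAbs + P.toNat + 1) :=
        mem_boxF (by rw [abs_le]; omega) (by rw [abs_le]; omega)
      have hm2 : ((0:ℤ), P) + m ∈ boxF (m.1.natAbs + m.2.natAbs + P.toNat + 1) := by
        refine mem_boxF ?_ ?_
        · rw [show (((0:ℤ), P) + m).1 = m.1 from by simp]
          rw [abs_le]; omega
        · rw [show (((0:ℤ), P) + m).2 = P + m.2 from by simp]
          rw [abs_le]; omega
      have e1 := hagm m hm1
      have e2 := hagm (((0:ℤ), P) + m) hm2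
      have e3 : (u', v) + (((0:ℤ), P) + m) = (u' + m.1, (v + m.2) + P) := by
        have h1 : ((u', v) + (((0:ℤ), P) + m)).1 = u' + m.1 := by
          show u' + (0 + m.1) = u' + m.1; ring
        have h2 : ((u', v) + (((0:ℤ), P) + m)).2 = (v + m.2) + P := by
          show v + (P + m.2) = (v + m.2) + P; ring
        exact Prod.ext h1 h2
      rw [e3] at e2
      have e5 := htail (v + m.2) (u' + m.1) (by omega)
      rw [e5] at e2
      have e4 : (u', v) + m = (u' + m.1, v + m.2) := rfl
      rw [e4] at e1
      exact e2.symm.trans e1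
    exact hnyz (two_periods_min hpy hpy2 (hdet P hP1) hzy)
  · obtain ⟨u, ⟨h₀, hh₀⟩, hrec⟩ := rows_recur hx hA1 hrowA (-1) (Or.inr rfl)
    have hu : u ∈ PS2 X := by rw [← hh₀]; exact row_mem_PS2 hXs hx h₀
    have hdb : ∀ M : ℤ, ∃ i : ℤ, i ≤ M ∧ row x i ∈ orbit1 u := by
      intro M
      obtain ⟨i, hi1, hi2⟩ := hrec (-M)
      refine ⟨i, by omega, ⟨0, ?_⟩⟩
      rw [hi2]
      funext j
      simp
    have hh₀O : row x h₀ ∈ orbit1 u := by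
      refine ⟨0, ?_⟩
      rw [hh₀]
      funext j
      simp
    obtain ⟨P, hP1, c₀, htail⟩ := downmain hx hR hA1 hrowA hu hdb hh₀O
    have hpy2 : per y ((0:ℤ), P) := by
      intro m
      have habs2 : m.2 ≤ |m.2| ∧ -|m.2| ≤ m.2 := ⟨le_abs_self _, neg_abs_le _⟩
      obtain ⟨u', v, hvM, hagm⟩ := hdn (c₀ - |m.2| - P - 1)
        (m.1.natAbs + m.2.natAbs + P.toNat + 1)
      have hm1 : m ∈ boxF (m.1.natAbs + m.2.natAbs + P.toNat + 1) :=
        mem_boxF (by rw [abs_le]; omega) (by rw [abs_le]; omega)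
      have hm2 : ((0:ℤ), P) + m ∈ boxF (m.1.natAbs + m.2.natAbs + P.toNat + 1) := by
        refine mem_boxF ?_ ?_
        · rw [show (((0:ℤ), P) + m).1 = m.1 from by simp]
          rw [abs_le]; omega
        · rw [show (((0:ℤ), P) + m).2 = P + m.2 from by simp]
          rw [abs_le]; omega
      have e1 := hagm m hm1
      have e2 := hagm (((0:ℤ), P) + m) hm2
      have e3 : (u', v) + (((0:ℤ), P) + m) = (u' + m.1, (v + m.2) + P) := by
        have h1 : ((u', v) + (((0:ℤ), P) + m)).1 = u' + m.1 := by
          show u' + (0 + m.1) = u' + m.1; ring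
        have h2 : ((u', v) + (((0:ℤ), P) + m)).2 = (v + m.2) + P := by
          show v + (P + m.2) = (v + m.2) + P; ring
        exact Prod.ext h1 h2
      rw [e3] at e2
      have e5 := htail (v + m.2) (u' + m.1) (by omega)
      rw [e5] at e2
      have e4 : (u', v) + m = (u' + m.1, v + m.2) := rfl
      rw [e4] at e1
      exact e2.symm.trans e1
    exact hnyz (two_periods_min hpy hpy2 (hdet P hP1) hzy)

theorem exists_seq {σ : Type} (B : σ → Prop) (St : σ → σ → Prop)
    (h0 : ∃ s, B s) (hn : ∀ s, B s → ∃ s', B s' ∧ St s s') :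
    ∃ f : ℕ → σ, (∀ j, B (f j)) ∧ ∀ j, St (f j) (f (j+1)) := by
  classical
  choose F hF1 hF2 using hn
  let g : ℕ → {s : σ // B s} := fun j => Nat.rec ⟨h0.choose, h0.choose_spec⟩
      (fun _ p => ⟨F p.1 p.2, hF1 p.1 p.2⟩) j
  refine ⟨fun j => (g j).1, fun j => (g j).2, fun j => ?_⟩
  show St (g j).1 (g (j+1)).1
  exact hF2 (g j).1 (g j).2

theorem uncount {α : Type*} {s : Set α} (hs : s.Countable)
    (f : (ℕ → Bool) → α) (hinj : Function.Injective f) (hrange : ∀ a, f a ∈ s) : False := by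
  classical
  have hsc : Countable s := hs.to_subtype
  have hc : Countable (ℕ → Bool) := by
    refine Function.Injective.countable (f := fun a => (⟨f a, hrange a⟩ : s)) ?_
    intro a b hab
    exact hinj (congrArg Subtype.val hab)
  obtain ⟨gg, hgg⟩ := exists_injective_nat (ℕ → Bool)
  have he : Function.Injective (fun t : Set ℕ => (fun n => if n ∈ t then true else false : ℕ → Bool)) := by
    intro t₁ t₂ h12
    ext n
    have := congrFun h12 n
    by_cases h1 : n ∈ t₁ <;> by_cases h2 : n ∈ t₂ <;> simp [h1, h2] at this ⊢
  exact Function.cantor_injective (gg ∘ _) (hgg.comp he)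

theorem sft_local_mem {F : Set (Finset (ℤ × ℤ) × (ℤ × ℤ → S))}
    (hXeq : X = {x | ∀ P ∈ F, ¬ occurs2 P.1 P.2 x}) (x' : ℤ × ℤ → S)
    (hloc : ∀ n : ℤ × ℤ, ∀ P ∈ F, ∃ x'' ∈ X, ∀ m ∈ P.1, x' (n + m) = x'' (n + m)) :
    x' ∈ X := by
  rw [hXeq]
  rintro P hP ⟨n, hn⟩
  obtain ⟨x'', hx''X, hag⟩ := hloc n P hP
  have hocc : occurs2 P.1 P.2 x'' := ⟨n, fun m hm => by rw [← hag m hm]; exact hn m hm⟩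
  exact (hXeq ▸ hx''X) P hP hocc

/-- The band lemma: from one-sided, arbitrarily wide box agreements between `y` and
translates of the `(a,b)`-periodic `x`, one gets arbitrarily far horizontal self-agreement
bands for `x`. -/
theorem band_of_hA {y : ℤ × ℤ → S} {a b : ℤ} (hb : 1 ≤ b) (hperab : per x ((a : ℤ), b))
    {v₀ : ℤ}
    (hA : ∀ (M : ℤ) (W : ℕ), ∃ u : ℤ, M ≤ u ∧ ∀ m ∈ boxF W, x ((u, v₀) + m) = y m) :
    ∀ (M R₀ : ℤ), 0 ≤ R₀ → ∃ u δ : ℤ, 1 ≤ δ ∧ M ≤ u ∧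
      ∀ m : ℤ × ℤ, |(b * m.1 - a * m.2) - (b * u - a * v₀)| ≤ R₀ →
        x m = x (m + (δ, 0)) := by
  intro M R₀ hR₀
  have habsa : 0 ≤ |a| := abs_nonneg a
  have hWnn : 0 ≤ R₀ + |a| * b + b := by nlinarith
  obtain ⟨u₁, hu₁M, hag₁⟩ := hA M (R₀ + |a| * b + b).toNat
  obtain ⟨u₂, hu₂M, hag₂⟩ := hA (u₁ + 1) (R₀ + |a| * b + b).toNat
  refine ⟨u₁, u₂ - u₁, by omega, hu₁M, ?_⟩
  intro m hφ
  have hjr : b * ((m.2 - v₀) / b) + (m.2 - v₀) % b = m.2 - v₀ := Int.mul_ediv_add_emod _ b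
  have hr0 : 0 ≤ (m.2 - v₀) % b := Int.emod_nonneg _ (by omega)
  have hrb : (m.2 - v₀) % b < b := Int.emod_lt_of_pos _ (by omega)
  set j : ℤ := (m.2 - v₀) / b with hjdef
  set r : ℤ := (m.2 - v₀) % b with hrdef
  set l' : ℤ := m.1 - j * a - u₁ with hl'def
  have hl' : b * l' = ((b * m.1 - a * m.2) - (b * u₁ - a * v₀)) + a * r := by
    rw [hl'def, hrdef]
    linear_combination (-a) * hjr
  have hl'bd : |l'| ≤ ((R₀ + |a| * b + b).toNat : ℤ) := by
    have h1 : |b * l'| ≤ R₀ + |a| * b := by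
      rw [hl']
      calc |((b * m.1 - a * m.2) - (b * u₁ - a * v₀)) + a * r|
          ≤ |(b * m.1 - a * m.2) - (b * u₁ - a * v₀)| + |a * r| := abs_add_le _ _
        _ ≤ R₀ + |a| * b := by
            have h2 : |a * r| ≤ |a| * b := by
              rw [abs_mul, abs_of_nonneg hr0]
              nlinarith
            linarith
    have h3 : |l'| ≤ |b * l'| := by
      rw [abs_mul, abs_of_pos (show (0:ℤ) < b by omega)]
      nlinarith [abs_nonneg l']
    rw [Int.toNat_of_nonneg hWnn]
    linarith
  have hrbd : |r| ≤ ((R₀ + |a| * b + b).toNat : ℤ) := by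
    rw [abs_of_nonneg hr0, Int.toNat_of_nonneg hWnn]
    nlinarith
  have hm' : (l', r) ∈ boxF (R₀ + |a| * b + b).toNat := mem_boxF hl'bd hrbd
  have hvec : j • ((a:ℤ), b) + ((u₁, v₀) + (l', r)) = m := by
    refine Prod.ext ?_ ?_
    · show j * a + (u₁ + l') = m.1
      rw [hl'def]; ring
    · show j * b + (v₀ + r) = m.2
      rw [hrdef, hjdef]; linarith [hjr]
  have hvec2 : j • ((a:ℤ), b) + ((u₂, v₀) + (l', r)) = m + (u₂ - u₁, 0) := by
    refine Prod.ext ?_ ?_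
    · show j * a + (u₂ + l') = m.1 + (u₂ - u₁)
      rw [hl'def]; ring
    · show j * b + (v₀ + r) = m.2 + 0
      rw [hrdef, hjdef]; linarith [hjr]
  have h1 : x m = x ((u₁, v₀) + (l', r)) := by
    rw [← hvec]
    exact hperab.zsmul j _
  have h2 : x (m + (u₂ - u₁, 0)) = x ((u₂, v₀) + (l', r)) := by
    rw [← hvec2]
    exact hperab.zsmul j _
  rw [h1, h2, hag₁ (l', r) hm', hag₂ (l', r) hm']

theorem nat_find_char {g : ℕ → ℤ} (hSM : StrictMono g) (hunb : ∀ c : ℤ, ∃ J, c < g J) :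
    ∃ K : ℤ → ℕ, ∀ (j : ℕ) (c : ℤ), j < K c ↔ g j ≤ c := by
  classical
  refine ⟨fun c => Nat.find (hunb c), ?_⟩
  intro j c
  show j < Nat.find (hunb c) ↔ g j ≤ c
  constructor
  · intro hj
    by_contra hcon
    push_neg at hcon
    have := Nat.find_min' (hunb c) hcon
    omega
  · intro hle
    by_contra hcon
    push_neg at hcon
    have hspec := Nat.find_spec (hunb c)
    have hmono : g (Nat.find (hunb c)) ≤ g j := hSM.monotone hcon
    omega

set_option maxHeartbeats 2000000 in
theorem splice (hPS : (PS2 X).Countable) (hx : x ∈ X)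
    {F : Set (Finset (ℤ × ℤ) × (ℤ × ℤ → S))} (hFfin : F.Finite)
    (hXeq : X = {x | ∀ P ∈ F, ¬ occurs2 P.1 P.2 x})
    {a b v₀ i₀ : ℤ} (hb : 1 ≤ b)
    (hband : ∀ (M R₀ : ℤ), 0 ≤ R₀ → ∃ u δ : ℤ, 1 ≤ δ ∧ M ≤ u ∧
      ∀ m : ℤ × ℤ, |(b * m.1 - a * m.2) - (b * u - a * v₀)| ≤ R₀ →
        x m = x (m + (δ, 0)))
    (hNEP : ∀ P N : ℤ, 1 ≤ P → ∃ t, N ≤ t ∧ x (t + P, i₀) ≠ x (t, i₀)) :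
    False := by
  classical
  have hXs : IsSFT2 X := ⟨F, hFfin, hXeq⟩
  set D : ℕ := hFfin.toFinset.sup (fun P => P.1.sup (fun m => m.1.natAbs ⊔ m.2.natAbs))
    with hDdef
  have hD : ∀ P ∈ F, ∀ m ∈ P.1, |m.1| ≤ (D:ℤ) ∧ |m.2| ≤ (D:ℤ) := by
    intro P hP m hm
    have h1 : P.1.sup (fun m => m.1.natAbs ⊔ m.2.natAbs) ≤ D :=
      Finset.le_sup (f := fun P => P.1.sup (fun m => m.1.natAbs ⊔ m.2.natAbs))
        (hFfin.mem_toFinset.mpr hP)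
    have h2 : m.1.natAbs ⊔ m.2.natAbs ≤ P.1.sup (fun m => m.1.natAbs ⊔ m.2.natAbs) :=
      Finset.le_sup (f := fun m : ℤ × ℤ => m.1.natAbs ⊔ m.2.natAbs) hm
    have h3 : m.1.natAbs ≤ D := le_trans (le_trans (le_max_left _ _) h2) h1
    have h4 : m.2.natAbs ≤ D := le_trans (le_trans (le_max_right _ _) h2) h1
    constructor <;> rw [abs_le] <;> omega
  set C₀ : ℤ := (D:ℤ) * (b + |a|) with hC₀def
  have hC₀ : 0 ≤ C₀ := mul_nonneg (by positivity) (by have := abs_nonneg a; omega)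
  -- the stage data: (u, δ, Dacc)
  set Bse : ℤ × ℤ × ℤ → Prop := fun s => 1 ≤ s.2.1 ∧ 0 ≤ s.2.2 ∧
      ∀ m : ℤ × ℤ, |(b * m.1 - a * m.2) - (b * s.1 - a * v₀)| ≤ b * s.2.2 + 2*C₀ + 1 →
        x m = x (m + (s.2.1, 0)) with hBdef
  set Stp : (ℤ × ℤ × ℤ) → (ℤ × ℤ × ℤ) → Prop := fun s s' =>
      s'.2.2 = s.2.2 + s.2.1 ∧ (b * s.1 - a * v₀) + 2*C₀ + 1 < (b * s'.1 - a * v₀) ∧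
      ∀ d : ℤ, 0 ≤ d → d ≤ s.2.2 → ∃ l : ℤ, (b * s.1 - a * v₀) ≤ b * l - a * i₀ ∧
        b * l - a * i₀ < (b * s'.1 - a * v₀) ∧
        x (l + d + s.2.1, i₀) ≠ x (l + d, i₀) with hSdef
  have h0 : ∃ s, Bse s := by
    obtain ⟨u, δ, hδ, hM, hbnd⟩ := hband 0 (b * 0 + 2*C₀ + 1) (by omega)
    exact ⟨(u, δ, 0), hδ, le_refl 0, hbnd⟩
  have hnext : ∀ s, Bse s → ∃ s', Bse s' ∧ Stp s s' := by
    intro s hBs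
    obtain ⟨hδ1, hD0, hbnd⟩ := hBs
    have hwit : ∀ d : ℤ, ∃ l : ℤ, 0 ≤ d → d ≤ s.2.2 →
        ((b * s.1 - a * v₀) ≤ b * l - a * i₀ ∧ x (l + d + s.2.1, i₀) ≠ x (l + d, i₀)) := by
      intro d
      by_cases hd : 0 ≤ d ∧ d ≤ s.2.2
      · obtain ⟨t, htN, htne⟩ := hNEP s.2.1 (((b * s.1 - a * v₀) + a * i₀) / b + 1 + d) hδ1
        refine ⟨t - d, fun _ _ => ⟨?_, ?_⟩⟩
        · have hq := Int.lt_ediv_add_one_mul_self ((b * s.1 - a * v₀) + a * i₀)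
            (show (0:ℤ) < b by omega)
          have h5 : b * (((b * s.1 - a * v₀) + a * i₀) / b + 1) ≤ b * (t - d) :=
            mul_le_mul_of_nonneg_left (by linarith) (by omega)
          linarith
        · rw [show t - d + d + s.2.1 = t + s.2.1 from by ring,
            show t - d + d = t from by ring]
          exact htne
      · exact ⟨0, fun h1 h2 => absurd ⟨h1, h2⟩ hd⟩
    choose lw hlw using hwit
    set Tb : ℤ := (∑ d ∈ Finset.Icc (0:ℤ) s.2.2, |b * lw d - a * i₀|) + 1 with hTbdef
    have hTb : ∀ d, 0 ≤ d → d ≤ s.2.2 → b * lw d - a * i₀ < Tb := by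
      intro d h1 h2
      have hmem : d ∈ Finset.Icc (0:ℤ) s.2.2 := Finset.mem_Icc.mpr ⟨h1, h2⟩
      have hle := Finset.single_le_sum (f := fun d => |b * lw d - a * i₀|)
        (fun i _ => abs_nonneg _) hmem
      have habs := le_abs_self (b * lw d - a * i₀)
      rw [hTbdef]
      linarith
    obtain ⟨u', δ', hδ'1, hu'M, hband'⟩ := hband
      ((max ((b * s.1 - a * v₀) + 2*C₀ + 1) Tb + a * v₀) / b + 1)
      (b * (s.2.2 + s.2.1) + 2*C₀ + 1) (by nlinarith)
    have hΘ' : max ((b * s.1 - a * v₀) + 2*C₀ + 1) Tb < b * u' - a * v₀ := by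
      have hq := Int.lt_ediv_add_one_mul_self
        (max ((b * s.1 - a * v₀) + 2*C₀ + 1) Tb + a * v₀) (show (0:ℤ) < b by omega)
      have h5 : b * ((max ((b * s.1 - a * v₀) + 2*C₀ + 1) Tb + a * v₀) / b + 1) ≤ b * u' :=
        mul_le_mul_of_nonneg_left hu'M (by omega)
      linarith
    refine ⟨(u', δ', s.2.2 + s.2.1), ⟨hδ'1, by show (0:ℤ) ≤ s.2.2 + s.2.1; omega, hband'⟩,
      rfl, ?_, ?_⟩
    · have h6 := le_max_left ((b * s.1 - a * v₀) + 2*C₀ + 1) Tb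
      show (b * s.1 - a * v₀) + 2*C₀ + 1 < b * u' - a * v₀
      linarith
    · intro d h1 h2
      obtain ⟨hw1, hw2⟩ := hlw d h1 h2
      refine ⟨lw d, hw1, ?_, hw2⟩
      have h3 := hTb d h1 h2
      have h4 := le_max_right ((b * s.1 - a * v₀) + 2*C₀ + 1) Tb
      show b * lw d - a * i₀ < b * u' - a * v₀
      linarith
  obtain ⟨f, hBf, hSf⟩ := exists_seq Bse Stp h0 hnext
  have hδj : ∀ j, 1 ≤ (f j).2.1 := fun j => (hBf j).1
  have hDj : ∀ j, 0 ≤ (f j).2.2 := fun j => (hBf j).2.1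
  have hbj : ∀ j, ∀ m : ℤ × ℤ,
      |(b * m.1 - a * m.2) - (b * (f j).1 - a * v₀)| ≤ b * (f j).2.2 + 2*C₀ + 1 →
      x m = x (m + ((f j).2.1, 0)) := fun j => (hBf j).2.2
  have hstep1 : ∀ j, (f (j+1)).2.2 = (f j).2.2 + (f j).2.1 := fun j => (hSf j).1
  have hstep2 : ∀ j, (b * (f j).1 - a * v₀) + 2*C₀ + 1 < b * (f (j+1)).1 - a * v₀ :=
    fun j => (hSf j).2.1
  have hwitj : ∀ j, ∀ d : ℤ, 0 ≤ d → d ≤ (f j).2.2 → ∃ l : ℤ,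
      (b * (f j).1 - a * v₀) ≤ b * l - a * i₀ ∧
      b * l - a * i₀ < b * (f (j+1)).1 - a * v₀ ∧
      x (l + d + (f j).2.1, i₀) ≠ x (l + d, i₀) := fun j => (hSf j).2.2
  have hΘSM : StrictMono (fun j => b * (f j).1 - a * v₀) :=
    strictMono_nat_of_lt_succ (fun j => by have := hstep2 j; omega)
  have hΘunb : ∀ c : ℤ, ∃ J : ℕ, c < b * (f J).1 - a * v₀ := by
    intro c
    have hgrow : ∀ j : ℕ, (b * (f 0).1 - a * v₀) + (j:ℤ) ≤ b * (f j).1 - a * v₀ := by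
      intro j
      induction j with
      | zero => simp
      | succ j ih =>
          have h1 := hstep2 j
          push_cast
          push_cast at ih
          linarith
    refine ⟨(c - (b * (f 0).1 - a * v₀)).toNat + 1, ?_⟩
    have := hgrow ((c - (b * (f 0).1 - a * v₀)).toNat + 1)
    push_cast at this
    omega
  obtain ⟨K, hKlem⟩ := nat_find_char hΘSM hΘunb
  have hKmono : ∀ {c c' : ℤ}, c ≤ c' → K c ≤ K c' := by
    intro c c' hcc
    by_contra hcon
    push_neg at hcon
    have h1 := (hKlem (K c') c).mp hcon
    have h2 := (hKlem (K c') c').mpr (le_trans h1 hcc)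
    omega
  have hDsum : ∀ j : ℕ, (f j).2.2 = (f 0).2.2 + ∑ i ∈ Finset.range j, (f i).2.1 := by
    intro j
    induction j with
    | zero => simp
    | succ j ih =>
        rw [Finset.sum_range_succ, hstep1 j, ih]
        ring
  have hgbd : ∀ (α : ℕ → Bool) (J : ℕ),
      0 ≤ (∑ i ∈ Finset.range J, (if α i then (f i).2.1 else 0)) ∧
      (∑ i ∈ Finset.range J, (if α i then (f i).2.1 else 0)) ≤ (f J).2.2 := by
    intro α J
    constructor
    · apply Finset.sum_nonneg
      intro i _
      by_cases h : α i <;> simp [h]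
      linarith [hδj i]
    · calc (∑ i ∈ Finset.range J, (if α i then (f i).2.1 else 0))
          ≤ ∑ i ∈ Finset.range J, (f i).2.1 := by
            apply Finset.sum_le_sum
            intro i _
            by_cases h : α i <;> simp [h]
            linarith [hδj i]
        _ ≤ (f J).2.2 := by rw [hDsum J]; linarith [hDj 0]
  -- the spliced configurations
  have hmemb : ∀ α : ℕ → Bool,
      (fun m : ℤ × ℤ => x (m + (∑ i ∈ Finset.range (K (b * m.1 - a * m.2)),
        (if α i then (f i).2.1 else 0), 0))) ∈ X := by
    intro α
    apply sft_local_mem hXeq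
    intro n P hP
    suffices hloc : ∃ g : ℤ, ∀ m ∈ P.1,
        x ((n + m) + (∑ i ∈ Finset.range (K (b * (n+m).1 - a * (n+m).2)),
          (if α i then (f i).2.1 else 0), 0)) = x ((n + m) + (g, 0)) by
      obtain ⟨g, hg⟩ := hloc
      refine ⟨shift2 (g, 0) x, sft_shift_mem hXs hx (g, 0), fun m hm => ?_⟩
      rw [hg m hm]
      show x ((n + m) + (g, 0)) = x ((g, 0) + (n + m))
      rw [add_comm]
    have hφrange : ∀ m ∈ P.1, (b * n.1 - a * n.2) - C₀ ≤ b * (n+m).1 - a * (n+m).2 ∧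
        b * (n+m).1 - a * (n+m).2 ≤ (b * n.1 - a * n.2) + C₀ := by
      intro m hm
      obtain ⟨hm1, hm2⟩ := hD P hP m hm
      have e : b * (n+m).1 - a * (n+m).2 = (b * n.1 - a * n.2) + (b * m.1 - a * m.2) := by
        simp only [Prod.fst_add, Prod.snd_add]
        ring
      have habs : |b * m.1 - a * m.2| ≤ C₀ := by
        calc |b * m.1 - a * m.2| = |b * m.1 + (-(a * m.2))| := by rw [sub_eq_add_neg]
          _ ≤ |b * m.1| + |(-(a * m.2))| := abs_add_le _ _
          _ = |b * m.1| + |a * m.2| := by rw [abs_neg]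
          _ ≤ C₀ := by
            rw [abs_mul, abs_mul, abs_of_pos (show (0:ℤ) < b by omega), hC₀def]
            have h5 : |a| * |m.2| ≤ |a| * (D:ℤ) :=
              mul_le_mul_of_nonneg_left hm2 (abs_nonneg a)
            have h6 : b * |m.1| ≤ b * (D:ℤ) :=
              mul_le_mul_of_nonneg_left hm1 (by omega)
            nlinarith
      rw [e]
      rw [abs_le] at habs
      constructor <;> linarith [habs.1, habs.2]
    by_cases hcase : K ((b * n.1 - a * n.2) + C₀) = K ((b * n.1 - a * n.2) - C₀)
    · refine ⟨∑ i ∈ Finset.range (K ((b * n.1 - a * n.2) - C₀)),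
        (if α i then (f i).2.1 else 0), ?_⟩
      intro m hm
      have hKq : K (b * (n+m).1 - a * (n+m).2) = K ((b * n.1 - a * n.2) - C₀) := by
        have h1 := hKmono (hφrange m hm).1
        have h2 := hKmono (hφrange m hm).2
        omega
      rw [hKq]
    · -- exactly one threshold inside the window
      have hκab : K ((b * n.1 - a * n.2) + C₀) = K ((b * n.1 - a * n.2) - C₀) + 1 := by
        have h0' := hKmono (show (b * n.1 - a * n.2) - C₀ ≤ (b * n.1 - a * n.2) + C₀ by omega)
        by_contra hcon
        have hge : K ((b * n.1 - a * n.2) - C₀) + 2 ≤ K ((b * n.1 - a * n.2) + C₀) := by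
          omega
        have h1 : ¬ (b * (f (K ((b * n.1 - a * n.2) - C₀))).1 - a * v₀ ≤
            (b * n.1 - a * n.2) - C₀) := by
          intro hle
          have := (hKlem _ _).mpr hle
          omega
        push_neg at h1
        have h2 : b * (f (K ((b * n.1 - a * n.2) - C₀) + 1)).1 - a * v₀ ≤
            (b * n.1 - a * n.2) + C₀ := (hKlem _ _).mp (by omega)
        have h3 := hstep2 (K ((b * n.1 - a * n.2) - C₀))
        omega
      set J := K ((b * n.1 - a * n.2) - C₀) with hJdef
      have hΘJlb : (b * n.1 - a * n.2) - C₀ < b * (f J).1 - a * v₀ := by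
        have h1 : ¬ (b * (f J).1 - a * v₀ ≤ (b * n.1 - a * n.2) - C₀) := by
          intro hle
          have := (hKlem J ((b * n.1 - a * n.2) - C₀)).mpr hle
          omega
        omega
      refine ⟨∑ i ∈ Finset.range J, (if α i then (f i).2.1 else 0), ?_⟩
      intro m hm
      have hK1 : J ≤ K (b * (n+m).1 - a * (n+m).2) := by
        have := hKmono (hφrange m hm).1
        omega
      have hK2 : K (b * (n+m).1 - a * (n+m).2) ≤ J + 1 := by
        have := hKmono (hφrange m hm).2
        omega
      rcases (show K (b * (n+m).1 - a * (n+m).2) = J ∨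
          K (b * (n+m).1 - a * (n+m).2) = J + 1 from by omega) with hKq | hKq
      · rw [hKq]
      · rw [hKq, Finset.sum_range_succ]
        by_cases hαJ : α J
        · rw [if_pos hαJ]
          have hgb := hgbd α J
          have hΘle : b * (f J).1 - a * v₀ ≤ b * (n+m).1 - a * (n+m).2 :=
            (hKlem J _).mp (by omega)
          have hub2 : b * (n+m).1 - a * (n+m).2 ≤ (b * n.1 - a * n.2) + C₀ :=
            (hφrange m hm).2
          have hband2 := hbj J ((n+m) + (∑ i ∈ Finset.range J,
            (if α i then (f i).2.1 else 0), 0))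
          have hφm' : b * ((n+m) + (∑ i ∈ Finset.range J,
              (if α i then (f i).2.1 else 0), 0)).1 -
              a * ((n+m) + (∑ i ∈ Finset.range J,
              (if α i then (f i).2.1 else 0), 0)).2
              = (b * (n+m).1 - a * (n+m).2) +
                b * (∑ i ∈ Finset.range J, (if α i then (f i).2.1 else 0)) := by
            have e1 : ((n+m) + (∑ i ∈ Finset.range J,
                (if α i then (f i).2.1 else 0), (0:ℤ))).1
                = (n+m).1 + (∑ i ∈ Finset.range J, (if α i then (f i).2.1 else 0)) := rfl
            have e2 : ((n+m) + (∑ i ∈ Finset.range J,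
                (if α i then (f i).2.1 else 0), (0:ℤ))).2 = (n+m).2 + 0 := rfl
            rw [e1, e2]
            ring
          have hbmul : b * (∑ i ∈ Finset.range J, (if α i then (f i).2.1 else 0)) ≤
              b * (f J).2.2 := mul_le_mul_of_nonneg_left hgb.2 (by omega)
          have hbmul0 : 0 ≤ b * (∑ i ∈ Finset.range J, (if α i then (f i).2.1 else 0)) :=
            mul_nonneg (by omega) hgb.1
          have hres := hband2 (by
            rw [hφm', abs_le]
            constructor <;> linarith)
          rw [show ((n+m) + (∑ i ∈ Finset.range J, (if α i then (f i).2.1 else 0), 0)) +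
              ((f J).2.1, 0) = (n+m) + ((∑ i ∈ Finset.range J,
              (if α i then (f i).2.1 else 0)) + (f J).2.1, 0) from by
            refine Prod.ext ?_ ?_
            · show (n+m).1 + (∑ i ∈ Finset.range J, (if α i then (f i).2.1 else 0))
                + (f J).2.1 = (n+m).1 + ((∑ i ∈ Finset.range J,
                (if α i then (f i).2.1 else 0)) + (f J).2.1)
              ring
            · show (n+m).2 + 0 + 0 = (n+m).2 + 0
              ring] at hres
          exact hres.symm
        · rw [if_neg hαJ, add_zero]
  -- the rows, injectivity
  have hrowmem : ∀ α : ℕ → Bool,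
      (fun l : ℤ => x ((l, i₀) + (∑ i ∈ Finset.range (K (b * l - a * i₀)),
        (if α i then (f i).2.1 else 0), 0))) ∈ PS2 X := by
    intro α
    refine ⟨shift2 (0, i₀) (fun m : ℤ × ℤ => x (m + (∑ i ∈ Finset.range
      (K (b * m.1 - a * m.2)), (if α i then (f i).2.1 else 0), 0))),
      sft_shift_mem hXs (hmemb α) (0, i₀), ?_⟩
    funext l
    have e : ((0:ℤ), i₀) + (l, 0) = (l, i₀) := by
      refine Prod.ext ?_ ?_
      · show (0:ℤ) + l = l
        ring
      · show i₀ + 0 = i₀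
        ring
    have e' : (((0:ℤ), i₀) + (l, 0)) + (∑ i ∈ Finset.range
        (K (b * (((0:ℤ), i₀) + (l, 0)).1 - a * (((0:ℤ), i₀) + (l, 0)).2)),
        (if α i then (f i).2.1 else 0), (0:ℤ))
        = (l, i₀) + (∑ i ∈ Finset.range (K (b * l - a * i₀)),
          (if α i then (f i).2.1 else 0), 0) := by
      rw [e]
    exact congrArg x e'
  have hinj : Function.Injective (fun (α : ℕ → Bool) =>
      (fun l : ℤ => x ((l, i₀) + (∑ i ∈ Finset.range (K (b * l - a * i₀)),
        (if α i then (f i).2.1 else 0), 0)))) := by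
    intro α β hαβ
    by_contra hne
    have hex : ∃ j, α j ≠ β j := by
      by_contra hno
      push_neg at hno
      exact hne (funext hno)
    set J := Nat.find hex with hJdef
    have hJspec : α J ≠ β J := Nat.find_spec hex
    have hJmin : ∀ i, i < J → α i = β i := fun i hi => not_not.mp (Nat.find_min hex hi)
    have hdeq : (∑ i ∈ Finset.range J, (if α i then (f i).2.1 else 0)) =
        (∑ i ∈ Finset.range J, (if β i then (f i).2.1 else 0)) :=
      Finset.sum_congr rfl (fun i hi => by rw [hJmin i (Finset.mem_range.mp hi)])
    have hgb := hgbd α J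
    obtain ⟨l, hl1, hl2, hlne⟩ := hwitj J
      (∑ i ∈ Finset.range J, (if α i then (f i).2.1 else 0)) hgb.1 hgb.2
    have hKl : K (b * l - a * i₀) = J + 1 := by
      have h1 : J < K (b * l - a * i₀) := (hKlem J _).mpr hl1
      have h2 : ¬ (J + 1 < K (b * l - a * i₀)) := by
        intro hcon
        have := (hKlem (J+1) _).mp hcon
        omega
      omega
    have hval := congrFun hαβ l
    simp only [] at hval
    rw [hKl, Finset.sum_range_succ, Finset.sum_range_succ, ← hdeq] at hval
    have harg : ∀ c : ℤ, ((l, i₀) + (c, (0:ℤ))) = (l + c, i₀) := by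
      intro c
      refine Prod.ext ?_ ?_
      · rfl
      · show i₀ + 0 = i₀
        ring
    rw [harg, harg] at hval
    rcases Bool.dichotomy (α J) with hα | hα <;> rcases Bool.dichotomy (β J) with hβ | hβ
    · rw [hα, hβ] at hJspec; exact hJspec rfl
    · -- α J = false, β J = true
      have hcα : (if α J = true then (f J).2.1 else 0) = 0 := if_neg (by rw [hα]; simp)
      have hcβ : (if β J = true then (f J).2.1 else 0) = (f J).2.1 := if_pos hβ
      rw [hcα, hcβ, add_zero] at hval
      rw [← add_assoc] at hval
      exact hlne hval.symm
    · -- α J = true, β J = false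
      have hcα : (if α J = true then (f J).2.1 else 0) = (f J).2.1 := if_pos hα
      have hcβ : (if β J = true then (f J).2.1 else 0) = 0 := if_neg (by rw [hβ]; simp)
      rw [hcα, hcβ, add_zero] at hval
      rw [← add_assoc] at hval
      exact hlne hval
    · rw [hα, hβ] at hJspec; exact hJspec rfl
  exact uncount hPS _ hinj hrowmem

theorem normV {y : ℤ × ℤ → S} {a b : ℤ} (hb : 1 ≤ b) (hperab : per x ((a:ℤ), b))
    (hag : ∀ W : ℕ, ∃ g : ℤ × ℤ, ∀ m ∈ boxF W, x (g + m) = y m) :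
    (∃ g : ℤ × ℤ, ∀ m, y m = x (g + m)) ∨
    (∃ v₀ : ℤ,
      (∀ (M : ℤ) (W : ℕ), ∃ u : ℤ, M ≤ u ∧ ∀ m ∈ boxF W, x ((u, v₀) + m) = y m) ∨
      (∀ (M : ℤ) (W : ℕ), ∃ u : ℤ, u ≤ M ∧ ∀ m ∈ boxF W, x ((u, v₀) + m) = y m)) := by
  classical
  choose g hg using hag
  have key : ∀ (W : ℕ) (m : ℤ × ℤ),
      x (((g W).1 - ((g W).2 / b) * a, (g W).2 % b) + m) = x (g W + m) := by
    intro W m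
    have e : ((g W).2 / b) • ((a:ℤ), b) +
        (((g W).1 - ((g W).2 / b) * a, (g W).2 % b) + m) = g W + m := by
      refine Prod.ext ?_ ?_
      · show ((g W).2 / b) * a + (((g W).1 - ((g W).2 / b) * a) + m.1) = (g W).1 + m.1
        ring
      · show ((g W).2 / b) * b + ((g W).2 % b + m.2) = (g W).2 + m.2
        linear_combination Int.mul_ediv_add_emod (g W).2 b
    have happ := hperab.zsmul ((g W).2 / b)
      (((g W).1 - ((g W).2 / b) * a, (g W).2 % b) + m)
    rw [e] at happ
    exact happ.symm
  have hg2 : ∀ (W : ℕ), ∀ m ∈ boxF W,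
      x (((g W).1 - ((g W).2 / b) * a, (g W).2 % b) + m) = y m :=
    fun W m hm => (key W m).trans (hg W m hm)
  obtain ⟨v₀, hv₀⟩ := pigeon_int Set.infinite_univ (fun W => (g W).2 % b) 0 (b - 1)
    (fun W _ => ⟨Int.emod_nonneg _ (by omega), by
      show (g W).2 % b ≤ b - 1
      have := Int.emod_lt_of_pos (g W).2 (show (0:ℤ) < b by omega); omega⟩)
  have hT₁ : {W : ℕ | (g W).2 % b = v₀}.Infinite := by
    refine hv₀.mono ?_
    intro W hW
    exact hW.2
  by_cases hrep : ∃ u₀ : ℤ, {W | W ∈ {W : ℕ | (g W).2 % b = v₀} ∧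
      (g W).1 - ((g W).2 / b) * a = u₀}.Infinite
  · left
    obtain ⟨u₀, hu₀⟩ := hrep
    refine ⟨(u₀, v₀), fun m => ?_⟩
    obtain ⟨W, hWmem, hWge⟩ := inf_nat_unbounded hu₀ (max m.1.natAbs m.2.natAbs)
    obtain ⟨hW1, hW2⟩ := hWmem
    have hm : m ∈ boxF W := mem_boxF (by rw [abs_le]; omega) (by rw [abs_le]; omega)
    have hval := hg2 W m hm
    rw [hW1, hW2] at hval
    exact hval.symm
  · push_neg at hrep
    have hfin : ∀ M : ℤ, 0 ≤ M →
        {W | W ∈ {W : ℕ | (g W).2 % b = v₀} ∧ -M ≤ (g W).1 - ((g W).2 / b) * a ∧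
          (g W).1 - ((g W).2 / b) * a ≤ M}.Finite := by
      intro M _
      have hsub : {W | W ∈ {W : ℕ | (g W).2 % b = v₀} ∧ -M ≤ (g W).1 - ((g W).2 / b) * a ∧
          (g W).1 - ((g W).2 / b) * a ≤ M} ⊆
          ⋃ c ∈ Finset.Icc (-M) M, {W | W ∈ {W : ℕ | (g W).2 % b = v₀} ∧
            (g W).1 - ((g W).2 / b) * a = c} := by
        intro W hW
        simp only [Set.mem_iUnion]
        exact ⟨(g W).1 - ((g W).2 / b) * a, by simpa [Finset.mem_Icc] using hW.2, hW.1, rfl⟩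
      exact (Set.Finite.biUnion (Finset.finite_toSet _)
        (fun c _ => hrep c)).subset hsub
    right
    refine ⟨v₀, ?_⟩
    rcases extract_unbounded hT₁ (fun W => (g W).1 - ((g W).2 / b) * a) hfin with hup | hdn
    · left
      intro M W
      obtain ⟨W', hW'T, hW'ge, hW'M⟩ := hup M W
      refine ⟨(g W').1 - ((g W').2 / b) * a, hW'M, fun m hm => ?_⟩
      have hval := hg2 W' m (boxF_mono hW'ge hm)
      rwa [hW'T] at hval
    · right
      intro M W
      obtain ⟨W', hW'T, hW'ge, hW'M⟩ := hdn M W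
      refine ⟨(g W').1 - ((g W').2 / b) * a, hW'M, fun m hm => ?_⟩
      have hval := hg2 W' m (boxF_mono hW'ge hm)
      rwa [hW'T] at hval

theorem bplus {y : ℤ × ℤ → S} (hXs : IsSFT2 X) (hPS : (PS2 X).Countable) (hx : x ∈ X)
    {a b : ℤ} (hb : 1 ≤ b) (hperab : per x ((a:ℤ), b)) {v₀ : ℤ}
    (hA : ∀ (M : ℤ) (W : ℕ), ∃ u : ℤ, M ≤ u ∧ ∀ m ∈ boxF W, x ((u, v₀) + m) = y m) :
    ∃ P : ℤ, 1 ≤ P ∧ per y ((P:ℤ), (0:ℤ)) := by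
  classical
  by_cases hEP : ∀ i : ℤ, ∃ PP NN : ℤ, 1 ≤ PP ∧ ∀ t : ℤ, NN ≤ t → x (t + PP, i) = x (t, i)
  · choose Pf Nf hPf using hEP
    set Pbig : ℤ := ∏ c ∈ Finset.Icc (0:ℤ) (b-1), Pf c with hPbigdef
    have hPbig1 : 1 ≤ Pbig := by
      rw [hPbigdef]
      refine Finset.prod_induction Pf (fun z => 1 ≤ z) (fun u v hu hv => ?_) le_rfl
        (fun c _ => (hPf c).1)
      nlinarith
    have hrow : ∀ i : ℤ, ∃ N : ℤ, ∀ t : ℤ, N ≤ t → x (t + Pbig, i) = x (t, i) := by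
      intro i
      have hc1 : 0 ≤ i % b := Int.emod_nonneg _ (by omega)
      have hc2 : i % b ≤ b - 1 := by
        have := Int.emod_lt_of_pos i (show (0:ℤ) < b by omega); omega
      have hrel : ∀ l : ℤ, x (l, i) = x (l - (i / b) * a, i % b) := by
        intro l
        have happ := hperab.zsmul (i / b) (l - (i / b) * a, i % b)
        have e : (i / b) • ((a:ℤ), b) + (l - (i / b) * a, i % b) = (l, i) := by
          refine Prod.ext ?_ ?_
          · show (i / b) * a + (l - (i / b) * a) = l
            ring
          · show (i / b) * b + i % b = i
            linear_combination Int.mul_ediv_add_emod i b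
        rw [e] at happ
        exact happ
      obtain ⟨Q, hQ⟩ := Finset.dvd_prod_of_mem Pf (Finset.mem_Icc.mpr ⟨hc1, hc2⟩)
      rw [← hPbigdef] at hQ
      have hQ0 : 0 ≤ Q := by nlinarith [(hPf (i % b)).1, hPbig1]
      have hiter : ∀ (q : ℕ) (t : ℤ), Nf (i % b) ≤ t →
          x (t + Pf (i % b) * (q:ℤ), i % b) = x (t, i % b) := by
        intro q
        induction q with
        | zero => intro t _; simp
        | succ q ih =>
            intro t ht
            have h1 : 0 ≤ Pf (i % b) * (q:ℤ) :=
              mul_nonneg (by linarith [(hPf (i % b)).1]) (by positivity)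
            rw [show t + Pf (i % b) * ((q+1:ℕ):ℤ) = (t + Pf (i % b) * (q:ℤ)) + Pf (i % b)
              from by push_cast; ring]
            rw [(hPf (i % b)).2 (t + Pf (i % b) * (q:ℤ)) (by linarith)]
            exact ih t ht
      refine ⟨Nf (i % b) + (i / b) * a, fun t ht => ?_⟩
      rw [hrel (t + Pbig), hrel t]
      rw [show t + Pbig - (i / b) * a = (t - (i / b) * a) + Pf (i % b) * (Q.toNat:ℤ) from by
        rw [Int.toNat_of_nonneg hQ0]; linarith [hQ]]
      exact hiter Q.toNat (t - (i / b) * a) (by linarith)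
    refine ⟨Pbig, hPbig1, ?_⟩
    intro m
    obtain ⟨N, hN⟩ := hrow (v₀ + m.2)
    obtain ⟨u, huM, hagm⟩ := hA (N + m.1.natAbs + 1) (m.1.natAbs + m.2.natAbs + Pbig.toNat + 1)
    have hm1 : m ∈ boxF (m.1.natAbs + m.2.natAbs + Pbig.toNat + 1) :=
      mem_boxF (by rw [abs_le]; omega) (by rw [abs_le]; omega)
    have hm2 : ((Pbig:ℤ), (0:ℤ)) + m ∈ boxF (m.1.natAbs + m.2.natAbs + Pbig.toNat + 1) := by
      refine mem_boxF ?_ ?_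
      · rw [show (((Pbig:ℤ), (0:ℤ)) + m).1 = Pbig + m.1 from rfl, abs_le]
        omega
      · rw [show (((Pbig:ℤ), (0:ℤ)) + m).2 = 0 + m.2 from rfl, abs_le]
        omega
    have e1 := hagm m hm1
    have e2 := hagm ((Pbig, (0:ℤ)) + m) hm2
    have e3 : (u, v₀) + ((Pbig, (0:ℤ)) + m) = ((u + m.1) + Pbig, v₀ + m.2) := by
      refine Prod.ext ?_ ?_
      · show u + (Pbig + m.1) = (u + m.1) + Pbig
        ring
      · show v₀ + (0 + m.2) = v₀ + m.2
        ring
    rw [e3] at e2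
    rw [hN (u + m.1) (by omega)] at e2
    have e4 : (u, v₀) + m = (u + m.1, v₀ + m.2) := rfl
    rw [e4] at e1
    exact e2.symm.trans e1
  · push_neg at hEP
    obtain ⟨i₀, hNEP0⟩ := hEP
    obtain ⟨F, hFfin, hXeq⟩ := hXs
    exact absurd (splice hPS hx hFfin hXeq hb (band_of_hA hb hperab hA)
      (fun P N hP => by
        obtain ⟨t, ht1, ht2⟩ := hNEP0 P N hP
        exact ⟨t, ht1, ht2⟩)) id

theorem bminus {y : ℤ × ℤ → S} (hXs : IsSFT2 X) (hPS : (PS2 X).Countable) (hx : x ∈ X)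
    {a b : ℤ} (hb : 1 ≤ b) (hperab : per x ((a:ℤ), b)) {v₀ : ℤ}
    (hA : ∀ (M : ℤ) (W : ℕ), ∃ u : ℤ, u ≤ M ∧ ∀ m ∈ boxF W, x ((u, v₀) + m) = y m) :
    ∃ P : ℤ, 1 ≤ P ∧ per y ((P:ℤ), (0:ℤ)) := by
  classical
  obtain ⟨F, hFfin, hXeq⟩ := hXs
  have hννid : ∀ m : ℤ × ℤ, ((-(-m.1) : ℤ), m.2) = m := by
    intro m
    refine Prod.ext ?_ ?_
    · show -(-m.1) = m.1
      ring
    · rfl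
  have hocc : ∀ (D : Finset (ℤ × ℤ)) (p : ℤ × ℤ → S) (c : ℤ × ℤ → S),
      occurs2 D p (fun m : ℤ × ℤ => c (-m.1, m.2)) ↔
      occurs2 (D.image (fun m : ℤ × ℤ => (-m.1, m.2)))
        (fun m : ℤ × ℤ => p (-m.1, m.2)) c := by
    intro D p c
    constructor
    · rintro ⟨n, hn⟩
      refine ⟨(-n.1, n.2), ?_⟩
      intro m' hm'
      obtain ⟨m, hm, rfl⟩ := Finset.mem_image.mp hm'
      have h1 : c (-(n+m).1, (n+m).2) = p m := hn m hm
      have e1 : ((-n.1, n.2) : ℤ×ℤ) + (-m.1, m.2) = (-(n+m).1, (n+m).2) := by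
        refine Prod.ext ?_ ?_
        · show -n.1 + -m.1 = -(n.1 + m.1)
          ring
        · rfl
      show c ((-n.1, n.2) + (-m.1, m.2)) = p (-(-m.1), m.2)
      rw [e1, h1, hννid m]
    · rintro ⟨n', hn'⟩
      refine ⟨(-n'.1, n'.2), ?_⟩
      intro m hm
      have h1 : c (n' + ((-m.1 : ℤ), m.2)) = p ((-(-m.1) : ℤ), m.2) :=
        hn' (-m.1, m.2) (Finset.mem_image.mpr ⟨m, hm, rfl⟩)
      have e1 : n' + ((-m.1 : ℤ), m.2) = (-(((-n'.1, n'.2) : ℤ×ℤ) + m).1,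
          (((-n'.1, n'.2) : ℤ×ℤ) + m).2) := by
        refine Prod.ext ?_ ?_
        · show n'.1 + -m.1 = -(-n'.1 + m.1)
          ring
        · rfl
      rw [e1, hννid m] at h1
      exact h1
  have hX'eq : {c : ℤ × ℤ → S | (fun m : ℤ × ℤ => c (-m.1, m.2)) ∈ X} =
      {c | ∀ P ∈ (fun P : Finset (ℤ × ℤ) × (ℤ × ℤ → S) =>
        (P.1.image (fun m : ℤ × ℤ => (-m.1, m.2)),
          fun m : ℤ × ℤ => P.2 (-m.1, m.2))) '' F, ¬ occurs2 P.1 P.2 c} := by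
    ext c
    simp only [Set.mem_setOf_eq]
    constructor
    · intro hc P' hP'
      obtain ⟨P, hP, rfl⟩ := hP'
      have h1 := (hXeq ▸ hc) P hP
      intro hoc
      exact h1 ((hocc P.1 P.2 c).mpr hoc)
    · intro hc
      rw [hXeq]
      intro P hP hoc
      exact hc _ ⟨P, hP, rfl⟩ ((hocc P.1 P.2 c).mp hoc)
  have hX'sft : IsSFT2 {c : ℤ × ℤ → S | (fun m : ℤ × ℤ => c (-m.1, m.2)) ∈ X} :=
    ⟨_, hFfin.image _, hX'eq⟩
  have hX'PS : (PS2 {c : ℤ × ℤ → S | (fun m : ℤ × ℤ => c (-m.1, m.2)) ∈ X}).Countable := by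
    refine (hPS.image (fun w : ℤ → S => (fun l : ℤ => w (-l)))).mono ?_
    rintro w ⟨c, hc, rfl⟩
    refine ⟨row (fun m : ℤ × ℤ => c (-m.1, m.2)) 0,
      ⟨(fun m : ℤ × ℤ => c (-m.1, m.2)), hc, rfl⟩, ?_⟩
    funext l
    show c (-(-l), 0) = c (l, 0)
    rw [neg_neg]
  have hx' : (fun m : ℤ × ℤ => x (-m.1, m.2)) ∈
      {c : ℤ × ℤ → S | (fun m : ℤ × ℤ => c (-m.1, m.2)) ∈ X} := by
    show (fun m : ℤ × ℤ => x (-(-m.1), m.2)) ∈ X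
    have e : (fun m : ℤ × ℤ => x (-(-m.1), m.2)) = x := by
      funext m
      rw [hννid m]
    rw [e]
    exact hx
  have hper' : per (fun m : ℤ × ℤ => x (-m.1, m.2)) ((-a : ℤ), b) := by
    intro m
    show x (-(-a + m.1), b + m.2) = x (-m.1, m.2)
    have happ := hperab (-m.1, m.2)
    have e : ((a:ℤ), b) + (-m.1, m.2) = (-(-a + m.1), b + m.2) := by
      refine Prod.ext ?_ ?_
      · show a + -m.1 = -(-a + m.1)
        ring
      · rfl
    rw [e] at happ
    exact happ
  have hA' : ∀ (M : ℤ) (W : ℕ), ∃ u : ℤ, M ≤ u ∧ ∀ m ∈ boxF W,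
      (fun m : ℤ × ℤ => x (-m.1, m.2)) ((u, v₀) + m) =
      (fun m : ℤ × ℤ => y (-m.1, m.2)) m := by
    intro M W
    obtain ⟨u, huM, hagm⟩ := hA (-M) W
    refine ⟨-u, by omega, ?_⟩
    intro m hm
    have hm' : ((-m.1 : ℤ), m.2) ∈ boxF W := by
      simp only [boxF, Finset.mem_Icc, Prod.le_def] at hm
      exact mem_boxF (show |(-m.1 : ℤ)| ≤ (W:ℤ) from by rw [abs_le]; omega)
        (show |m.2| ≤ (W:ℤ) from by rw [abs_le]; omega)
    have h1 := hagm (-m.1, m.2) hm'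
    show x (-(-u + m.1), v₀ + m.2) = y (-m.1, m.2)
    have e : (u, v₀) + ((-m.1 : ℤ), m.2) = (-(-u + m.1), v₀ + m.2) := by
      refine Prod.ext ?_ ?_
      · show u + -m.1 = -(-u + m.1)
        ring
      · rfl
    rw [e] at h1
    exact h1
  obtain ⟨P, hP1, hPper⟩ := bplus (X := {c : ℤ × ℤ → S |
      (fun m : ℤ × ℤ => c (-m.1, m.2)) ∈ X})
    (x := fun m : ℤ × ℤ => x (-m.1, m.2)) (y := fun m : ℤ × ℤ => y (-m.1, m.2))
    hX'sft hX'PS hx' hb hper' hA'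
  refine ⟨P, hP1, ?_⟩
  intro q
  have happ' : y ((-(P + -(P + q.1)) : ℤ), (0:ℤ) + q.2)
      = y ((-(-(P + q.1)) : ℤ), q.2) := hPper ((-(P + q.1) : ℤ), q.2)
  have eL : ((-(P + -(P + q.1)) : ℤ), (0:ℤ) + q.2) = q := by
    refine Prod.ext ?_ ?_
    · show -(P + -(P + q.1)) = q.1
      ring
    · show 0 + q.2 = q.2
      ring
  have eR : ((-(-(P + q.1)) : ℤ), q.2) = ((P : ℤ), (0:ℤ)) + q := by
    refine Prod.ext ?_ ?_
    · show -(-(P + q.1)) = P + q.1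
      ring
    · show q.2 = 0 + q.2
      ring
  rw [eL, eR] at happ'
  exact happ'.symm

theorem caseV {y z : ℤ × ℤ → S} (hXs : IsSFT2 X) (hPS : (PS2 X).Countable) (hx : x ∈ X)
    {a b : ℤ} (hb : b ≠ 0) (hperab : per x ((a:ℤ), b))
    (hyx : patLE2 y x) (hnxy : ¬ patLE2 x y)
    (hzy : patLE2 z y) (hnyz : ¬ patLE2 y z) : False := by
  classical
  obtain ⟨a', b', hb'1, hper'⟩ : ∃ a' b' : ℤ, 1 ≤ b' ∧ per x ((a':ℤ), b') := by
    rcases lt_or_gt_of_ne hb with h | h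
    · refine ⟨-a, -b, by omega, ?_⟩
      have hneg := hperab.neg
      rwa [show -((a:ℤ), b) = ((-a : ℤ), -b) from rfl] at hneg
    · exact ⟨a, b, by omega, hperab⟩
  have hpy : per y ((a':ℤ), b') := per_transfer hyx hper'
  have hag : ∀ W : ℕ, ∃ g : ℤ × ℤ, ∀ m ∈ boxF W, x (g + m) = y m := by
    intro W
    obtain ⟨g, hg⟩ := hyx (boxF W) 0
    exact ⟨g, fun m hm => by simpa using hg m hm⟩
  have hdet : ∀ P : ℤ, 1 ≤ P →
      (((P:ℤ), (0:ℤ))).1 * ((a', b')).2 - (((P:ℤ), (0:ℤ))).2 * ((a', b')).1 ≠ 0 := by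
    intro P hP1
    show P * b' - 0 * a' ≠ 0
    have h1 : (1:ℤ)*1 ≤ P * b' := mul_le_mul hP1 hb'1 (by omega) (by omega)
    intro hcon
    nlinarith
  rcases normV hb'1 hper' hag with hex | ⟨v₀, hup | hdn⟩
  · obtain ⟨g, hgg⟩ := hex
    exact hnxy (patLE2_of_exact g hgg)
  · obtain ⟨P, hP1, hPy⟩ := bplus hXs hPS hx hb'1 hper' hup
    exact hnyz (two_periods_min hPy hpy (hdet P hP1) hzy)
  · obtain ⟨P, hP1, hPy⟩ := bminus hXs hPS hx hb'1 hper' hdn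
    exact hnyz (two_periods_min hPy hpy (hdet P hP1) hzy)

end Rmach

end NoTwoBelowAux

/-- In a two-dimensional SFT with the R property and countable projective
subdynamics, there is no chain of length three below a configuration with a period. -/
theorem no_two_below_periodic {S : Type} [Fintype S] (X : Set (ℤ × ℤ → S))
    (hX : IsSFT2 X) (hR : RProperty X) (hPS : (PS2 X).Countable)
    (x : ℤ × ℤ → S) (hx : x ∈ X) (n : ℤ × ℤ) (hn : n ≠ (0, 0)) (hper : shift2 n x = x) :
    ¬ ∃ y ∈ X, ∃ z ∈ X, patLT2 y x ∧ patLT2 z y := by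
  rintro ⟨y, hy, z, hz, ⟨hyx, hnxy⟩, ⟨hzy, hnyz⟩⟩
  have hperx : NoTwoBelowAux.per x n := NoTwoBelowAux.per_of_shift hper
  by_cases hb : n.2 = 0
  · have ha : n.1 ≠ 0 := by
      intro h
      exact hn (Prod.ext h hb)
    have hpera : NoTwoBelowAux.per x ((n.1 : ℤ), (0:ℤ)) := by
      rw [show ((n.1 : ℤ), (0:ℤ)) = n from Prod.ext rfl hb.symm]
      exact hperx
    exact NoTwoBelowAux.caseH hX hR hx ha hpera hyx hnxy hzy hnyz
  · have hpera : NoTwoBelowAux.per x ((n.1 : ℤ), n.2) := by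
      rw [show ((n.1 : ℤ), n.2) = n from Prod.ext rfl rfl]
      exact hperx
    exact NoTwoBelowAux.caseV hX hPS hx hb hpera hyx hnxy hzy hnyz
end
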